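/- arXiv:1205.0721 — 10 statements merged into one kernel-verified Lean document; each statement's English description precedes it below -/
import Mathlib

section
/- Strong duality holds between (P) and (D): inf_{x ∈ H} { f(x) + g(Ax) } = sup_{p ∈ ℝ^m} { −f*(A*p) − g*(−p) }, this common value is a real number, and the infimum defining (P) is attained at some x ∈ H. -/
open scoped RealInnerProductSpace

open Filter Topology

set_option maxHeartbeats 2000000



lemma nested_nonempty_inter {H : Type*} [NormedAddCommGroup H] [InnerProductSpace ℝ H]
    [CompleteSpace H]
    (Q : ℕ → Set H) (hne : ∀ n, (Q n).Nonempty) (hcl : ∀ n, IsClosed (Q n))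
    (hcv : ∀ n, Convex ℝ (Q n)) (hmono : ∀ m n, m ≤ n → Q n ⊆ Q m)
    (hbdd : Bornology.IsBounded (Q 0)) : (⋂ n, Q n).Nonempty := by
  have hQ0 : ∀ n, Q n ⊆ Q 0 := fun n => hmono 0 n (Nat.zero_le n)
  obtain ⟨R, hR⟩ := hbdd.subset_closedBall (0 : H)
  -- minimal norm elements
  have hex : ∀ n, ∃ v ∈ Q n, ‖(0:H) - v‖ = ⨅ w : Q n, ‖(0:H) - w‖ := fun n =>
    exists_norm_eq_iInf_of_complete_convex (hne n) ((hcl n).isComplete) (hcv n) 0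
  choose v hv hvd using hex
  set d : ℕ → ℝ := fun n => ⨅ w : Q n, ‖(0:H) - w‖ with hd
  have hvnorm : ∀ n, ‖v n‖ = d n := by
    intro n
    show ‖v n‖ = ⨅ w : Q n, ‖(0:H) - w‖
    rw [← hvd n, zero_sub, norm_neg]
  have hdnonneg : ∀ n, 0 ≤ d n := by
    intro n
    haveI : Nonempty (Q n) := (hne n).to_subtype
    exact le_ciInf fun w => norm_nonneg _
  have hbddb : ∀ n, BddBelow (Set.range fun w : Q n => ‖(0:H) - w‖) :=
    fun n => ⟨0, Set.forall_mem_range.2 fun _ => norm_nonneg _⟩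
  have hdle : ∀ m n, m ≤ n → d m ≤ d n := by
    intro m n hmn
    haveI : Nonempty (Q n) := (hne n).to_subtype
    exact le_ciInf fun w => ciInf_le (hbddb m) ⟨w.1, hmono m n hmn w.2⟩
  have hdbdd : ∀ n, d n ≤ R := by
    intro n
    rw [← hvnorm n]
    have := hR (hQ0 n (hv n))
    simpa [Metric.mem_closedBall, dist_eq_norm] using this
  -- limit of d
  have hmono' : Monotone d := fun m n h => hdle m n h
  set D : ℝ := ⨆ n, d n with hD
  have hdD : ∀ n, d n ≤ D := fun n => le_ciSup ⟨R, Set.forall_mem_range.2 hdbdd⟩ n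
  have htend : Tendsto d atTop (𝓝 D) := tendsto_atTop_ciSup hmono' ⟨R, Set.forall_mem_range.2 hdbdd⟩
  -- Cauchy
  have key : ∀ N n m, N ≤ n → N ≤ m → ‖v n - v m‖^2 ≤ 4*(D^2 - d N ^2) := by
    intro N n m hn hm
    have hmid : (1/2 : ℝ) • (v n + v m) ∈ Q N := by
      have := (hcv N) (hmono N n hn (hv n)) (hmono N m hm (hv m))
        (by norm_num : (0:ℝ) ≤ 1/2) (by norm_num : (0:ℝ) ≤ 1/2) (by norm_num)
      simpa [smul_add] using this
    have hmidnorm : d N ≤ ‖(1/2 : ℝ) • (v n + v m)‖ := by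
      have h := ciInf_le (hbddb N) (⟨_, hmid⟩ : Q N)
      rw [zero_sub, norm_neg] at h
      exact h
    have hpar : ‖v n + v m‖^2 + ‖v n - v m‖^2 = 2*(‖v n‖^2 + ‖v m‖^2) := by
      have := parallelogram_law_with_norm ℝ (v n) (v m)
      nlinarith [this]
    have h1 : ‖(1/2 : ℝ) • (v n + v m)‖ = (1/2) * ‖v n + v m‖ := by
      rw [norm_smul]; simp
    have h2 : 2 * d N ≤ ‖v n + v m‖ := by nlinarith [hmidnorm, norm_nonneg (v n + v m)]
    have h3 : 4 * d N ^ 2 ≤ ‖v n + v m‖^2 := by nlinarith [hdnonneg N, norm_nonneg (v n + v m)]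
    have h4 : ‖v n‖ ≤ D := (hvnorm n) ▸ hdD n
    have h5 : ‖v m‖ ≤ D := (hvnorm m) ▸ hdD m
    nlinarith [norm_nonneg (v n), norm_nonneg (v m)]
  have hcauchy : CauchySeq v := by
    apply cauchySeq_of_le_tendsto_0 (fun N => Real.sqrt (4*(D^2 - d N ^2)))
    · intro n m N hn hm
      rw [dist_eq_norm]
      have hkey := key N n m hn hm
      have : ‖v n - v m‖ = Real.sqrt (‖v n - v m‖^2) := by
        rw [Real.sqrt_sq (norm_nonneg _)]
      rw [this]
      exact Real.sqrt_le_sqrt hkey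
    · have : Tendsto (fun N => 4*(D^2 - d N ^2)) atTop (𝓝 (4*(D^2 - D^2))) := by
        apply Tendsto.const_mul
        exact (tendsto_const_nhds.sub ((htend.pow 2)))
      have h0 : Tendsto (fun N => 4*(D^2 - d N ^2)) atTop (𝓝 0) := by simpa using this
      have := h0.sqrt
      simpa using this
  obtain ⟨x, hx⟩ := cauchySeq_tendsto_of_complete hcauchy
  refine ⟨x, Set.mem_iInter.2 fun n => ?_⟩
  apply (hcl n).mem_of_tendsto hx
  filter_upwards [eventually_ge_atTop n] with k hk
  exact hmono n k hk (hv k)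


lemma exists_affine_minorant {E : Type*} [NormedAddCommGroup E] [NormedSpace ℝ E]
    (F : E → EReal) (hproper : ∃ x, F x ≠ ⊤) (hbot : ∀ x, F x ≠ ⊥)
    (hconv : ∀ x y : E, ∀ a b : ℝ, 0 ≤ a → 0 ≤ b → a + b = 1 →
      F (a • x + b • y) ≤ (a : EReal) * F x + (b : EReal) * F y)
    (hlsc : LowerSemicontinuous F) :
    ∃ (L : E →L[ℝ] ℝ) (c : ℝ), ∀ x, ((L x + c : ℝ) : EReal) ≤ F x := by
  classical
  set epi : Set (E × ℝ) := {p | F p.1 ≤ (p.2 : EReal)} with hepi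
  have hclosed : IsClosed epi := by
    have h1 : IsClosed {p : E × EReal | F p.1 ≤ p.2} := hlsc.isClosed_epigraph
    have h2 : Continuous (fun p : E × ℝ => ((p.1, (p.2 : EReal)) : E × EReal)) :=
      continuous_fst.prodMk (continuous_coe_real_ereal.comp continuous_snd)
    exact h1.preimage h2
  have hconvex : Convex ℝ epi := by
    rintro ⟨x, s⟩ hx ⟨y, t⟩ hy a b ha hb hab
    simp only [hepi, Set.mem_setOf_eq] at hx hy ⊢
    have hFx : F x ≠ ⊤ := fun h => by simp [h] at hx
    have hFy : F y ≠ ⊤ := fun h => by simp [h] at hy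
    lift F x to ℝ using ⟨hFx, hbot x⟩ with r hr
    lift F y to ℝ using ⟨hFy, hbot y⟩ with q hq
    have hrs : r ≤ s := by exact_mod_cast hx
    have hqt : q ≤ t := by exact_mod_cast hy
    calc F (a • x + b • y) ≤ (a : EReal) * (r : EReal) + (b : EReal) * (q : EReal) := by
          have h := hconv x y a b ha hb hab; rw [← hr, ← hq] at h; exact h
      _ = ((a * r + b * q : ℝ) : EReal) := by
          rw [← EReal.coe_mul, ← EReal.coe_mul, ← EReal.coe_add]
      _ ≤ ((a * s + b * t : ℝ) : EReal) := by
          exact_mod_cast add_le_add (mul_le_mul_of_nonneg_left hrs ha)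
            (mul_le_mul_of_nonneg_left hqt hb)
  obtain ⟨x₀, hx₀⟩ := hproper
  have hFx₀ : F x₀ = ((F x₀).toReal : EReal) := (EReal.coe_toReal hx₀ (hbot x₀)).symm
  set c₀ : ℝ := (F x₀).toReal with hc₀
  have hpt : (x₀, c₀ - 1) ∉ epi := by
    simp only [hepi, Set.mem_setOf_eq, not_le]
    rw [hFx₀]
    exact_mod_cast sub_one_lt c₀
  obtain ⟨ℓ, u, hu, hsep⟩ := geometric_hahn_banach_point_closed hconvex hclosed hpt
  have hdecomp : ∀ (x : E) (t : ℝ), ℓ (x, t) = ℓ (x, 0) + t * ℓ (0, 1) := by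
    intro x t
    have : (x, t) = (x, (0:ℝ)) + t • ((0:E), (1:ℝ)) := by
      simp [Prod.ext_iff]
    rw [this, map_add, map_smul]
    simp
  set s0 : ℝ := ℓ (0, 1) with hs0
  have hepi_mem : ∀ (x : E) (r : ℝ), F x ≤ (r : EReal) → u < ℓ (x, 0) + r * s0 := by
    intro x r hxr
    have := hsep (x, r) hxr
    rwa [hdecomp] at this
  have hx₀epi : ∀ n : ℕ, u < ℓ (x₀, 0) + (c₀ + n) * s0 := by
    intro n
    apply hepi_mem
    rw [hFx₀]
    exact_mod_cast le_add_of_nonneg_right (Nat.cast_nonneg n)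
  have hs0pos : 0 < s0 := by
    rcases lt_trichotomy s0 0 with h | h | h
    · exfalso
      obtain ⟨n, hn⟩ := exists_nat_gt ((u - ℓ (x₀, 0)) / s0 - c₀)
      have hgt : (u - ℓ (x₀, 0)) / s0 < c₀ + n := by linarith
      rw [div_lt_iff_of_neg h] at hgt
      linarith [hx₀epi n]
    · exfalso
      have h1 := hepi_mem x₀ c₀ (le_of_eq hFx₀)
      rw [h, mul_zero, add_zero] at h1
      have h2 : ℓ (x₀, c₀ - 1) = ℓ (x₀, 0) + (c₀ - 1) * s0 := hdecomp x₀ (c₀ - 1)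
      rw [h, mul_zero, add_zero] at h2
      rw [h2] at hu
      linarith
    · exact h
  refine ⟨(-(1/s0)) • (ℓ.comp (ContinuousLinearMap.inl ℝ E ℝ)), u / s0, fun x => ?_⟩
  by_cases hFx : F x = ⊤
  · rw [hFx]; exact le_top
  · lift F x to ℝ using ⟨hFx, hbot x⟩ with r hr
    have h1 := hepi_mem x r (le_of_eq hr.symm)
    have : ((-(1/s0)) • (ℓ.comp (ContinuousLinearMap.inl ℝ E ℝ))) x + u / s0 ≤ r := by
      simp only [ContinuousLinearMap.smul_apply, ContinuousLinearMap.comp_apply,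
        ContinuousLinearMap.inl_apply, smul_eq_mul]
      have h2 : u < ℓ (x, 0) + r * s0 := h1
      have h3 : -(1/s0) * ℓ (x, 0) + u / s0 = (u - ℓ (x, 0)) / s0 := by
        field_simp
        ring
      rw [h3, div_le_iff₀ hs0pos]
      linarith
    exact_mod_cast this


-- helper: from a + b ≤ real with a,b ≠ ⊥, both are reals
lemma ereal_both_real {a b : EReal} {s : ℝ} (ha : a ≠ ⊥) (hb : b ≠ ⊥)
    (h : a + b ≤ (s : EReal)) : ∃ p q : ℝ, a = (p : EReal) ∧ b = (q : EReal) ∧ p + q ≤ s := by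
  have hat : a ≠ ⊤ := by
    intro hat
    rw [hat, EReal.top_add_of_ne_bot hb] at h
    exact (EReal.coe_lt_top s).not_ge h
  have hbt : b ≠ ⊤ := by
    intro hbt
    rw [hbt, EReal.add_top_of_ne_bot ha] at h
    exact (EReal.coe_lt_top s).not_ge h
  refine ⟨a.toReal, b.toReal, (EReal.coe_toReal hat ha).symm, (EReal.coe_toReal hbt hb).symm, ?_⟩
  rw [← EReal.coe_toReal hat ha, ← EReal.coe_toReal hbt hb, ← EReal.coe_add] at h
  exact_mod_cast h

lemma exists_point_le {H : Type*} [NormedAddCommGroup H] [InnerProductSpace ℝ H]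
    [CompleteSpace H] {m : ℕ}
    (f : H → EReal) (g : EuclideanSpace ℝ (Fin m) → EReal)
    (hf_bot : ∀ x, f x ≠ ⊥) (hg_bot : ∀ x, g x ≠ ⊥)
    (hf_convex : ∀ x y : H, ∀ a b : ℝ, 0 ≤ a → 0 ≤ b → a + b = 1 →
      f (a • x + b • y) ≤ (a : EReal) * f x + (b : EReal) * f y)
    (hg_convex : ∀ x y : EuclideanSpace ℝ (Fin m), ∀ a b : ℝ, 0 ≤ a → 0 ≤ b → a + b = 1 →
      g (a • x + b • y) ≤ (a : EReal) * g x + (b : EReal) * g y)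
    (hf_lsc : LowerSemicontinuous f) (hg_lsc : LowerSemicontinuous g)
    (hf_bdd : Bornology.IsBounded {x : H | f x < ⊤})
    (A : H →L[ℝ] EuclideanSpace ℝ (Fin m))
    (r : ℝ) (x : ℕ → H) (u : ℕ → EuclideanSpace ℝ (Fin m))
    (hu : ∀ n : ℕ, ‖u n‖ ≤ 1/(n+1))
    (hx : ∀ n : ℕ, f (x n) + g (A (x n) + u n) ≤ ((r + 1/(n+1) : ℝ) : EReal)) :
    ∃ x₀, f x₀ + g (A x₀) ≤ (r : EReal) := by
  classical
  set Q : ℕ → Set H := fun n => {z | ∃ w : EuclideanSpace ℝ (Fin m),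
    ‖w‖ ≤ 1/(n+1) ∧ f z + g (A z + w) ≤ ((r + 1/(n+1) : ℝ) : EReal)} with hQ
  have hinv : ∀ n : ℕ, (0:ℝ) < 1/(n+1) := fun n => by positivity
  have hinvmono : ∀ {a b : ℕ}, a ≤ b → (1:ℝ)/(b+1) ≤ 1/(a+1) := by
    intro a b hab
    apply one_div_le_one_div_of_le (by positivity)
    exact_mod_cast add_le_add_left (Nat.cast_le.2 hab) 1
  -- the joint function is lsc
  have hΦ : LowerSemicontinuous (fun p : H × EuclideanSpace ℝ (Fin m) =>
      f p.1 + g (A p.1 + p.2)) := by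
    have h1 : LowerSemicontinuous (fun p : H × EuclideanSpace ℝ (Fin m) => f p.1) :=
      LowerSemicontinuous.comp hf_lsc continuous_fst
    have h2 : LowerSemicontinuous (fun p : H × EuclideanSpace ℝ (Fin m) => g (A p.1 + p.2)) :=
      LowerSemicontinuous.comp hg_lsc ((A.continuous.comp continuous_fst).add continuous_snd)
    exact h1.add' h2 fun p =>
      EReal.continuousAt_add (Or.inr (hg_bot _)) (Or.inl (hf_bot _))
  have hQne : ∀ n, (Q n).Nonempty := fun n => ⟨x n, u n, hu n, hx n⟩
  have hQmono : ∀ a b : ℕ, a ≤ b → Q b ⊆ Q a := by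
    rintro a b hab z ⟨w, hw1, hw2⟩
    refine ⟨w, hw1.trans (hinvmono hab), hw2.trans (EReal.coe_le_coe_iff.2 ?_)⟩
    have := hinvmono hab
    linarith
  have hQbdd : Bornology.IsBounded (Q 0) := by
    apply hf_bdd.subset
    rintro z ⟨w, _, hw2⟩
    obtain ⟨p, q, hp, hq, _⟩ := ereal_both_real (hf_bot z) (hg_bot _) hw2
    rw [Set.mem_setOf_eq, hp]
    exact EReal.coe_lt_top p
  have hQconvex : ∀ n, Convex ℝ (Q n) := by
    intro n z₁ hz₁ z₂ hz₂ a b ha hb hab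
    obtain ⟨w₁, hw₁, hb₁⟩ := hz₁
    obtain ⟨w₂, hw₂, hb₂⟩ := hz₂
    refine ⟨a • w₁ + b • w₂, ?_, ?_⟩
    · calc ‖a • w₁ + b • w₂‖ ≤ ‖a • w₁‖ + ‖b • w₂‖ := norm_add_le _ _
        _ = a * ‖w₁‖ + b * ‖w₂‖ := by rw [norm_smul, norm_smul,
            Real.norm_of_nonneg ha, Real.norm_of_nonneg hb]
        _ ≤ a * (1/(n+1)) + b * (1/(n+1)) := add_le_add
            (mul_le_mul_of_nonneg_left hw₁ ha) (mul_le_mul_of_nonneg_left hw₂ hb)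
        _ = 1/(n+1) := by rw [← add_mul, hab, one_mul]
    · obtain ⟨p₁, q₁, hp₁, hq₁, hpq₁⟩ := ereal_both_real (hf_bot z₁) (hg_bot _) hb₁
      obtain ⟨p₂, q₂, hp₂, hq₂, hpq₂⟩ := ereal_both_real (hf_bot z₂) (hg_bot _) hb₂
      have hAeq : A (a • z₁ + b • z₂) + (a • w₁ + b • w₂)
          = a • (A z₁ + w₁) + b • (A z₂ + w₂) := by
        rw [map_add, map_smul, map_smul]
        module
      have h1 : f (a • z₁ + b • z₂) ≤ ((a * p₁ + b * p₂ : ℝ) : EReal) := by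
        have := hf_convex z₁ z₂ a b ha hb hab
        rw [hp₁, hp₂] at this
        rw [EReal.coe_add, EReal.coe_mul, EReal.coe_mul]
        exact this
      have h2 : g (A (a • z₁ + b • z₂) + (a • w₁ + b • w₂))
          ≤ ((a * q₁ + b * q₂ : ℝ) : EReal) := by
        rw [hAeq]
        have := hg_convex (A z₁ + w₁) (A z₂ + w₂) a b ha hb hab
        rw [hq₁, hq₂] at this
        rw [EReal.coe_add, EReal.coe_mul, EReal.coe_mul]
        exact this
      calc f (a • z₁ + b • z₂) + g (A (a • z₁ + b • z₂) + (a • w₁ + b • w₂))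
          ≤ ((a * p₁ + b * p₂ : ℝ) : EReal) + ((a * q₁ + b * q₂ : ℝ) : EReal) :=
            add_le_add h1 h2
        _ = (((a * p₁ + b * p₂) + (a * q₁ + b * q₂) : ℝ) : EReal) := by
            norm_cast
        _ ≤ ((r + 1/(n+1) : ℝ) : EReal) := by
            apply EReal.coe_le_coe_iff.2
            have hsum : a * (r + 1/(n+1)) + b * (r + 1/(n+1)) = r + 1/(n+1) := by
              rw [← add_mul, hab, one_mul]
            nlinarith [mul_le_mul_of_nonneg_left hpq₁ ha, mul_le_mul_of_nonneg_left hpq₂ hb]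
  have hQclosed : ∀ n, IsClosed (Q n) := by
    intro n
    rw [← isSeqClosed_iff_isClosed]
    intro z z₀ hz hlim
    choose w hw1 hw2 using hz
    obtain ⟨w₀, hw₀mem, φ, hφmono, hφtend⟩ :=
      (isCompact_closedBall (0 : EuclideanSpace ℝ (Fin m)) (1/(n+1))).tendsto_subseq
        (fun j => Metric.mem_closedBall.2 (by simpa [dist_eq_norm] using hw1 j))
    refine ⟨w₀, by simpa [dist_eq_norm] using Metric.mem_closedBall.1 hw₀mem, ?_⟩
    by_contra hcon
    push_neg at hcon
    have hev := hΦ (z₀, w₀) _ hcon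
    have htendp : Tendsto (fun j => ((z (φ j), w (φ j)) : H × EuclideanSpace ℝ (Fin m)))
        atTop (𝓝 (z₀, w₀)) :=
      (Filter.Tendsto.prodMk_nhds (hlim.comp hφmono.tendsto_atTop) hφtend)
    have := (htendp.eventually hev).exists
    obtain ⟨j, hj⟩ := this
    exact absurd (hw2 (φ j)) (not_le.2 hj)
  obtain ⟨x₀, hx₀⟩ := nested_nonempty_inter Q hQne hQclosed hQconvex hQmono hQbdd
  rw [Set.mem_iInter] at hx₀
  choose w hw1 hw2 using hx₀
  obtain ⟨p, q0, hp, _, _⟩ := ereal_both_real (hf_bot x₀) (hg_bot _) (hw2 0)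
  refine ⟨x₀, ?_⟩
  by_contra hcon
  push_neg at hcon
  have hg_lt : ((r - p : ℝ) : EReal) < g (A x₀) := by
    by_contra hle
    push_neg at hle
    have hsum : f x₀ + g (A x₀) ≤ (r : EReal) := by
      rw [hp]
      calc (p : EReal) + g (A x₀) ≤ (p : EReal) + ((r - p : ℝ) : EReal) :=
            add_le_add le_rfl hle
        _ = (r : EReal) := by rw [← EReal.coe_add]; norm_num
    exact absurd hsum (not_le.2 hcon)
  obtain ⟨t, ht1, ht2⟩ := EReal.exists_between_coe_real hg_lt
  have htr : r - p < t := by exact_mod_cast ht1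
  -- w n → 0
  have hwtend : Tendsto w atTop (𝓝 0) := by
    apply squeeze_zero_norm hw1
    exact tendsto_one_div_add_atTop_nhds_zero_nat
  have htendA : Tendsto (fun n => A x₀ + w n) atTop (𝓝 (A x₀)) := by
    have := tendsto_const_nhds.add hwtend (f := fun _ : ℕ => A x₀) (x := atTop)
    simpa using this
  have hev1 : ∀ᶠ n in atTop, (t : EReal) < g (A x₀ + w n) :=
    htendA.eventually (hg_lsc (A x₀) _ ht2)
  have hev2 : ∀ᶠ n : ℕ in atTop, (1:ℝ)/(n+1) < t - (r - p) := by
    have := tendsto_one_div_add_atTop_nhds_zero_nat (𝕜 := ℝ)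
    exact this.eventually (eventually_lt_nhds (by linarith))
  obtain ⟨n, h1, h2⟩ := (hev1.and hev2).exists
  have hb2 := hw2 n
  rw [hp] at hb2
  obtain ⟨p', q', hp', hq', hpq'⟩ := ereal_both_real (EReal.coe_ne_bot p) (hg_bot _) hb2
  have hpp' : p = p' := by exact_mod_cast hp'
  rw [hq'] at h1
  have htq : t < q' := by exact_mod_cast h1
  rw [← hpp'] at hpq'
  linarith



lemma ereal_mul_ne_bot_of_pos {b : ℝ} (hb : 0 < b) {y : EReal} (hy : y ≠ ⊥) :
    (b : EReal) * y ≠ ⊥ := by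
  induction y using EReal.rec with
  | bot => exact absurd rfl hy
  | coe r => rw [← EReal.coe_mul]; exact EReal.coe_ne_bot _
  | top => rw [EReal.coe_mul_top_of_pos hb]; simp

/-- Strong duality holds between (P) and (D):
`inf_{x ∈ H} { f(x) + g(Ax) } = sup_{p ∈ ℝ^m} { −f*(A*p) − g*(−p) }`, this common value is a
real number, and the infimum defining (P) is attained at some `x ∈ H`. -/
theorem strong_duality
    {H : Type*} [NormedAddCommGroup H] [InnerProductSpace ℝ H] [CompleteSpace H]
    {m : ℕ} (μ : ℝ) (hμ : 0 < μ)
    (f : H → EReal) (g : EuclideanSpace ℝ (Fin m) → EReal)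
    (hf_proper_top : ∃ x, f x ≠ ⊤) (hf_proper_bot : ∀ x, f x ≠ ⊥)
    (hf_convex : ∀ x y : H, ∀ a b : ℝ, 0 ≤ a → 0 ≤ b → a + b = 1 →
      f (a • x + b • y) ≤ (a : EReal) * f x + (b : EReal) * f y)
    (hf_lsc : LowerSemicontinuous f)
    (hf_bdd : Bornology.IsBounded {x : H | f x < ⊤})
    (hg_proper_top : ∃ x, g x ≠ ⊤) (hg_proper_bot : ∀ x, g x ≠ ⊥)
    (hg_lsc : LowerSemicontinuous g)
    (hg_strconv : ∀ x y : EuclideanSpace ℝ (Fin m), ∀ a b : ℝ, 0 ≤ a → 0 ≤ b → a + b = 1 →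
      g (a • x + b • y) - ((μ / 2 * ‖a • x + b • y‖ ^ 2 : ℝ) : EReal) ≤
        (a : EReal) * (g x - ((μ / 2 * ‖x‖ ^ 2 : ℝ) : EReal)) +
        (b : EReal) * (g y - ((μ / 2 * ‖y‖ ^ 2 : ℝ) : EReal)))
    (A : H →L[ℝ] EuclideanSpace ℝ (Fin m))
    (hfeas : ∃ x : H, f x ≠ ⊤ ∧ g (A x) ≠ ⊤) :
    (⨅ x : H, f x + g (A x)) =
      (⨆ p : EuclideanSpace ℝ (Fin m),
        -(⨆ x : H, ((⟪ContinuousLinearMap.adjoint A p, x⟫ : ℝ) : EReal) - f x)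
          - (⨆ x : EuclideanSpace ℝ (Fin m), ((⟪-p, x⟫ : ℝ) : EReal) - g x)) ∧
    (∃ r : ℝ, (⨅ x : H, f x + g (A x)) = (r : EReal)) ∧
    (∃ x₀ : H, f x₀ + g (A x₀) = ⨅ x : H, f x + g (A x)) := by
  classical
  obtain ⟨xf, hxf_f, hxf_g⟩ := hfeas
  have hinv : ∀ n : ℕ, (0:ℝ) < 1/(n+1) := fun n => by positivity
  -- plain convexity of g
  have hg_convex : ∀ x y : EuclideanSpace ℝ (Fin m), ∀ a b : ℝ, 0 ≤ a → 0 ≤ b → a + b = 1 →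
      g (a • x + b • y) ≤ (a : EReal) * g x + (b : EReal) * g y := by
    intro x y a b ha hb hab
    rcases eq_or_lt_of_le ha with ha0 | hapos
    · have hb1 : b = 1 := by linarith
      subst hb1
      rw [← ha0]
      simp [EReal.zero_mul]
    rcases eq_or_lt_of_le hb with hb0 | hbpos
    · have ha1 : a = 1 := by linarith
      subst ha1
      rw [← hb0]
      simp [EReal.zero_mul]
    by_cases hgx : g x = ⊤
    · rw [hgx, EReal.coe_mul_top_of_pos hapos,
        EReal.top_add_of_ne_bot (ereal_mul_ne_bot_of_pos hbpos (hg_proper_bot y))]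
      exact le_top
    by_cases hgy : g y = ⊤
    · rw [hgy, EReal.coe_mul_top_of_pos hbpos,
        EReal.add_top_of_ne_bot (ereal_mul_ne_bot_of_pos hapos (hg_proper_bot x))]
      exact le_top
    set gx := (g x).toReal with hgx'
    set gy := (g y).toReal with hgy'
    have hx' : g x = (gx : EReal) := (EReal.coe_toReal hgx (hg_proper_bot x)).symm
    have hy' : g y = (gy : EReal) := (EReal.coe_toReal hgy (hg_proper_bot y)).symm
    set qx : ℝ := μ / 2 * ‖x‖ ^ 2
    set qy : ℝ := μ / 2 * ‖y‖ ^ 2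
    set qc : ℝ := μ / 2 * ‖a • x + b • y‖ ^ 2
    have h := hg_strconv x y a b ha hb hab
    rw [hx', hy'] at h
    have hrhs : (a : EReal) * ((gx : EReal) - (qx : EReal)) + (b : EReal) * ((gy : EReal) - (qy : EReal))
        = ((a * (gx - qx) + b * (gy - qy) : ℝ) : EReal) := by
      norm_cast
    rw [hrhs] at h
    have hgc : g (a • x + b • y) ≤ ((a * (gx - qx) + b * (gy - qy) + qc : ℝ) : EReal) := by
      have := (EReal.sub_le_iff_le_add (Or.inl (EReal.coe_ne_bot qc))
        (Or.inl (EReal.coe_ne_top qc))).1 h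
      calc g (a • x + b • y) ≤ ((a * (gx - qx) + b * (gy - qy) : ℝ) : EReal) + (qc : EReal) := this
        _ = _ := by norm_cast
    refine hgc.trans ?_
    rw [hx', hy']
    have : (a : EReal) * (gx : EReal) + (b : EReal) * (gy : EReal)
        = ((a * gx + b * gy : ℝ) : EReal) := by norm_cast
    rw [this]
    apply EReal.coe_le_coe_iff.2
    have hnorm : ‖a • x + b • y‖ ≤ a * ‖x‖ + b * ‖y‖ := by
      calc ‖a • x + b • y‖ ≤ ‖a • x‖ + ‖b • y‖ := norm_add_le _ _
        _ = a * ‖x‖ + b * ‖y‖ := by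
          rw [norm_smul, norm_smul, Real.norm_of_nonneg ha, Real.norm_of_nonneg hb]
    have hq : qc ≤ a * qx + b * qy := by
      have h1 : ‖a • x + b • y‖ ^ 2 ≤ (a * ‖x‖ + b * ‖y‖) ^ 2 := by
        apply sq_le_sq' _ hnorm
        have := norm_nonneg (a • x + b • y)
        nlinarith [norm_nonneg x, norm_nonneg y, mul_nonneg ha (norm_nonneg x),
          mul_nonneg hb (norm_nonneg y)]
      have h2 : (a * ‖x‖ + b * ‖y‖) ^ 2 ≤ a * ‖x‖ ^ 2 + b * ‖y‖ ^ 2 := by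
        nlinarith [sq_nonneg (‖x‖ - ‖y‖), mul_nonneg ha hb, norm_nonneg x, norm_nonneg y]
      have hμ2 : (0:ℝ) ≤ μ / 2 := by linarith
      calc qc = μ / 2 * ‖a • x + b • y‖ ^ 2 := rfl
        _ ≤ μ / 2 * (a * ‖x‖ ^ 2 + b * ‖y‖ ^ 2) := by nlinarith
        _ = a * qx + b * qy := by simp only [qx, qy]; ring
    linarith
  -- feasible value
  set φf : ℝ := (f xf).toReal with hφf
  set γf : ℝ := (g (A xf)).toReal with hγf
  have hfxf : f xf = (φf : EReal) := (EReal.coe_toReal hxf_f (hf_proper_bot xf)).symm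
  have hgxf : g (A xf) = (γf : EReal) := (EReal.coe_toReal hxf_g (hg_proper_bot _)).symm
  set vf : ℝ := φf + γf with hvf'
  have hvf : f xf + g (A xf) = (vf : EReal) := by
    rw [hfxf, hgxf]; norm_cast
  set S : EReal := ⨅ x : H, f x + g (A x) with hS
  have hS_le : S ≤ (vf : EReal) := hvf ▸ iInf_le _ xf
  -- lower bound for S
  obtain ⟨L₁, c₁, hL₁⟩ := exists_affine_minorant f ⟨xf, hxf_f⟩ hf_proper_bot hf_convex hf_lsc
  obtain ⟨L₂, c₂, hL₂⟩ := exists_affine_minorant g hg_proper_top hg_proper_bot hg_convex hg_lsc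
  obtain ⟨R, hR⟩ := hf_bdd.subset_closedBall 0
  have hRnn : 0 ≤ R := by
    have := hR (by rw [Set.mem_setOf_eq, hfxf]; exact EReal.coe_lt_top φf)
    have h0 := norm_nonneg xf
    simp only [Metric.mem_closedBall, dist_zero_right] at this
    linarith
  set B : ℝ := c₁ + c₂ - ‖L₁‖ * R - ‖L₂‖ * (‖A‖ * R) with hB
  have hSB : (B : EReal) ≤ S := by
    apply le_iInf
    intro x
    by_cases hfx : f x = ⊤
    · rw [hfx, EReal.top_add_of_ne_bot (hg_proper_bot _)]; exact le_top
    · have hxball : ‖x‖ ≤ R := by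
        have := hR (by rw [Set.mem_setOf_eq]; exact lt_top_iff_ne_top.2 hfx)
        simpa [Metric.mem_closedBall, dist_zero_right] using this
      have h1 := hL₁ x
      have h2 := hL₂ (A x)
      have e1 : -(‖L₁‖ * R) ≤ L₁ x := by
        have ha := L₁.le_opNorm x
        have hb : ‖L₁‖ * ‖x‖ ≤ ‖L₁‖ * R := mul_le_mul_of_nonneg_left hxball (norm_nonneg _)
        have hc : |L₁ x| ≤ ‖L₁‖ * R := by rw [← Real.norm_eq_abs]; exact ha.trans hb
        linarith [neg_abs_le (L₁ x)]
      have e2 : -(‖L₂‖ * (‖A‖ * R)) ≤ L₂ (A x) := by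
        have ha := L₂.le_opNorm (A x)
        have hAx : ‖A x‖ ≤ ‖A‖ * R := by
          calc ‖A x‖ ≤ ‖A‖ * ‖x‖ := A.le_opNorm x
            _ ≤ ‖A‖ * R := mul_le_mul_of_nonneg_left hxball (norm_nonneg _)
        have hb : ‖L₂‖ * ‖A x‖ ≤ ‖L₂‖ * (‖A‖ * R) := mul_le_mul_of_nonneg_left hAx (norm_nonneg _)
        have hc : |L₂ (A x)| ≤ ‖L₂‖ * (‖A‖ * R) := by rw [← Real.norm_eq_abs]; exact ha.trans hb
        linarith [neg_abs_le (L₂ (A x))]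
      calc (B : EReal) ≤ ((L₁ x + c₁ + (L₂ (A x) + c₂) : ℝ) : EReal) := by
            apply EReal.coe_le_coe_iff.2
            rw [hB]; linarith
        _ = ((L₁ x + c₁ : ℝ) : EReal) + ((L₂ (A x) + c₂ : ℝ) : EReal) := by norm_cast
        _ ≤ f x + g (A x) := add_le_add h1 h2
  have hS_ne_bot : S ≠ ⊥ := fun h => by rw [h] at hSB; exact (EReal.coe_ne_bot B) (le_bot_iff.1 hSB)
  have hS_ne_top : S ≠ ⊤ := fun h => by
    rw [h] at hS_le
    exact (EReal.coe_lt_top vf).not_ge hS_le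
  set ρ : ℝ := S.toReal with hρ
  have hSρ : S = (ρ : EReal) := (EReal.coe_toReal hS_ne_top hS_ne_bot).symm
  -- attainment
  have hmin : ∃ x₀ : H, f x₀ + g (A x₀) = S := by
    have hseq : ∀ n : ℕ, ∃ x : H, f x + g (A x + (0 : EuclideanSpace ℝ (Fin m)))
        ≤ ((ρ + 1/(n+1) : ℝ) : EReal) := by
      intro n
      have hlt : S < ((ρ + 1/(n+1) : ℝ) : EReal) := by
        rw [hSρ]
        exact_mod_cast lt_add_of_pos_right ρ (hinv n)
      rw [hS, iInf_lt_iff] at hlt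
      obtain ⟨x, hx⟩ := hlt
      exact ⟨x, by simpa using hx.le⟩
    choose xs hxs using hseq
    obtain ⟨x₀, hx₀⟩ := exists_point_le f g hf_proper_bot hg_proper_bot hf_convex hg_convex
      hf_lsc hg_lsc hf_bdd A ρ xs (fun _ => 0) (fun n => by simp; positivity) hxs
    refine ⟨x₀, le_antisymm ?_ (iInf_le _ x₀)⟩
    rw [hSρ]; exact hx₀
  -- weak duality
  have hweak : (⨆ p : EuclideanSpace ℝ (Fin m),
        -(⨆ x : H, ((⟪ContinuousLinearMap.adjoint A p, x⟫ : ℝ) : EReal) - f x)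
          - (⨆ x : EuclideanSpace ℝ (Fin m), ((⟪-p, x⟫ : ℝ) : EReal) - g x)) ≤ S := by
    apply iSup_le
    intro p
    rw [hS]
    apply le_iInf
    intro x
    by_cases hfx : f x = ⊤
    · rw [hfx, EReal.top_add_of_ne_bot (hg_proper_bot _)]; exact le_top
    by_cases hgx : g (A x) = ⊤
    · rw [hgx, EReal.add_top_of_ne_bot (hf_proper_bot _)]; exact le_top
    have hfx' : f x = (((f x).toReal : ℝ) : EReal) := (EReal.coe_toReal hfx (hf_proper_bot x)).symm
    have hgx' : g (A x) = (((g (A x)).toReal : ℝ) : EReal) :=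
      (EReal.coe_toReal hgx (hg_proper_bot _)).symm
    set φ := (f x).toReal with hφdef
    set γ := (g (A x)).toReal with hγdef
    set c : ℝ := ⟪ContinuousLinearMap.adjoint A p, x⟫ with hcdef
    have h1 : -(⨆ x' : H, ((⟪ContinuousLinearMap.adjoint A p, x'⟫ : ℝ) : EReal) - f x')
        ≤ ((φ - c : ℝ) : EReal) := by
      have hterm : ((c - φ : ℝ) : EReal)
          ≤ ⨆ x' : H, ((⟪ContinuousLinearMap.adjoint A p, x'⟫ : ℝ) : EReal) - f x' := by
        refine le_trans ?_ (le_iSup (fun x' : H =>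
          ((⟪ContinuousLinearMap.adjoint A p, x'⟫ : ℝ) : EReal) - f x') x)
        rw [hfx']
        exact le_of_eq (EReal.coe_sub c φ)
      calc -(⨆ x' : H, ((⟪ContinuousLinearMap.adjoint A p, x'⟫ : ℝ) : EReal) - f x')
          ≤ -((c - φ : ℝ) : EReal) := EReal.neg_le_neg_iff.2 hterm
        _ = ((φ - c : ℝ) : EReal) := by rw [← EReal.coe_neg]; ring_nf
    have h2 : -(⨆ v : EuclideanSpace ℝ (Fin m), ((⟪-p, v⟫ : ℝ) : EReal) - g v)
        ≤ ((γ + c : ℝ) : EReal) := by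
      have hterm : ((-c - γ : ℝ) : EReal)
          ≤ ⨆ v : EuclideanSpace ℝ (Fin m), ((⟪-p, v⟫ : ℝ) : EReal) - g v := by
        refine le_trans ?_ (le_iSup (fun v : EuclideanSpace ℝ (Fin m) =>
          ((⟪-p, v⟫ : ℝ) : EReal) - g v) (A x))
        rw [hgx']
        have hipc : (⟪-p, A x⟫ : ℝ) = -c := by
          rw [inner_neg_left, hcdef, ContinuousLinearMap.adjoint_inner_left]
        rw [hipc]
        exact le_of_eq (EReal.coe_sub (-c) γ)
      calc -(⨆ v : EuclideanSpace ℝ (Fin m), ((⟪-p, v⟫ : ℝ) : EReal) - g v)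
          ≤ -((-c - γ : ℝ) : EReal) := EReal.neg_le_neg_iff.2 hterm
        _ = ((γ + c : ℝ) : EReal) := by rw [← EReal.coe_neg]; ring_nf
    calc -(⨆ x' : H, ((⟪ContinuousLinearMap.adjoint A p, x'⟫ : ℝ) : EReal) - f x')
          - (⨆ v : EuclideanSpace ℝ (Fin m), ((⟪-p, v⟫ : ℝ) : EReal) - g v)
        = -(⨆ x' : H, ((⟪ContinuousLinearMap.adjoint A p, x'⟫ : ℝ) : EReal) - f x')
          + -(⨆ v : EuclideanSpace ℝ (Fin m), ((⟪-p, v⟫ : ℝ) : EReal) - g v) :=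
          sub_eq_add_neg _ _
      _ ≤ ((φ - c : ℝ) : EReal) + ((γ + c : ℝ) : EReal) := add_le_add h1 h2
      _ = ((φ + γ : ℝ) : EReal) := by rw [← EReal.coe_add]; congr 1; ring
      _ = f x + g (A x) := by rw [hfx', hgx', EReal.coe_add]
  -- strong duality
  have hstrong : S ≤ (⨆ p : EuclideanSpace ℝ (Fin m),
        -(⨆ x : H, ((⟪ContinuousLinearMap.adjoint A p, x⟫ : ℝ) : EReal) - f x)
          - (⨆ x : EuclideanSpace ℝ (Fin m), ((⟪-p, x⟫ : ℝ) : EReal) - g x)) := by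
    set D : EReal := ⨆ p : EuclideanSpace ℝ (Fin m),
        -(⨆ x : H, ((⟪ContinuousLinearMap.adjoint A p, x⟫ : ℝ) : EReal) - f x)
          - (⨆ x : EuclideanSpace ℝ (Fin m), ((⟪-p, x⟫ : ℝ) : EReal) - g x) with hD
    by_contra hlt
    push_neg at hlt
    obtain ⟨r', hr'1, hr'2⟩ := EReal.exists_between_coe_real hlt
    set Eset : Set (EuclideanSpace ℝ (Fin m) × ℝ) :=
      {q | ∃ x : H, f x + g (A x + q.1) ≤ (q.2 : EReal)} with hEset
    have hup : ∀ t : ℝ, vf ≤ t → ((0 : EuclideanSpace ℝ (Fin m)), t) ∈ Eset := by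
      intro t ht
      refine ⟨xf, ?_⟩
      simp only [add_zero]
      rw [hvf]
      exact EReal.coe_le_coe_iff.2 ht
    have hEconv : Convex ℝ Eset := by
      rintro ⟨u₁, t₁⟩ ⟨x₁, hx₁⟩ ⟨u₂, t₂⟩ ⟨x₂, hx₂⟩ a b ha hb hab
      refine ⟨a • x₁ + b • x₂, ?_⟩
      simp only [Prod.smul_mk, Prod.mk_add_mk, smul_eq_mul]
      obtain ⟨p₁, q₁, hp₁, hq₁, hpq₁⟩ := ereal_both_real (hf_proper_bot x₁) (hg_proper_bot _) hx₁
      obtain ⟨p₂, q₂, hp₂, hq₂, hpq₂⟩ := ereal_both_real (hf_proper_bot x₂) (hg_proper_bot _) hx₂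
      have hAeq : A (a • x₁ + b • x₂) + (a • u₁ + b • u₂)
          = a • (A x₁ + u₁) + b • (A x₂ + u₂) := by
        rw [map_add, map_smul, map_smul]
        module
      have h1 : f (a • x₁ + b • x₂) ≤ ((a * p₁ + b * p₂ : ℝ) : EReal) := by
        have := hf_convex x₁ x₂ a b ha hb hab
        rw [hp₁, hp₂] at this
        rw [EReal.coe_add, EReal.coe_mul, EReal.coe_mul]
        exact this
      have h2 : g (A (a • x₁ + b • x₂) + (a • u₁ + b • u₂)) ≤ ((a * q₁ + b * q₂ : ℝ) : EReal) := by
        rw [hAeq]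
        have := hg_convex (A x₁ + u₁) (A x₂ + u₂) a b ha hb hab
        rw [hq₁, hq₂] at this
        rw [EReal.coe_add, EReal.coe_mul, EReal.coe_mul]
        exact this
      calc f (a • x₁ + b • x₂) + g (A (a • x₁ + b • x₂) + (a • u₁ + b • u₂))
          ≤ ((a * p₁ + b * p₂ : ℝ) : EReal) + ((a * q₁ + b * q₂ : ℝ) : EReal) := add_le_add h1 h2
        _ = ((a * p₁ + b * p₂ + (a * q₁ + b * q₂) : ℝ) : EReal) := by norm_cast
        _ ≤ ((a * t₁ + b * t₂ : ℝ) : EReal) := EReal.coe_le_coe_iff.2 (by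
            nlinarith [mul_le_mul_of_nonneg_left hpq₁ ha, mul_le_mul_of_nonneg_left hpq₂ hb])
    have hnotmem : ((0 : EuclideanSpace ℝ (Fin m)), r') ∉ closure Eset := by
      intro hmem
      rw [Metric.mem_closure_iff] at hmem
      have hseq : ∀ n : ℕ, ∃ (x : H) (w : EuclideanSpace ℝ (Fin m)),
          ‖w‖ ≤ 1/(n+1) ∧ f x + g (A x + w) ≤ ((r' + 1/(n+1) : ℝ) : EReal) := by
        intro n
        obtain ⟨q, hqE, hqd⟩ := hmem (1/(n+1)) (hinv n)
        obtain ⟨x, hx⟩ := hqE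
        rw [Prod.dist_eq, max_lt_iff] at hqd
        refine ⟨x, q.1, ?_, ?_⟩
        · have h1 := hqd.1
          rw [dist_comm, dist_zero_right] at h1
          exact h1.le
        · refine hx.trans (EReal.coe_le_coe_iff.2 ?_)
          have h2 := hqd.2
          rw [Real.dist_eq] at h2
          have h3 := abs_lt.1 h2
          linarith [h3.1]
      choose xs ws hw1 hw2 using hseq
      obtain ⟨x₀, hx₀⟩ := exists_point_le f g hf_proper_bot hg_proper_bot hf_convex hg_convex
        hf_lsc hg_lsc hf_bdd A r' xs ws hw1 hw2
      have hcon : S ≤ (r' : EReal) := (iInf_le _ x₀).trans hx₀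
      exact absurd hr'2 (not_lt.2 hcon)
    obtain ⟨ℓ, u, hu, hsep⟩ :=
      geometric_hahn_banach_point_closed hEconv.closure isClosed_closure hnotmem
    have hsepE : ∀ q ∈ Eset, u < ℓ q := fun q hq => hsep q (subset_closure hq)
    have hdecomp : ∀ (w : EuclideanSpace ℝ (Fin m)) (t : ℝ),
        ℓ (w, t) = ℓ (w, 0) + t * ℓ (0, 1) := by
      intro w t
      have he : ((w, t) : EuclideanSpace ℝ (Fin m) × ℝ)
          = (w, (0:ℝ)) + t • ((0 : EuclideanSpace ℝ (Fin m)), (1:ℝ)) := by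
        simp [Prod.ext_iff]
      rw [he, map_add, map_smul]
      simp
    have hl00 : ℓ ((0 : EuclideanSpace ℝ (Fin m)), (0:ℝ)) = 0 := by
      have he : ((0 : EuclideanSpace ℝ (Fin m)), (0:ℝ)) = (0 : EuclideanSpace ℝ (Fin m) × ℝ) := rfl
      rw [he, map_zero]
    set s0 : ℝ := ℓ (0, 1) with hs0def
    have hur' : r' * s0 < u := by
      have h := hu
      rw [hdecomp 0 r', hl00, zero_add] at h
      exact h
    have hs0pos : 0 < s0 := by
      rcases lt_trichotomy s0 0 with h | h | h
      · exfalso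
        obtain ⟨n, hn⟩ := exists_nat_gt (u / s0 - vf)
        have hmem := hsepE _ (hup (vf + n) (by linarith [(Nat.cast_nonneg n : (0:ℝ) ≤ n)]))
        rw [hdecomp, hl00, zero_add] at hmem
        have hgt : u / s0 < vf + n := by linarith
        rw [div_lt_iff_of_neg h] at hgt
        linarith
      · exfalso
        have hmem := hsepE _ (hup vf le_rfl)
        rw [hdecomp, hl00, zero_add, h, mul_zero] at hmem
        rw [h, mul_zero] at hur'
        linarith
      · exact h
    have hkey : ∀ (x : H) (v : EuclideanSpace ℝ (Fin m)) (φ γ : ℝ), f x = (φ : EReal) →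
        g v = (γ : EReal) → u < ℓ (v, 0) - ℓ (A x, 0) + (φ + γ) * s0 := by
      intro x v φ γ hφ hγ
      have hmem : ((v - A x, φ + γ) : EuclideanSpace ℝ (Fin m) × ℝ) ∈ Eset := by
        refine ⟨x, ?_⟩
        have he : A x + (v - A x) = v := by abel
        simp only [he]
        rw [hφ, hγ, ← EReal.coe_add]
      have h1 := hsepE _ hmem
      rw [hdecomp] at h1
      have h2 : ℓ (v - A x, 0) = ℓ (v, 0) - ℓ (A x, 0) := by
        have he : ((v - A x, (0:ℝ)) : EuclideanSpace ℝ (Fin m) × ℝ)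
            = (v, (0:ℝ)) - (A x, (0:ℝ)) := by simp [Prod.ext_iff]
        rw [he, map_sub]
      rw [h2] at h1
      linarith
    set q0 : EuclideanSpace ℝ (Fin m) :=
      (InnerProductSpace.toDual ℝ (EuclideanSpace ℝ (Fin m))).symm
        (ℓ.comp (ContinuousLinearMap.inl ℝ (EuclideanSpace ℝ (Fin m)) ℝ)) with hq0def
    have hq0 : ∀ w, (⟪q0, w⟫ : ℝ) = ℓ (w, 0) := by
      intro w
      rw [hq0def, InnerProductSpace.toDual_symm_apply]
      rfl
    set p' : EuclideanSpace ℝ (Fin m) := (1/s0) • q0 with hp'def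
    have hip : ∀ x : H, (⟪ContinuousLinearMap.adjoint A p', x⟫ : ℝ) = ℓ (A x, 0) / s0 := by
      intro x
      rw [ContinuousLinearMap.adjoint_inner_left, hp'def, real_inner_smul_left, hq0]
      ring
    have hipv : ∀ v, (⟪-p', v⟫ : ℝ) = -(ℓ (v, 0) / s0) := by
      intro v
      rw [inner_neg_left, hp'def, real_inner_smul_left, hq0]
      ring
    set S₁ : EReal := ⨆ x : H, ((⟪ContinuousLinearMap.adjoint A p', x⟫ : ℝ) : EReal) - f x
      with hS₁def
    have hS₁le : ∀ (v : EuclideanSpace ℝ (Fin m)) (γv : ℝ), g v = (γv : EReal) →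
        S₁ ≤ ((-(u/s0) + ℓ (v,0)/s0 + γv : ℝ) : EReal) := by
      intro v γv hγv
      rw [hS₁def]
      apply iSup_le
      intro x
      by_cases hfx : f x = ⊤
      · rw [hfx, EReal.sub_top]; exact bot_le
      · have hφ : f x = (((f x).toReal : ℝ) : EReal) :=
          (EReal.coe_toReal hfx (hf_proper_bot x)).symm
        rw [hφ, hip x, ← EReal.coe_sub]
        apply EReal.coe_le_coe_iff.2
        have hk := hkey x v (f x).toReal γv hφ hγv
        have hmul := mul_lt_mul_of_pos_right hk (by positivity : (0:ℝ) < 1/s0)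
        have he : (ℓ (v,0) - ℓ (A x,0) + ((f x).toReal + γv) * s0) * (1/s0)
            = ℓ (v,0)/s0 - ℓ (A x,0)/s0 + ((f x).toReal + γv) := by
          field_simp
        rw [he] at hmul
        have hu' : u * (1/s0) = u/s0 := by ring
        rw [hu'] at hmul
        linarith
    have hS₁ne_top : S₁ ≠ ⊤ := by
      have h := hS₁le (A xf) γf hgxf
      intro ht; rw [ht] at h; exact (EReal.coe_lt_top _).not_ge h
    have hS₁ne_bot : S₁ ≠ ⊥ := by
      have hterm : ((ℓ (A xf,0)/s0 - φf : ℝ) : EReal) ≤ S₁ := by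
        rw [hS₁def]
        refine le_trans ?_ (le_iSup (fun x : H =>
          ((⟪ContinuousLinearMap.adjoint A p', x⟫ : ℝ) : EReal) - f x) xf)
        rw [hfxf, hip xf, ← EReal.coe_sub]
      intro hb'; rw [hb'] at hterm; exact (EReal.coe_ne_bot _) (le_bot_iff.1 hterm)
    set σ₁ : ℝ := S₁.toReal with hσ₁def
    have hσ₁ : S₁ = (σ₁ : EReal) := (EReal.coe_toReal hS₁ne_top hS₁ne_bot).symm
    set S₂ : EReal := ⨆ v : EuclideanSpace ℝ (Fin m), ((⟪-p', v⟫ : ℝ) : EReal) - g v with hS₂def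
    have hS₂le : S₂ ≤ ((-(u/s0) - σ₁ : ℝ) : EReal) := by
      rw [hS₂def]
      apply iSup_le
      intro v
      by_cases hgv : g v = ⊤
      · rw [hgv, EReal.sub_top]; exact bot_le
      · have hγv : g v = (((g v).toReal : ℝ) : EReal) :=
          (EReal.coe_toReal hgv (hg_proper_bot v)).symm
        rw [hγv, hipv v, ← EReal.coe_sub]
        apply EReal.coe_le_coe_iff.2
        have h1 := hS₁le v (g v).toReal hγv
        rw [hσ₁] at h1
        have h1' : σ₁ ≤ -(u/s0) + ℓ (v,0)/s0 + (g v).toReal := EReal.coe_le_coe_iff.1 h1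
        linarith
    have hS₂ne_top : S₂ ≠ ⊤ := fun ht => by
      rw [ht] at hS₂le; exact (EReal.coe_lt_top _).not_ge hS₂le
    have hS₂ne_bot : S₂ ≠ ⊥ := by
      have hterm : ((-(ℓ (A xf,0)/s0) - γf : ℝ) : EReal) ≤ S₂ := by
        rw [hS₂def]
        refine le_trans ?_ (le_iSup (fun v : EuclideanSpace ℝ (Fin m) =>
          ((⟪-p', v⟫ : ℝ) : EReal) - g v) (A xf))
        rw [hgxf, hipv (A xf), ← EReal.coe_sub]
      intro hb'; rw [hb'] at hterm; exact (EReal.coe_ne_bot _) (le_bot_iff.1 hterm)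
    set σ₂ : ℝ := S₂.toReal with hσ₂def
    have hσ₂ : S₂ = (σ₂ : EReal) := (EReal.coe_toReal hS₂ne_top hS₂ne_bot).symm
    have hσ₂le : σ₂ ≤ -(u/s0) - σ₁ := by
      rw [hσ₂] at hS₂le; exact EReal.coe_le_coe_iff.1 hS₂le
    have hdual_ge : ((u/s0 : ℝ) : EReal) ≤ -S₁ - S₂ := by
      rw [hσ₁, hσ₂]
      rw [show -((σ₁:ℝ):EReal) - ((σ₂:ℝ):EReal) = ((-σ₁ - σ₂ : ℝ):EReal) by norm_cast]
      exact EReal.coe_le_coe_iff.2 (by linarith)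
    have hfinal : ((u/s0 : ℝ) : EReal) ≤ D := by
      refine le_trans hdual_ge ?_
      rw [hD]
      exact le_iSup (fun p : EuclideanSpace ℝ (Fin m) =>
        -(⨆ x : H, ((⟪ContinuousLinearMap.adjoint A p, x⟫ : ℝ) : EReal) - f x)
          - (⨆ x : EuclideanSpace ℝ (Fin m), ((⟪-p, x⟫ : ℝ) : EReal) - g x)) p'
    have hcontra : D < ((u/s0 : ℝ) : EReal) := by
      refine lt_trans hr'1 ?_
      have : r' < u/s0 := (lt_div_iff₀ hs0pos).2 hur'
      exact_mod_cast this
    exact absurd hfinal (not_le.2 hcontra)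
  exact ⟨le_antisymm hstrong hweak, ⟨ρ, hSρ⟩, hmin⟩
end

section
/- Let ρ > 0 and for each p ∈ ℝ^m let x_{f,p} ∈ H be the unique minimizer of x ↦ f(x) + (ρ/2)‖ A*p/ρ − x ‖² (equivalently, the unique maximizer of x ↦ ⟨A*p,x⟩ − f(x) − (ρ/2)‖x‖²). Then for all p, q ∈ ℝ^m one has ‖ A x_{f,p} − A x_{f,q} ‖ ≤ (‖A‖²/ρ) ‖ p − q ‖. -/
open scoped RealInnerProductSpace

set_option maxHeartbeats 2000000 in
/-- Let `ρ > 0` and for each `p ∈ ℝ^m` let `x_{f,p} ∈ H` be the (unique) minimizer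
of `x ↦ f(x) + (ρ/2)‖ A*p/ρ − x ‖²` (equivalently, the unique maximizer of
`x ↦ ⟨A*p,x⟩ − f(x) − (ρ/2)‖x‖²`). Then for all `p, q ∈ ℝ^m` one has
`‖ A x_{f,p} − A x_{f,q} ‖ ≤ (‖A‖²/ρ) ‖ p − q ‖`. -/
theorem smoothed_gradient_lipschitz
    {H : Type*} [NormedAddCommGroup H] [InnerProductSpace ℝ H] [CompleteSpace H]
    {m : ℕ}
    (f : H → EReal)
    (hf_proper_top : ∃ x, f x ≠ ⊤) (hf_proper_bot : ∀ x, f x ≠ ⊥)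
    (hf_convex : ∀ x y : H, ∀ a b : ℝ, 0 ≤ a → 0 ≤ b → a + b = 1 →
      f (a • x + b • y) ≤ (a : EReal) * f x + (b : EReal) * f y)
    (hf_lsc : LowerSemicontinuous f)
    (A : H →L[ℝ] EuclideanSpace ℝ (Fin m))
    (ρ : ℝ) (hρ : 0 < ρ)
    (xf : EuclideanSpace ℝ (Fin m) → H)
    (hxf : ∀ (p : EuclideanSpace ℝ (Fin m)) (x : H),
      f (xf p) + ((ρ / 2 * ‖ρ⁻¹ • ContinuousLinearMap.adjoint A p - xf p‖ ^ 2 : ℝ) : EReal) ≤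
        f x + ((ρ / 2 * ‖ρ⁻¹ • ContinuousLinearMap.adjoint A p - x‖ ^ 2 : ℝ) : EReal)) :
    ∀ p q : EuclideanSpace ℝ (Fin m),
      ‖A (xf p) - A (xf q)‖ ≤ ‖A‖ ^ 2 / ρ * ‖p - q‖ := by
  obtain ⟨x₀, hx₀⟩ := hf_proper_top
  -- each xf r has finite f-value
  have hfin : ∀ r, ∃ c : ℝ, f (xf r) = (c : EReal) := by
    intro r
    have hne_top : f (xf r) ≠ ⊤ := by
      intro h
      have h1 := hxf r x₀
      rw [h, EReal.top_add_coe, top_le_iff] at h1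
      exact (EReal.add_lt_top hx₀ (EReal.coe_ne_top _)).ne h1
    lift f (xf r) to ℝ using ⟨hne_top, hf_proper_bot _⟩ with c hc
    exact ⟨c, rfl⟩
  intro p q
  set u := xf p with hu
  set v := xf q with hv
  set a := ρ⁻¹ • (ContinuousLinearMap.adjoint A) p with ha
  set b := ρ⁻¹ • (ContinuousLinearMap.adjoint A) q with hb
  obtain ⟨fu, hfu⟩ := hfin p
  obtain ⟨fv, hfv⟩ := hfin q
  set d := v - u with hd
  -- key inequality for all small t
  have key : ∀ t : ℝ, 0 < t → t ≤ 1 →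
      ⟪(a - u) - (b - v), d⟫ ≤ t * ‖d‖ ^ 2 := by
    intro t ht ht1
    have hz : (1 - t) • u + t • v = u + t • d := by
      rw [hd]; module
    have hw : (1 - t) • v + t • u = v - t • d := by
      rw [hd]; module
    -- first inequality
    have hconv1 := hf_convex u v (1 - t) t (by linarith) ht.le (by ring)
    have h1' := (hxf p ((1 - t) • u + t • v)).trans
      (add_le_add_left hconv1 _)
    rw [hfu, hfv, hz] at h1'
    have h1 : fu + ρ / 2 * ‖a - u‖ ^ 2 ≤
        (1 - t) * fu + t * fv + ρ / 2 * ‖a - (u + t • d)‖ ^ 2 := by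
      exact_mod_cast h1'
    -- second inequality
    have hconv2 := hf_convex v u (1 - t) t (by linarith) ht.le (by ring)
    have h2' := (hxf q ((1 - t) • v + t • u)).trans
      (add_le_add_left hconv2 _)
    rw [hfu, hfv, hw] at h2'
    have h2 : fv + ρ / 2 * ‖b - v‖ ^ 2 ≤
        (1 - t) * fv + t * fu + ρ / 2 * ‖b - (v - t • d)‖ ^ 2 := by
      exact_mod_cast h2'
    -- expand the norms
    have e1 : ‖a - (u + t • d)‖ ^ 2 =
        ‖a - u‖ ^ 2 - 2 * (t * ⟪a - u, d⟫) + t ^ 2 * ‖d‖ ^ 2 := by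
      have : a - (u + t • d) = (a - u) - t • d := by abel
      rw [this, norm_sub_sq_real, real_inner_smul_right, norm_smul]
      simp [mul_pow, sq_abs]
    have e2 : ‖b - (v - t • d)‖ ^ 2 =
        ‖b - v‖ ^ 2 + 2 * (t * ⟪b - v, d⟫) + t ^ 2 * ‖d‖ ^ 2 := by
      have : b - (v - t • d) = (b - v) + t • d := by abel
      rw [this, norm_add_sq_real, real_inner_smul_right, norm_smul]
      simp [mul_pow, sq_abs]
    rw [e1] at h1
    rw [e2] at h2
    rw [inner_sub_left]
    have hsum : 0 ≤ ρ / 2 * (- 2 * (t * ⟪a - u, d⟫) + 2 * (t * ⟪b - v, d⟫)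
        + 2 * (t ^ 2 * ‖d‖ ^ 2)) := by nlinarith [h1, h2]
    have h3 : 0 ≤ - 2 * (t * ⟪a - u, d⟫) + 2 * (t * ⟪b - v, d⟫)
        + 2 * (t ^ 2 * ‖d‖ ^ 2) := by
      by_contra hneg
      push_neg at hneg
      nlinarith [hsum, hρ, hneg]
    clear hsum h1 h2 h1' h2' hconv1 hconv2 e1 e2 hxf hf_convex hf_lsc hfin
    set I1 := ⟪a - u, d⟫ with hI1
    set I2 := ⟪b - v, d⟫ with hI2
    set D := ‖d‖ ^ 2 with hD
    have h4 : t * 0 ≤ t * (-I1 + I2 + t * D) := by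
      rw [mul_zero]; linarith [h3]
    have h5 : 0 ≤ -I1 + I2 + t * D := le_of_mul_le_mul_left h4 ht
    linarith [h5]
  -- pass to the limit t → 0
  have hC : ⟪(a - u) - (b - v), d⟫ ≤ 0 := by
    set C := ⟪(a - u) - (b - v), d⟫ with hCdef
    set D := ‖d‖ ^ 2 with hDdef
    have hD : 0 ≤ D := by positivity
    by_contra hcon
    push_neg at hcon
    have h2d : (0:ℝ) < 2 * D + 2 := by positivity
    set t := min 1 (C / (2 * D + 2)) with htdef
    have ht0 : 0 < t := lt_min one_pos (by positivity)
    have hkey := key t ht0 (min_le_left _ _)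
    have htle : t ≤ C / (2 * D + 2) := min_le_right _ _
    have htD : t * D ≤ C / (2 * D + 2) * D := mul_le_mul_of_nonneg_right htle hD
    have hcd : C / (2 * D + 2) * (2 * D + 2) = C := div_mul_cancel₀ _ (ne_of_gt h2d)
    have hq : 0 < C / (2 * D + 2) := div_pos hcon h2d
    have hlt : C / (2 * D + 2) * D < C / (2 * D + 2) * (2 * D + 2) :=
      mul_lt_mul_of_pos_left (by linarith) hq
    rw [hcd] at hlt
    linarith [hkey, htD, hlt]
  -- firm nonexpansiveness consequence
  have hmono : ‖u - v‖ ^ 2 ≤ ⟪a - b, u - v⟫ := by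
    have h1 : (a - u) - (b - v) = (a - b) - (u - v) := by abel
    rw [h1, inner_sub_left, hd] at hC
    have h2 : ⟪u - v, v - u⟫ = -(‖u - v‖ ^ 2) := by
      have : v - u = -(u - v) := by abel
      rw [this, inner_neg_right, real_inner_self_eq_norm_sq]
    have h3 : ⟪a - b, v - u⟫ = -⟪a - b, u - v⟫ := by
      have : v - u = -(u - v) := by abel
      rw [this, inner_neg_right]
    rw [h2, h3] at hC
    linarith
  -- rewrite a - b using the adjoint
  have hab : ⟪a - b, u - v⟫ = ρ⁻¹ * ⟪p - q, A u - A v⟫ := by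
    rw [ha, hb, ← smul_sub, real_inner_smul_left, ← map_sub,
      ContinuousLinearMap.adjoint_inner_left, map_sub]
  have hbound : ⟪p - q, A u - A v⟫ ≤ ‖p - q‖ * (‖A‖ * ‖u - v‖) := by
    calc ⟪p - q, A u - A v⟫ ≤ ‖p - q‖ * ‖A u - A v‖ := real_inner_le_norm _ _
    _ ≤ ‖p - q‖ * (‖A‖ * ‖u - v‖) := by
        have : ‖A u - A v‖ ≤ ‖A‖ * ‖u - v‖ := by
          rw [← map_sub]; exact A.le_opNorm _
        exact mul_le_mul_of_nonneg_left this (norm_nonneg _)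
  have huv : ‖u - v‖ ≤ ρ⁻¹ * (‖A‖ * ‖p - q‖) := by
    rcases eq_or_lt_of_le (norm_nonneg (u - v)) with h0 | h0
    · rw [← h0]; positivity
    · have h1 : ‖u - v‖ ^ 2 ≤ ρ⁻¹ * (‖p - q‖ * (‖A‖ * ‖u - v‖)) := by
        calc ‖u - v‖ ^ 2 ≤ ⟪a - b, u - v⟫ := hmono
        _ = ρ⁻¹ * ⟪p - q, A u - A v⟫ := hab
        _ ≤ ρ⁻¹ * (‖p - q‖ * (‖A‖ * ‖u - v‖)) := by
            exact mul_le_mul_of_nonneg_left hbound (by positivity)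
      have h2 : ‖u - v‖ * ‖u - v‖ ≤ ρ⁻¹ * (‖A‖ * ‖p - q‖) * ‖u - v‖ := by
        calc ‖u - v‖ * ‖u - v‖ = ‖u - v‖ ^ 2 := (sq _).symm
        _ ≤ ρ⁻¹ * (‖p - q‖ * (‖A‖ * ‖u - v‖)) := h1
        _ = ρ⁻¹ * (‖A‖ * ‖p - q‖) * ‖u - v‖ := by ring
      exact le_of_mul_le_mul_right h2 h0
  have hAuv : ‖A u - A v‖ ≤ ‖A‖ * ‖u - v‖ := by
    rw [← map_sub]; exact A.le_opNorm _
  have hAnn : 0 ≤ ‖A‖ := norm_nonneg _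
  calc ‖A u - A v‖ ≤ ‖A‖ * ‖u - v‖ := hAuv
  _ ≤ ‖A‖ * (ρ⁻¹ * (‖A‖ * ‖p - q‖)) := mul_le_mul_of_nonneg_left huv hAnn
  _ = ‖A‖ ^ 2 / ρ * ‖p - q‖ := by ring
end

section
/- If f is ρ-strongly convex for some ρ > 0, then the function p ↦ f*(A*p) is differentiable on ℝ^m, for each p ∈ ℝ^m its gradient equals A x_{f,p} where x_{f,p} is the unique minimizer of x ↦ f(x) − ⟨A*p,x⟩, and this gradient is Lipschitz continuous with Lipschitz constant ‖A‖²/ρ. -/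
open scoped RealInnerProductSpace
open Filter Topology

private lemma ereal_neg_sub_coe (r : ℝ) (b : EReal) : -((r : EReal) - b) = b - r := by
  induction b with
  | bot => simp
  | coe b => norm_cast; ring
  | top => simp

private lemma ereal_neg_sub_coe' (b : EReal) (r : ℝ) : -(b - (r : EReal)) = (r : EReal) - b := by
  rw [← ereal_neg_sub_coe, neg_neg]

set_option maxHeartbeats 1000000 in
/-- If `f` is ρ-strongly convex for some `ρ > 0`, then the function
`p ↦ f*(A*p)` is differentiable on `ℝ^m`, for each `p ∈ ℝ^m` its gradient equals `A x_{f,p}`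
where `x_{f,p}` is the unique minimizer of `x ↦ f(x) − ⟨A*p,x⟩`, and this gradient is Lipschitz
continuous with Lipschitz constant `‖A‖²/ρ`. -/
theorem conjugate_of_strongly_convex_composed_adjoint
    {H : Type*} [NormedAddCommGroup H] [InnerProductSpace ℝ H] [CompleteSpace H]
    {m : ℕ}
    (f : H → EReal) (ρ : ℝ) (hρ : 0 < ρ)
    (hf_proper_top : ∃ x, f x ≠ ⊤) (hf_proper_bot : ∀ x, f x ≠ ⊥)
    (hf_lsc : LowerSemicontinuous f)
    (hf_strconv : ∀ x y : H, ∀ a b : ℝ, 0 ≤ a → 0 ≤ b → a + b = 1 →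
      f (a • x + b • y) - ((ρ / 2 * ‖a • x + b • y‖ ^ 2 : ℝ) : EReal) ≤
        (a : EReal) * (f x - ((ρ / 2 * ‖x‖ ^ 2 : ℝ) : EReal)) +
        (b : EReal) * (f y - ((ρ / 2 * ‖y‖ ^ 2 : ℝ) : EReal)))
    (A : H →L[ℝ] EuclideanSpace ℝ (Fin m))
    (F : EuclideanSpace ℝ (Fin m) → ℝ)
    (hF : ∀ p : EuclideanSpace ℝ (Fin m),
      (F p : EReal) = ⨆ x : H, ((⟪ContinuousLinearMap.adjoint A p, x⟫ : ℝ) : EReal) - f x) :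
    (∀ p : EuclideanSpace ℝ (Fin m), ∃! xf : H,
      ∀ x : H, f xf - ((⟪ContinuousLinearMap.adjoint A p, xf⟫ : ℝ) : EReal) ≤
        f x - ((⟪ContinuousLinearMap.adjoint A p, x⟫ : ℝ) : EReal)) ∧
    (∀ (p : EuclideanSpace ℝ (Fin m)) (xf : H),
      (∀ x : H, f xf - ((⟪ContinuousLinearMap.adjoint A p, xf⟫ : ℝ) : EReal) ≤
        f x - ((⟪ContinuousLinearMap.adjoint A p, x⟫ : ℝ) : EReal)) →
      HasGradientAt F (A xf) p) ∧
    (∀ (p q : EuclideanSpace ℝ (Fin m)) (xfp xfq : H),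
      (∀ x : H, f xfp - ((⟪ContinuousLinearMap.adjoint A p, xfp⟫ : ℝ) : EReal) ≤
        f x - ((⟪ContinuousLinearMap.adjoint A p, x⟫ : ℝ) : EReal)) →
      (∀ x : H, f xfq - ((⟪ContinuousLinearMap.adjoint A q, xfq⟫ : ℝ) : EReal) ≤
        f x - ((⟪ContinuousLinearMap.adjoint A q, x⟫ : ℝ) : EReal)) →
      ‖A xfp - A xfq‖ ≤ ‖A‖ ^ 2 / ρ * ‖p - q‖) := by
  classical
  obtain ⟨x₀, hx₀⟩ := hf_proper_top
  set B := ContinuousLinearMap.adjoint A with hB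
  have hne : ∀ x, f x ≠ ⊤ → f x = ((f x).toReal : EReal) :=
    fun x hx => (EReal.coe_toReal hx (hf_proper_bot x)).symm
  have hub : ∀ p x, ((⟪B p, x⟫ : ℝ) : EReal) - f x ≤ (F p : EReal) := by
    intro p x
    have h := le_iSup (fun x => ((⟪B p, x⟫ : ℝ) : EReal) - f x) x
    rw [← hF p] at h
    exact h
  have hub' : ∀ p x, -(F p : EReal) ≤ f x - ((⟪B p, x⟫ : ℝ) : EReal) := by
    intro p x
    have h := EReal.neg_le_neg_iff.mpr (hub p x)
    rwa [ereal_neg_sub_coe] at h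
  have hK1 : ∀ p x, f x ≠ ⊤ → ⟪B p, x⟫ - (f x).toReal ≤ F p := by
    intro p x hx
    have h := hub p x
    rw [hne x hx, ← EReal.coe_sub] at h
    exact_mod_cast h
  -- minimizers have finite value
  have hKfin : ∀ (p : EuclideanSpace ℝ (Fin m)) (xf : H),
      (∀ x, f xf - ((⟪B p, xf⟫ : ℝ) : EReal) ≤ f x - ((⟪B p, x⟫ : ℝ) : EReal)) →
      f xf ≠ ⊤ := by
    intro p xf hmin htop
    have h := hmin x₀
    rw [htop, EReal.top_sub_coe, top_le_iff] at h
    have h2 : f x₀ = ⊤ := by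
      by_contra hne'
      rw [← EReal.coe_toReal hne' (hf_proper_bot x₀), ← EReal.coe_sub] at h
      exact EReal.coe_ne_top _ h
    exact hx₀ h2
  -- real form of minimality
  have hMinR : ∀ (p : EuclideanSpace ℝ (Fin m)) (xf : H),
      (∀ x, f xf - ((⟪B p, xf⟫ : ℝ) : EReal) ≤ f x - ((⟪B p, x⟫ : ℝ) : EReal)) →
      ∀ x, f x ≠ ⊤ →
      (f xf).toReal - ⟪B p, xf⟫ ≤ (f x).toReal - ⟪B p, x⟫ := by
    intro p xf hmin x hx
    have h := hmin x
    rw [hne xf (hKfin p xf hmin), hne x hx, ← EReal.coe_sub, ← EReal.coe_sub] at h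
    exact_mod_cast h
  -- value of F at minimizers
  have hK3 : ∀ (p : EuclideanSpace ℝ (Fin m)) (xf : H),
      (∀ x, f xf - ((⟪B p, xf⟫ : ℝ) : EReal) ≤ f x - ((⟪B p, x⟫ : ℝ) : EReal)) →
      (f xf).toReal - ⟪B p, xf⟫ = -(F p) := by
    intro p xf hmin
    have hfin := hKfin p xf hmin
    have hge := hK1 p xf hfin
    have hle : (F p : EReal) ≤ ((⟪B p, xf⟫ - (f xf).toReal : ℝ) : EReal) := by
      rw [hF p]
      apply iSup_le
      intro x
      have h := EReal.neg_le_neg_iff.mpr (hmin x)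
      rw [ereal_neg_sub_coe', ereal_neg_sub_coe'] at h
      calc ((⟪B p, x⟫ : ℝ) : EReal) - f x ≤ ((⟪B p, xf⟫ : ℝ) : EReal) - f xf := h
        _ = ((⟪B p, xf⟫ - (f xf).toReal : ℝ) : EReal) := by
            rw [hne xf hfin, ← EReal.coe_sub, EReal.toReal_coe]
    have hle' : F p ≤ ⟪B p, xf⟫ - (f xf).toReal := by exact_mod_cast hle
    linarith
  -- inner product linearity helper
  have hinner : ∀ (r : EuclideanSpace ℝ (Fin m)) (a b : ℝ) (x y : H),
      ⟪B r, a • x + b • y⟫ = a * ⟪B r, x⟫ + b * ⟪B r, y⟫ := by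
    intro r a b x y
    rw [inner_add_right, real_inner_smul_right, real_inner_smul_right]
  -- real strong convexity
  have hSC : ∀ (x y : H) (a b : ℝ), 0 ≤ a → 0 ≤ b → a + b = 1 → f x ≠ ⊤ → f y ≠ ⊤ →
      f (a • x + b • y) ≠ ⊤ ∧
      (f (a • x + b • y)).toReal ≤
        a * (f x).toReal + b * (f y).toReal - ρ / 2 * (a * b) * ‖x - y‖ ^ 2 := by
    intro x y a b ha hb hab hx hy
    have h := hf_strconv x y a b ha hb hab
    rw [hne x hx, hne y hy, ← EReal.coe_sub, ← EReal.coe_sub, ← EReal.coe_mul, ← EReal.coe_mul,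
      ← EReal.coe_add] at h
    set z := a • x + b • y with hz
    have hzle : f z ≤ (((a * ((f x).toReal - ρ / 2 * ‖x‖ ^ 2) +
        b * ((f y).toReal - ρ / 2 * ‖y‖ ^ 2)) + ρ / 2 * ‖z‖ ^ 2 : ℝ) : EReal) := by
      rw [EReal.coe_add]
      exact (EReal.sub_le_iff_le_add (Or.inl (EReal.coe_ne_bot _))
        (Or.inl (EReal.coe_ne_top _))).1 h
    have hztop : f z ≠ ⊤ := by
      intro hh
      rw [hh] at hzle
      exact (EReal.coe_ne_top _) (top_le_iff.mp hzle)
    refine ⟨hztop, ?_⟩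
    rw [hne z hztop, ← EReal.coe_sub] at h
    have h' := EReal.coe_le_coe_iff.mp h
    have hz2 : ‖z‖ ^ 2 = a ^ 2 * ‖x‖ ^ 2 + 2 * (a * b) * ⟪x, y⟫ + b ^ 2 * ‖y‖ ^ 2 := by
      rw [hz, norm_add_sq_real, norm_smul, norm_smul, real_inner_smul_left,
        real_inner_smul_right, Real.norm_eq_abs, Real.norm_eq_abs,
        abs_of_nonneg ha, abs_of_nonneg hb]
      ring
    have hxy2 : ‖x - y‖ ^ 2 = ‖x‖ ^ 2 - 2 * ⟪x, y⟫ + ‖y‖ ^ 2 := norm_sub_sq_real x y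
    have key : a * ‖x‖ ^ 2 + b * ‖y‖ ^ 2 - ‖z‖ ^ 2 = a * b * ‖x - y‖ ^ 2 := by
      rw [hz2, hxy2]
      have hb' : b = 1 - a := by linarith
      rw [hb']; ring
    nlinarith [h', key, hρ]
  -- quadratic growth at minimizers
  have hQG : ∀ (p : EuclideanSpace ℝ (Fin m)) (xf : H),
      (∀ x, f xf - ((⟪B p, xf⟫ : ℝ) : EReal) ≤ f x - ((⟪B p, x⟫ : ℝ) : EReal)) →
      ∀ x, f x ≠ ⊤ →
      (f xf).toReal - ⟪B p, xf⟫ + ρ / 2 * ‖x - xf‖ ^ 2 ≤ (f x).toReal - ⟪B p, x⟫ := by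
    intro p xf hmin x hx
    have hxf := hKfin p xf hmin
    have hstep : ∀ t : ℝ, 0 < t → t ≤ 1 / 2 →
        (f xf).toReal - ⟪B p, xf⟫ + ρ / 2 * (1 - t) * ‖x - xf‖ ^ 2 ≤
          (f x).toReal - ⟪B p, x⟫ := by
      intro t ht ht2
      obtain ⟨hz, hsc⟩ := hSC x xf t (1 - t) (le_of_lt ht) (by linarith) (by ring) hx hxf
      have hm := hMinR p xf hmin _ hz
      have hi := hinner p t (1 - t) x xf
      rw [hi] at hm
      have hmul : t * ((f xf).toReal - ⟪B p, xf⟫ + ρ / 2 * (1 - t) * ‖x - xf‖ ^ 2) ≤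
          t * ((f x).toReal - ⟪B p, x⟫) := by nlinarith [hsc, hm]
      exact le_of_mul_le_mul_left hmul ht
    by_contra hlt
    push_neg at hlt
    set d2 := ‖x - xf‖ ^ 2 with hd2
    have hd2n : 0 ≤ d2 := sq_nonneg _
    set ε := (f xf).toReal - ⟪B p, xf⟫ + ρ / 2 * d2 - ((f x).toReal - ⟪B p, x⟫) with hε
    have hεpos : 0 < ε := by simp only [hε]; linarith
    have ht := hstep (min (1 / 2) (ε / (ρ * d2 + 1)))
      (lt_min (by norm_num) (by positivity)) (min_le_left _ _)
    have hle2 : min (1 / 2) (ε / (ρ * d2 + 1)) ≤ ε / (ρ * d2 + 1) := min_le_right _ _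
    have hpos1 : 0 < ρ * d2 + 1 := by positivity
    have hkey : ρ / 2 * (min (1 / 2) (ε / (ρ * d2 + 1))) * d2 < ε := by
      have h1 : ρ / 2 * (min (1 / 2) (ε / (ρ * d2 + 1))) * d2 ≤
          ρ / 2 * (ε / (ρ * d2 + 1)) * d2 := by
        apply mul_le_mul_of_nonneg_right _ hd2n
        exact mul_le_mul_of_nonneg_left hle2 (by positivity)
      have h2 : ρ / 2 * (ε / (ρ * d2 + 1)) * d2 < ε := by
        rw [show ρ / 2 * (ε / (ρ * d2 + 1)) * d2 = ρ / 2 * ε * d2 / (ρ * d2 + 1) by ring,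
          div_lt_iff₀ hpos1]
        nlinarith [hεpos, hd2n, hρ]
      linarith
    nlinarith [ht, hkey]
  -- Lipschitz estimate (part 3)
  have hlip : ∀ (p q : EuclideanSpace ℝ (Fin m)) (xfp xfq : H),
      (∀ x, f xfp - ((⟪B p, xfp⟫ : ℝ) : EReal) ≤ f x - ((⟪B p, x⟫ : ℝ) : EReal)) →
      (∀ x, f xfq - ((⟪B q, xfq⟫ : ℝ) : EReal) ≤ f x - ((⟪B q, x⟫ : ℝ) : EReal)) →
      ‖A xfp - A xfq‖ ≤ ‖A‖ ^ 2 / ρ * ‖p - q‖ := by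
    intro p q xfp xfq hmp hmq
    have hfp := hKfin p xfp hmp
    have hfq := hKfin q xfq hmq
    have h1 := hQG p xfp hmp xfq hfq
    have h2 := hQG q xfq hmq xfp hfp
    have hrev : ‖xfq - xfp‖ = ‖xfp - xfq‖ := norm_sub_rev _ _
    have e1 : ⟪B p, xfp⟫ - ⟪B p, xfq⟫ + (⟪B q, xfq⟫ - ⟪B q, xfp⟫) =
        ⟪p - q, A xfp - A xfq⟫ := by
      rw [hB]
      simp only [inner_sub_left, inner_sub_right, ContinuousLinearMap.adjoint_inner_left]
      ring
    have hsum : ρ * ‖xfp - xfq‖ ^ 2 ≤ ⟪p - q, A xfp - A xfq⟫ := by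
      rw [← e1]; rw [hrev] at h1; linarith
    have h3 : ⟪p - q, A xfp - A xfq⟫ ≤ ‖p - q‖ * ‖A xfp - A xfq‖ := real_inner_le_norm _ _
    have h4 : ‖A xfp - A xfq‖ ≤ ‖A‖ * ‖xfp - xfq‖ := by
      rw [← map_sub]; exact A.le_opNorm _
    rcases eq_or_lt_of_le (norm_nonneg (xfp - xfq)) with hd | hd
    · have h5 : ‖A xfp - A xfq‖ ≤ 0 := by rw [← hd] at h4; linarith
      have h6 : (0 : ℝ) ≤ ‖A‖ ^ 2 / ρ * ‖p - q‖ := by positivity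
      linarith
    · have h7 : ρ * ‖xfp - xfq‖ ≤ ‖A‖ * ‖p - q‖ := by
        nlinarith [hsum, h3, h4, norm_nonneg (p - q), hd]
      calc ‖A xfp - A xfq‖ ≤ ‖A‖ * ‖xfp - xfq‖ := h4
        _ ≤ ‖A‖ * (‖A‖ * ‖p - q‖ / ρ) := by
            apply mul_le_mul_of_nonneg_left _ (norm_nonneg A)
            rw [le_div_iff₀ hρ]; linarith
        _ = ‖A‖ ^ 2 / ρ * ‖p - q‖ := by ring
  -- existence of minimizers
  have hexi : ∀ p : EuclideanSpace ℝ (Fin m), ∃ xf : H,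
      ∀ x, f xf - ((⟪B p, xf⟫ : ℝ) : EReal) ≤ f x - ((⟪B p, x⟫ : ℝ) : EReal) := by
    intro p
    have hsel : ∀ n : ℕ, ∃ x : H, f x ≠ ⊤ ∧
        F p - 1 / (n + 1) < ⟪B p, x⟫ - (f x).toReal := by
      intro n
      have hlt : ((F p - 1 / (n + 1) : ℝ) : EReal) < (F p : EReal) := by
        rw [EReal.coe_lt_coe_iff]
        have h0 : (0 : ℝ) < 1 / (n + 1) := by positivity
        linarith
      rw [hF p, lt_iSup_iff] at hlt
      obtain ⟨x, hx⟩ := hlt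
      have hxtop : f x ≠ ⊤ := by
        intro h
        rw [h] at hx
        simp [EReal.sub_top] at hx
      refine ⟨x, hxtop, ?_⟩
      rw [hne x hxtop, ← EReal.coe_sub, EReal.coe_lt_coe_iff] at hx
      exact hx
    choose xs hxs1 hxs2 using hsel
    have hcauchy : CauchySeq xs := by
      apply cauchySeq_of_le_tendsto_0 (fun N : ℕ => Real.sqrt (8 / ρ * (1 / (N + 1))))
      · intro n mm N hn hm
        obtain ⟨hz, hs⟩ := hSC (xs n) (xs mm) (1 / 2) (1 / 2) (by norm_num) (by norm_num)
          (by norm_num) (hxs1 n) (hxs1 mm)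
        have hk := hK1 p _ hz
        have hi := hinner p (1 / 2) (1 / 2) (xs n) (xs mm)
        rw [hi] at hk
        have h1n : (1 : ℝ) / (n + 1) ≤ 1 / (N + 1) := by
          apply one_div_le_one_div_of_le (by positivity)
          have : (N : ℝ) ≤ n := by exact_mod_cast hn
          linarith
        have h1m : (1 : ℝ) / (mm + 1) ≤ 1 / (N + 1) := by
          apply one_div_le_one_div_of_le (by positivity)
          have : (N : ℝ) ≤ mm := by exact_mod_cast hm
          linarith
        have hd2 : ‖xs n - xs mm‖ ^ 2 ≤ 8 / ρ * (1 / (N + 1)) := by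
          rw [div_mul_eq_mul_div, le_div_iff₀ hρ]
          nlinarith [hxs2 n, hxs2 mm, hk, hs, h1n, h1m]
        rw [dist_eq_norm]
        calc ‖xs n - xs mm‖ = Real.sqrt (‖xs n - xs mm‖ ^ 2) :=
              (Real.sqrt_sq (norm_nonneg _)).symm
          _ ≤ Real.sqrt (8 / ρ * (1 / (N + 1))) := Real.sqrt_le_sqrt hd2
      · have h1 : Tendsto (fun N : ℕ => 8 / ρ * (1 / ((N : ℝ) + 1))) atTop (𝓝 0) := by
          have h0 := tendsto_one_div_add_atTop_nhds_zero_nat (𝕜 := ℝ)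
          simpa using h0.const_mul (8 / ρ)
        have h2 := (Real.continuous_sqrt.tendsto 0).comp h1
        simpa [Function.comp_def] using h2
    obtain ⟨xl, hxl⟩ := cauchySeq_tendsto_of_complete hcauchy
    refine ⟨xl, ?_⟩
    have hkey : f xl ≤ ((⟪B p, xl⟫ - F p : ℝ) : EReal) := by
      by_contra hl
      push_neg at hl
      obtain ⟨c', hc1, hc2⟩ := EReal.exists_between_coe_real hl
      have hev1 : ∀ᶠ n in atTop, (c' : EReal) < f (xs n) :=
        hxl.eventually (hf_lsc xl _ hc2)
      have hcont : Continuous fun x : H => ⟪B p, x⟫ := continuous_const.inner continuous_id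
      have hev2 : Tendsto (fun n : ℕ => ⟪B p, xs n⟫ - F p + 1 / (n + 1)) atTop
          (𝓝 (⟪B p, xl⟫ - F p)) := by
        have ht1 : Tendsto (fun n : ℕ => ⟪B p, xs n⟫) atTop (𝓝 ⟪B p, xl⟫) :=
          (hcont.tendsto xl).comp hxl
        have ht2 := (ht1.sub_const (F p)).add tendsto_one_div_add_atTop_nhds_zero_nat
        simpa using ht2
      have hc1' : ⟪B p, xl⟫ - F p < c' := EReal.coe_lt_coe_iff.mp hc1
      have hev3 : ∀ᶠ n in atTop, ⟪B p, xs n⟫ - F p + 1 / (n + 1) < c' :=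
        hev2.eventually_lt_const hc1'
      obtain ⟨n, hn1, hn2⟩ := (hev1.and hev3).exists
      have hn1' : c' < (f (xs n)).toReal := by
        rw [hne _ (hxs1 n)] at hn1
        exact_mod_cast hn1
      have := hxs2 n
      linarith
    intro x
    calc f xl - ((⟪B p, xl⟫ : ℝ) : EReal)
        ≤ ((⟪B p, xl⟫ - F p : ℝ) : EReal) - ((⟪B p, xl⟫ : ℝ) : EReal) :=
          EReal.sub_le_sub hkey le_rfl
      _ = ((-F p : ℝ) : EReal) := by rw [← EReal.coe_sub]; norm_num
      _ ≤ f x - ((⟪B p, x⟫ : ℝ) : EReal) := by rw [EReal.coe_neg]; exact hub' p x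
  -- uniqueness of minimizers
  have huniq : ∀ (p : EuclideanSpace ℝ (Fin m)) (a b : H),
      (∀ x, f a - ((⟪B p, a⟫ : ℝ) : EReal) ≤ f x - ((⟪B p, x⟫ : ℝ) : EReal)) →
      (∀ x, f b - ((⟪B p, b⟫ : ℝ) : EReal) ≤ f x - ((⟪B p, x⟫ : ℝ) : EReal)) →
      a = b := by
    intro p a b hma hmb
    have hfa := hKfin p a hma
    have hfb := hKfin p b hmb
    obtain ⟨hz, hs⟩ := hSC a b (1 / 2) (1 / 2) (by norm_num) (by norm_num) (by norm_num) hfa hfb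
    have h1 := hMinR p a hma _ hz
    have h2 := hMinR p a hma b hfb
    have h3 := hMinR p b hmb a hfa
    have hi := hinner p (1 / 2) (1 / 2) a b
    rw [hi] at h1
    have hd2 : ‖a - b‖ ^ 2 ≤ 0 := by nlinarith [h1, h2, h3, hs, hρ]
    have : ‖a - b‖ = 0 := by nlinarith [norm_nonneg (a - b), sq_nonneg ‖a - b‖]
    exact sub_eq_zero.mp (norm_eq_zero.mp this)
  -- subgradient inequality
  have hsub : ∀ (p : EuclideanSpace ℝ (Fin m)) (xf : H),
      (∀ x, f xf - ((⟪B p, xf⟫ : ℝ) : EReal) ≤ f x - ((⟪B p, x⟫ : ℝ) : EReal)) →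
      ∀ r, F p + ⟪A xf, r - p⟫ ≤ F r := by
    intro p xf hmin r
    have h1 := hK1 r xf (hKfin p xf hmin)
    have h2 := hK3 p xf hmin
    have e : ⟪A xf, r - p⟫ = ⟪B r, xf⟫ - ⟪B p, xf⟫ := by
      rw [hB]
      simp only [ContinuousLinearMap.adjoint_inner_left, inner_sub_right]
      rw [real_inner_comm (A xf) r, real_inner_comm (A xf) p]
    linarith [e, h1, h2]
  -- quadratic error bound
  have hbound : ∀ (p : EuclideanSpace ℝ (Fin m)) (xf : H),
      (∀ x, f xf - ((⟪B p, xf⟫ : ℝ) : EReal) ≤ f x - ((⟪B p, x⟫ : ℝ) : EReal)) →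
      ∀ r, |F r - F p - ⟪A xf, r - p⟫| ≤ ‖A‖ ^ 2 / ρ * ‖r - p‖ ^ 2 := by
    intro p xf hmin r
    obtain ⟨xr, hxr⟩ := hexi r
    have low := hsub p xf hmin r
    have up := hsub r xr hxr p
    have lip := hlip r p xr xf hxr hmin
    rw [abs_le]
    constructor
    · have : (0 : ℝ) ≤ ‖A‖ ^ 2 / ρ * ‖r - p‖ ^ 2 := by positivity
      linarith
    · have h5 : ⟪A xr, p - r⟫ = -⟪A xr, r - p⟫ := by
        rw [show p - r = -(r - p) by abel, inner_neg_right]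
      rw [h5] at up
      have h6 : ⟪A xr, r - p⟫ - ⟪A xf, r - p⟫ = ⟪A xr - A xf, r - p⟫ :=
        (inner_sub_left _ _ _).symm
      have h7 : ⟪A xr - A xf, r - p⟫ ≤ ‖A xr - A xf‖ * ‖r - p‖ := real_inner_le_norm _ _
      have hrev : ‖r - p‖ = ‖p - r‖ := norm_sub_rev _ _
      have h8 : ‖A xr - A xf‖ * ‖r - p‖ ≤ ‖A‖ ^ 2 / ρ * ‖r - p‖ * ‖r - p‖ := by
        rw [hrev] at lip ⊢
        exact mul_le_mul_of_nonneg_right lip (norm_nonneg _)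
      nlinarith [low, up, h6, h7, h8]
  -- gradient (part 2)
  have hgrad : ∀ (p : EuclideanSpace ℝ (Fin m)) (xf : H),
      (∀ x, f xf - ((⟪B p, xf⟫ : ℝ) : EReal) ≤ f x - ((⟪B p, x⟫ : ℝ) : EReal)) →
      HasGradientAt F (A xf) p := by
    intro p xf hmin
    rw [hasGradientAt_iff_isLittleO]
    have hO : (fun r => F r - F p - ⟪A xf, r - p⟫) =O[nhds p]
        fun r : EuclideanSpace ℝ (Fin m) => ‖r - p‖ ^ 2 := by
      apply Asymptotics.IsBigO.of_bound (‖A‖ ^ 2 / ρ)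
      filter_upwards with r
      rw [Real.norm_eq_abs, Real.norm_eq_abs, abs_of_nonneg (sq_nonneg ‖r - p‖)]
      exact hbound p xf hmin r
    have ho : (fun r : EuclideanSpace ℝ (Fin m) => ‖r - p‖ ^ 2) =o[nhds p]
        fun r => r - p := by
      rw [Asymptotics.isLittleO_iff]
      intro c hc
      rw [Metric.eventually_nhds_iff]
      refine ⟨c, hc, fun {y} hy => ?_⟩
      rw [dist_eq_norm] at hy
      rw [Real.norm_eq_abs, abs_of_nonneg (sq_nonneg ‖y - p‖), sq]
      exact mul_le_mul_of_nonneg_right hy.le (norm_nonneg _)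
    exact hO.trans_isLittleO ho
  refine ⟨fun p => ?_, fun p xf hmin => hgrad p xf hmin, hlip⟩
  obtain ⟨xf, hxf⟩ := hexi p
  exact ⟨xf, hxf, fun y hy => huniq p y xf hy hxf⟩
end

section
/- Let ρ, κ > 0 and define θ_{ρ,κ}: ℝ^m → ℝ by θ_{ρ,κ}(p) = f_ρ*(A*p) + g*(−p) + (κ/2)‖p‖², where f_ρ*(A*p) = sup_{x ∈ H} { ⟨A*p,x⟩ − f(x) − (ρ/2)‖x‖² }. Then θ_{ρ,κ} is κ-strongly convex, has a unique minimizer over ℝ^m, is differentiable with gradient ∇θ_{ρ,κ}(p) = A x_{f,p} − x_{g,p} + κ p (where x_{f,p} is the unique maximizer of x ↦ ⟨A*p,x⟩ − f(x) − (ρ/2)‖x‖² and x_{g,p} is the unique minimizer of x ↦ ⟨p,x⟩ + g(x)), and ∇θ_{ρ,κ} is Lipschitz continuous with Lipschitz constant ‖A‖²/ρ + 1/μ + κ. -/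
open scoped RealInnerProductSpace

open Filter Topology

section ErHelpers

lemma er_exists_real {z : EReal} (hb : z ≠ ⊥) (ht : z ≠ ⊤) : ∃ r : ℝ, z = (r : EReal) := by
  induction z using EReal.rec with
  | bot => exact absurd rfl hb
  | coe r => exact ⟨r, rfl⟩
  | top => exact absurd rfl ht

lemma er_sub_helper {z : EReal} {M r c : ℝ} (h : z ≤ (M : EReal)) :
    ((r - M - c : ℝ) : EReal) ≤ (r : EReal) - z - (c : EReal) := by
  induction z using EReal.rec with
  | bot =>
      rw [EReal.coe_sub_bot]
      simp [EReal.top_sub_coe]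
  | coe q =>
      rw [← EReal.coe_sub, ← EReal.coe_sub]
      have hq : q ≤ M := by exact_mod_cast h
      exact EReal.coe_le_coe_iff.mpr (by linarith)
  | top => exact absurd h (by simp)

lemma er_sub_real (r q c : ℝ) :
    (r : EReal) - (q : EReal) - (c : EReal) = ((r - q - c : ℝ) : EReal) := by
  rw [← EReal.coe_sub, ← EReal.coe_sub]

lemma er_sub_top_eq_bot (r c : ℝ) : (r : EReal) - (⊤ : EReal) - (c : EReal) = ⊥ := by
  rw [EReal.sub_top, EReal.bot_sub]

lemma er_coe_lt_sub {s u : ℝ} {z : EReal} : (s : EReal) < z - (u : EReal) ↔ ((s + u : ℝ) : EReal) < z := by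
  induction z using EReal.rec with
  | bot => simp [EReal.bot_sub]
  | coe w =>
      rw [← EReal.coe_sub, EReal.coe_lt_coe_iff, EReal.coe_lt_coe_iff]
      constructor <;> intro <;> linarith
  | top =>
      rw [EReal.top_sub_coe]
      simp only [EReal.coe_lt_top, true_iff, iff_true]

lemma er_sub_ne_bot {z : EReal} (hz : z ≠ ⊥) (u : ℝ) : z - (u : EReal) ≠ ⊥ := by
  induction z using EReal.rec with
  | bot => exact absurd rfl hz
  | coe w => rw [← EReal.coe_sub]; exact EReal.coe_ne_bot _
  | top => rw [EReal.top_sub_coe]; exact top_ne_bot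

end ErHelpers

section NormCombo

variable {E : Type*} [NormedAddCommGroup E] [InnerProductSpace ℝ E]

lemma norm_combo_sq {a b : ℝ} (hab : a + b = 1) (x y : E) :
    ‖a • x + b • y‖ ^ 2 = a * ‖x‖ ^ 2 + b * ‖y‖ ^ 2 - a * b * ‖x - y‖ ^ 2 := by
  have hx : ‖x‖ ^ 2 = ⟪x, x⟫ := (real_inner_self_eq_norm_sq x).symm
  have hy : ‖y‖ ^ 2 = ⟪y, y⟫ := (real_inner_self_eq_norm_sq y).symm
  have hxy : ‖x - y‖ ^ 2 = ⟪x, x⟫ - 2 * ⟪x, y⟫ + ⟪y, y⟫ := by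
    rw [← real_inner_self_eq_norm_sq]
    simp only [inner_sub_left, inner_sub_right, real_inner_comm x y]
    ring
  have hz : ‖a • x + b • y‖ ^ 2 =
      a ^ 2 * ⟪x, x⟫ + 2 * (a * b) * ⟪x, y⟫ + b ^ 2 * ⟪y, y⟫ := by
    rw [← real_inner_self_eq_norm_sq]
    simp only [inner_add_left, inner_add_right, real_inner_smul_left, real_inner_smul_right,
      real_inner_comm x y]
    ring
  rw [hz, hx, hy, hxy]
  have hb : b = 1 - a := by linarith
  subst hb
  ring

end NormCombo

section Phi

variable {E F : Type*} [NormedAddCommGroup E] [InnerProductSpace ℝ E] [CompleteSpace E]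
  [NormedAddCommGroup F] [InnerProductSpace ℝ F] [CompleteSpace F]

noncomputable def PhiE (B : E →L[ℝ] F) (h : E → EReal) (σ : ℝ) (p : F) (x : E) : EReal :=
  ((⟪(ContinuousLinearMap.adjoint B) p, x⟫ : ℝ) : EReal) - h x - ((σ / 2 * ‖x‖ ^ 2 : ℝ) : EReal)

variable {B : E →L[ℝ] F} {h : E → EReal} {σ : ℝ}

lemma PhiE_of_real {p : F} {x : E} {r : ℝ} (hr : h x = (r : EReal)) :
    PhiE B h σ p x =
      ((⟪(ContinuousLinearMap.adjoint B) p, x⟫ - r - σ / 2 * ‖x‖ ^ 2 : ℝ) : EReal) := by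
  rw [PhiE, hr, er_sub_real]

lemma PhiE_of_top {p : F} {x : E} (hr : h x = ⊤) : PhiE B h σ p x = ⊥ := by
  rw [PhiE, hr, er_sub_top_eq_bot]

lemma phi_max_char {p : F} {c : ℝ} {xf : E}
    (hbot : ∀ x, h x ≠ ⊥)
    (hfin : (⨆ x, PhiE B h σ p x) = (c : EReal))
    (hmax : ∀ x, PhiE B h σ p x ≤ PhiE B h σ p xf) :
    ∃ r : ℝ, h xf = (r : EReal) ∧
      c = ⟪(ContinuousLinearMap.adjoint B) p, xf⟫ - r - σ / 2 * ‖xf‖ ^ 2 := by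
  have h1 : PhiE B h σ p xf = (c : EReal) := by
    refine le_antisymm ?_ ?_
    · rw [← hfin]; exact le_iSup _ xf
    · rw [← hfin]; exact iSup_le hmax
  have htop : h xf ≠ ⊤ := by
    intro ht
    rw [PhiE_of_top ht] at h1
    exact (EReal.coe_ne_bot c) h1.symm
  obtain ⟨r, hr⟩ := er_exists_real (hbot xf) htop
  refine ⟨r, hr, ?_⟩
  rw [PhiE_of_real hr] at h1
  exact (EReal.coe_eq_coe_iff.mp h1).symm

lemma phi_subgrad {p q : F} {c d : ℝ} {xf : E}
    (hbot : ∀ x, h x ≠ ⊥)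
    (hfinp : (⨆ x, PhiE B h σ p x) = (c : EReal))
    (hfinq : (⨆ x, PhiE B h σ q x) = (d : EReal))
    (hmax : ∀ x, PhiE B h σ p x ≤ PhiE B h σ p xf) :
    c + ⟪q - p, B xf⟫ ≤ d := by
  obtain ⟨r, hr, hc⟩ := phi_max_char hbot hfinp hmax
  have h2 : PhiE B h σ q xf ≤ (d : EReal) := by rw [← hfinq]; exact le_iSup _ xf
  rw [PhiE_of_real hr, EReal.coe_le_coe_iff] at h2
  have e1 : ⟪(ContinuousLinearMap.adjoint B) p, xf⟫ = ⟪p, B xf⟫ :=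
    ContinuousLinearMap.adjoint_inner_left B xf p
  have e2 : ⟪(ContinuousLinearMap.adjoint B) q, xf⟫ = ⟪q, B xf⟫ :=
    ContinuousLinearMap.adjoint_inner_left B xf q
  have e3 : ⟪q - p, B xf⟫ = ⟪q, B xf⟫ - ⟪p, B xf⟫ := by rw [inner_sub_left]
  rw [e2] at h2
  rw [e1] at hc
  linarith

lemma phi_gap (hσ : 0 < σ)
    (hbot : ∀ x, h x ≠ ⊥)
    (hconv : ∀ x y : E, ∀ a b : ℝ, 0 ≤ a → 0 ≤ b → a + b = 1 →
      h (a • x + b • y) ≤ (a : EReal) * h x + (b : EReal) * h y)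
    {p : F} {c : ℝ} {xf : E}
    (hfin : (⨆ x, PhiE B h σ p x) = (c : EReal))
    (hmax : ∀ x, PhiE B h σ p x ≤ PhiE B h σ p xf)
    {y : E} {ry : ℝ} (hy : h y = (ry : EReal)) :
    (⟪(ContinuousLinearMap.adjoint B) p, y⟫ - ry - σ / 2 * ‖y‖ ^ 2)
      + σ / 2 * ‖y - xf‖ ^ 2 ≤ c := by
  obtain ⟨rf, hrf, hc⟩ := phi_max_char hbot hfin hmax
  set a := (ContinuousLinearMap.adjoint B) p with ha
  have key : ∀ t : ℝ, 0 < t → t ≤ 1 →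
      (⟪a, y⟫ - ry - σ / 2 * ‖y‖ ^ 2) + σ / 2 * (1 - t) * ‖y - xf‖ ^ 2 ≤ c := by
    intro t ht ht1
    have hconvt := hconv y xf t (1 - t) (le_of_lt ht) (by linarith) (by ring)
    rw [hy, hrf] at hconvt
    have hM : h (t • y + (1 - t) • xf) ≤ ((t * ry + (1 - t) * rf : ℝ) : EReal) := by
      refine hconvt.trans_eq ?_
      rw [← EReal.coe_mul, ← EReal.coe_mul, ← EReal.coe_add]
    set z := t • y + (1 - t) • xf with hzdef
    have hlez : PhiE B h σ p z ≤ (c : EReal) := by rw [← hfin]; exact le_iSup _ z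
    have hge : ((⟪a, z⟫ - (t * ry + (1 - t) * rf) - σ / 2 * ‖z‖ ^ 2 : ℝ) : EReal) ≤
        PhiE B h σ p z := er_sub_helper hM
    have hreal : ⟪a, z⟫ - (t * ry + (1 - t) * rf) - σ / 2 * ‖z‖ ^ 2 ≤ c := by
      have := hge.trans hlez
      exact_mod_cast this
    have hz1 : ⟪a, z⟫ = t * ⟪a, y⟫ + (1 - t) * ⟪a, xf⟫ := by
      rw [hzdef, inner_add_right, real_inner_smul_right, real_inner_smul_right]
    have hz2 : ‖z‖ ^ 2 = t * ‖y‖ ^ 2 + (1 - t) * ‖xf‖ ^ 2 - t * (1 - t) * ‖y - xf‖ ^ 2 :=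
      norm_combo_sq (by ring) y xf
    rw [hz1, hz2] at hreal
    by_contra hcon
    push_neg at hcon
    nlinarith [hreal, hc, mul_pos ht (sub_pos.mpr hcon)]
  have hseq : Tendsto (fun n : ℕ => (⟪a, y⟫ - ry - σ / 2 * ‖y‖ ^ 2) +
      σ / 2 * (1 - 1 / (n + 1)) * ‖y - xf‖ ^ 2) atTop
      (𝓝 ((⟪a, y⟫ - ry - σ / 2 * ‖y‖ ^ 2) + σ / 2 * (1 - 0) * ‖y - xf‖ ^ 2)) := by
    exact tendsto_const_nhds.add
      ((((tendsto_const_nhds.sub tendsto_one_div_add_atTop_nhds_zero_nat).const_mul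
        (σ / 2)).mul_const _))
  have hlim := le_of_tendsto hseq (Filter.Eventually.of_forall fun n : ℕ =>
    key (1 / (n + 1)) (by positivity) (by
      rw [div_le_one (by positivity)]
      have : (0:ℝ) ≤ (n:ℝ) := Nat.cast_nonneg n
      linarith))
  simpa using hlim

lemma phi_lip (hσ : 0 < σ)
    (hbot : ∀ x, h x ≠ ⊥)
    (hconv : ∀ x y : E, ∀ a b : ℝ, 0 ≤ a → 0 ≤ b → a + b = 1 →
      h (a • x + b • y) ≤ (a : EReal) * h x + (b : EReal) * h y)
    {p q : F} {c d : ℝ} {xfp xfq : E}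
    (hfinp : (⨆ x, PhiE B h σ p x) = (c : EReal))
    (hfinq : (⨆ x, PhiE B h σ q x) = (d : EReal))
    (hmaxp : ∀ x, PhiE B h σ p x ≤ PhiE B h σ p xfp)
    (hmaxq : ∀ x, PhiE B h σ q x ≤ PhiE B h σ q xfq) :
    σ * ‖xfp - xfq‖ ≤ ‖B‖ * ‖p - q‖ := by
  obtain ⟨rp, hrp, hcp⟩ := phi_max_char hbot hfinp hmaxp
  obtain ⟨rq, hrq, hcq⟩ := phi_max_char hbot hfinq hmaxq
  have g1 := phi_gap hσ hbot hconv hfinp hmaxp hrq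
  have g2 := phi_gap hσ hbot hconv hfinq hmaxq hrp
  have e1 : ⟪(ContinuousLinearMap.adjoint B) p, xfp⟫ - ⟪(ContinuousLinearMap.adjoint B) p, xfq⟫
      - ⟪(ContinuousLinearMap.adjoint B) q, xfp⟫ + ⟪(ContinuousLinearMap.adjoint B) q, xfq⟫
      = ⟪p - q, B (xfp - xfq)⟫ := by
    rw [ContinuousLinearMap.adjoint_inner_left, ContinuousLinearMap.adjoint_inner_left,
      ContinuousLinearMap.adjoint_inner_left, ContinuousLinearMap.adjoint_inner_left,
      inner_sub_left, map_sub, inner_sub_right, inner_sub_right]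
    ring
  have hn1 : ‖xfq - xfp‖ = ‖xfp - xfq‖ := norm_sub_rev _ _
  have hkey : σ * ‖xfp - xfq‖ ^ 2 ≤ ⟪p - q, B (xfp - xfq)⟫ := by
    rw [hn1] at g1
    nlinarith [g1, g2, hcp, hcq, e1]
  rcases eq_or_ne xfp xfq with he | he
  · rw [he, sub_self, norm_zero, mul_zero]
    positivity
  · have hpos : 0 < ‖xfp - xfq‖ := by
      rw [norm_pos_iff, sub_ne_zero]; exact he
    have h2 : ⟪p - q, B (xfp - xfq)⟫ ≤ ‖p - q‖ * (‖B‖ * ‖xfp - xfq‖) := by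
      refine (real_inner_le_norm _ _).trans ?_
      exact mul_le_mul_of_nonneg_left (B.le_opNorm _) (norm_nonneg _)
    nlinarith [hkey, h2, hpos]

lemma phi_combo
    (hbot : ∀ x, h x ≠ ⊥)
    {p q : F} {a b : ℝ} {c d e : ℝ}
    (ha : 0 ≤ a) (hb : 0 ≤ b) (hab : a + b = 1)
    (hfinp : (⨆ x, PhiE B h σ p x) = (c : EReal))
    (hfinq : (⨆ x, PhiE B h σ q x) = (d : EReal))
    (hfine : (⨆ x, PhiE B h σ (a • p + b • q) x) = (e : EReal)) :
    e ≤ a * c + b * d := by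
  rw [← EReal.coe_le_coe_iff, ← hfine]
  refine iSup_le fun x => ?_
  rcases eq_or_ne (h x) ⊤ with ht | ht
  · rw [PhiE_of_top ht]; exact bot_le
  obtain ⟨r, hr⟩ := er_exists_real (hbot x) ht
  rw [PhiE_of_real hr]
  have h1 : ⟪(ContinuousLinearMap.adjoint B) p, x⟫ - r - σ / 2 * ‖x‖ ^ 2 ≤ c := by
    have h1' : PhiE B h σ p x ≤ (c : EReal) := by rw [← hfinp]; exact le_iSup _ x
    rwa [PhiE_of_real hr, EReal.coe_le_coe_iff] at h1'
  have h2 : ⟪(ContinuousLinearMap.adjoint B) q, x⟫ - r - σ / 2 * ‖x‖ ^ 2 ≤ d := by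
    have h2' : PhiE B h σ q x ≤ (d : EReal) := by rw [← hfinq]; exact le_iSup _ x
    rwa [PhiE_of_real hr, EReal.coe_le_coe_iff] at h2'
  have h3 : ⟪(ContinuousLinearMap.adjoint B) (a • p + b • q), x⟫ =
      a * ⟪(ContinuousLinearMap.adjoint B) p, x⟫ +
      b * ⟪(ContinuousLinearMap.adjoint B) q, x⟫ := by
    rw [ContinuousLinearMap.adjoint_inner_left, inner_add_left, real_inner_smul_left,
      real_inner_smul_left, ContinuousLinearMap.adjoint_inner_left,
      ContinuousLinearMap.adjoint_inner_left]
  rw [EReal.coe_le_coe_iff, h3]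
  have h4 := mul_le_mul_of_nonneg_left h1 ha
  have h5 := mul_le_mul_of_nonneg_left h2 hb
  have hr1 : a * r + b * r = r := by rw [← add_mul, hab, one_mul]
  have hn1 : a * (σ / 2 * ‖x‖ ^ 2) + b * (σ / 2 * ‖x‖ ^ 2) = σ / 2 * ‖x‖ ^ 2 := by
    rw [← add_mul, hab, one_mul]
  nlinarith [h4, h5, hr1, hn1]

lemma phi_exists_max (hσ : 0 < σ)
    (hbot : ∀ x, h x ≠ ⊥)
    (hconv : ∀ x y : E, ∀ a b : ℝ, 0 ≤ a → 0 ≤ b → a + b = 1 →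
      h (a • x + b • y) ≤ (a : EReal) * h x + (b : EReal) * h y)
    (hlsc : LowerSemicontinuous h)
    {p : F} {c : ℝ}
    (hfin : (⨆ x, PhiE B h σ p x) = (c : EReal)) :
    ∃ xf : E, ∀ x, PhiE B h σ p x ≤ PhiE B h σ p xf := by
  set a := (ContinuousLinearMap.adjoint B) p with ha
  have hex : ∀ n : ℕ, ∃ x : E, ((c - 1 / (n + 1) : ℝ) : EReal) < PhiE B h σ p x := by
    intro n
    have hlt : ((c - 1 / (n + 1) : ℝ) : EReal) < ⨆ x, PhiE B h σ p x := by
      rw [hfin, EReal.coe_lt_coe_iff]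
      have : (0:ℝ) < 1 / (n + 1) := by positivity
      linarith
    exact lt_iSup_iff.mp hlt
  choose x hx using hex
  have hfinx : ∀ n, ∃ r : ℝ, h (x n) = (r : EReal) := by
    intro n
    refine er_exists_real (hbot _) fun ht => ?_
    have := hx n
    rw [PhiE_of_top ht] at this
    exact absurd this (by simp)
  choose r hr using hfinx
  set Fn : ℕ → ℝ := fun n => ⟪a, x n⟫ - r n - σ / 2 * ‖x n‖ ^ 2 with hFndef
  have hPhin : ∀ n, PhiE B h σ p (x n) = ((Fn n : ℝ) : EReal) := fun n => PhiE_of_real (hr n)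
  have hlt : ∀ n, c - 1 / (n + 1) < Fn n := by
    intro n
    have := hx n
    rw [hPhin n, EReal.coe_lt_coe_iff] at this
    exact this
  have hle : ∀ n, Fn n ≤ c := by
    intro n
    have h1 : PhiE B h σ p (x n) ≤ (c : EReal) := by rw [← hfin]; exact le_iSup _ (x n)
    rwa [hPhin n, EReal.coe_le_coe_iff] at h1
  have hdist : ∀ n k : ℕ, ‖x n - x k‖ ^ 2 ≤ 4 / σ * (1 / (n + 1) + 1 / (k + 1)) := by
    intro n k
    have hconvnk := hconv (x n) (x k) (1/2) (1/2) (by norm_num) (by norm_num) (by norm_num)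
    rw [hr n, hr k] at hconvnk
    have hM : h ((1/2 : ℝ) • x n + (1/2 : ℝ) • x k) ≤
        ((1/2 * r n + 1/2 * r k : ℝ) : EReal) := by
      refine hconvnk.trans_eq ?_
      rw [← EReal.coe_mul, ← EReal.coe_mul, ← EReal.coe_add]
    set z := (1/2 : ℝ) • x n + (1/2 : ℝ) • x k with hzdef
    have hlez : PhiE B h σ p z ≤ (c : EReal) := by rw [← hfin]; exact le_iSup _ z
    have hge : ((⟪a, z⟫ - (1/2 * r n + 1/2 * r k) - σ / 2 * ‖z‖ ^ 2 : ℝ) : EReal) ≤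
        PhiE B h σ p z := er_sub_helper hM
    have hreal : ⟪a, z⟫ - (1/2 * r n + 1/2 * r k) - σ / 2 * ‖z‖ ^ 2 ≤ c := by
      have := hge.trans hlez
      exact_mod_cast this
    have hz1 : ⟪a, z⟫ = 1/2 * ⟪a, x n⟫ + 1/2 * ⟪a, x k⟫ := by
      rw [hzdef, inner_add_right, real_inner_smul_right, real_inner_smul_right]
    have hz2 : ‖z‖ ^ 2 = 1/2 * ‖x n‖ ^ 2 + 1/2 * ‖x k‖ ^ 2 - 1/2 * (1/2) * ‖x n - x k‖ ^ 2 :=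
      norm_combo_sq (by norm_num) (x n) (x k)
    rw [hz1, hz2] at hreal
    have hb1 : c - 1 / (n + 1) < ⟪a, x n⟫ - r n - σ / 2 * ‖x n‖ ^ 2 := by
      have := hlt n
      simp only [hFndef] at this
      exact this
    have hb2 : c - 1 / (k + 1) < ⟪a, x k⟫ - r k - σ / 2 * ‖x k‖ ^ 2 := by
      have := hlt k
      simp only [hFndef] at this
      exact this
    rw [div_mul_eq_mul_div, le_div_iff₀ hσ]
    nlinarith [hreal, hb1, hb2]
  have hcauchy : CauchySeq x := by
    rw [Metric.cauchySeq_iff]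
    intro ε hε
    obtain ⟨N, hN⟩ := exists_nat_gt (8 / (σ * ε ^ 2))
    refine ⟨N, fun n hn k hk => ?_⟩
    have hNpos : (0:ℝ) < 8 / (σ * ε ^ 2) := by positivity
    have hNpos' : (0:ℝ) < N := lt_trans hNpos hN
    have h1 : (1:ℝ) / (n + 1) ≤ 1 / (N + 1) := by
      apply one_div_le_one_div_of_le (by positivity)
      have : (N:ℝ) ≤ n := by exact_mod_cast hn
      linarith
    have h2 : (1:ℝ) / (k + 1) ≤ 1 / (N + 1) := by
      apply one_div_le_one_div_of_le (by positivity)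
      have : (N:ℝ) ≤ k := by exact_mod_cast hk
      linarith
    have hd := hdist n k
    have h3 : ‖x n - x k‖ ^ 2 ≤ 4 / σ * (2 / (N + 1)) := by
      refine hd.trans ?_
      have h5 : (0:ℝ) ≤ 4 / σ := by positivity
      have h6 : 1 / ((n:ℝ) + 1) + 1 / ((k:ℝ) + 1) ≤ 2 / ((N:ℝ) + 1) := by
        rw [show (2:ℝ) / ((N:ℝ) + 1) = 1 / ((N:ℝ) + 1) + 1 / ((N:ℝ) + 1) by ring]
        exact add_le_add h1 h2
      exact mul_le_mul_of_nonneg_left h6 h5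
    have h7 : 4 / σ * (2 / ((N:ℝ) + 1)) < ε ^ 2 := by
      rw [div_mul_div_comm, div_lt_iff₀ (by positivity)]
      have h8 := (div_lt_iff₀ (by positivity : (0:ℝ) < σ * ε ^ 2)).mp hN
      nlinarith [h8, sq_nonneg ε, hε, hσ]
    rw [dist_eq_norm]
    nlinarith [norm_nonneg (x n - x k), h3, h7, hε]
  obtain ⟨xb, hxb⟩ := cauchySeq_tendsto_of_complete hcauchy
  have hFnc : Tendsto Fn atTop (𝓝 c) := by
    refine tendsto_of_tendsto_of_tendsto_of_le_of_le
      (g := fun n : ℕ => c - 1 / (n + 1)) (h := fun _ : ℕ => c) ?_ tendsto_const_nhds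
      (fun n => (hlt n).le) hle
    have h8 : Tendsto (fun n : ℕ => 1 / ((n : ℝ) + 1)) atTop (𝓝 0) :=
      tendsto_one_div_add_atTop_nhds_zero_nat
    have h9 : Tendsto (fun _ : ℕ => c) atTop (𝓝 c) := tendsto_const_nhds
    simpa using h9.sub h8
  have h1 : Tendsto (fun n => ⟪a, x n⟫) atTop (𝓝 ⟪a, xb⟫) :=
    tendsto_const_nhds.inner hxb
  have h2 : Tendsto (fun n => σ / 2 * ‖x n‖ ^ 2) atTop (𝓝 (σ / 2 * ‖xb‖ ^ 2)) :=
    ((hxb.norm).pow 2).const_mul _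
  have hrL : Tendsto r atTop (𝓝 (⟪a, xb⟫ - σ / 2 * ‖xb‖ ^ 2 - c)) := by
    have h3 : r = fun n => ⟪a, x n⟫ - σ / 2 * ‖x n‖ ^ 2 - Fn n := by
      funext n
      rw [hFndef]
      ring
    rw [h3]
    exact (h1.sub h2).sub hFnc
  set L := ⟪a, xb⟫ - σ / 2 * ‖xb‖ ^ 2 - c with hL
  have hxbL : h xb ≤ (L : EReal) := by
    by_contra hcon
    push_neg at hcon
    obtain ⟨s, hs1, hs2⟩ := EReal.exists_between_coe_real hcon
    have hev1 : ∀ᶠ n in atTop, (s : EReal) < h (x n) := hxb.eventually (hlsc xb (s : EReal) hs2)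
    have hev2 : ∀ᶠ n in atTop, s ≤ r n := by
      refine hev1.mono fun n hn => ?_
      rw [hr n, EReal.coe_lt_coe_iff] at hn
      exact hn.le
    have hsL : s ≤ L := ge_of_tendsto hrL hev2
    rw [EReal.coe_lt_coe_iff] at hs1
    linarith
  refine ⟨xb, fun z => ?_⟩
  have hzc : PhiE B h σ p z ≤ (c : EReal) := by rw [← hfin]; exact le_iSup _ z
  have hcb : (c : EReal) ≤ PhiE B h σ p xb := by
    have h4 := er_sub_helper (r := ⟪a, xb⟫) (c := σ / 2 * ‖xb‖ ^ 2) hxbL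
    have heq : ⟪a, xb⟫ - L - σ / 2 * ‖xb‖ ^ 2 = c := by rw [hL]; ring
    rw [heq] at h4
    exact h4
  exact hzc.trans hcb

end Phi

lemma lsc_sub_continuous {α : Type*} [TopologicalSpace α] {g : α → EReal}
    (hg : LowerSemicontinuous g) (hbot : ∀ x, g x ≠ ⊥) {c : α → ℝ} (hc : Continuous c) :
    LowerSemicontinuous fun x => g x - ((c x : ℝ) : EReal) := by
  intro x y hy
  induction y using EReal.rec with
  | bot =>
      refine Eventually.of_forall fun z => ?_
      exact bot_lt_iff_ne_bot.mpr (er_sub_ne_bot (hbot z) (c z))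
  | coe s =>
      have hx' : ((s + c x : ℝ) : EReal) < g x := er_coe_lt_sub.mp hy
      obtain ⟨t, ht1, ht2⟩ := EReal.exists_between_coe_real hx'
      have hev1 : ∀ᶠ z in 𝓝 x, (t : EReal) < g z := hg x (t : EReal) ht2
      have hst : s + c x < t := by exact_mod_cast ht1
      have hev2 : ∀ᶠ z in 𝓝 x, c z < t - s :=
        (hc.tendsto x).eventually_lt_const (by linarith)
      filter_upwards [hev1, hev2] with z hz1 hz2
      rw [gt_iff_lt, er_coe_lt_sub]
      calc ((s + c z : ℝ) : EReal) < (t : EReal) := by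
            exact_mod_cast (by linarith : s + c z < t)
      _ < g z := hz1
  | top => exact absurd hy not_top_lt


set_option maxHeartbeats 1000000 in
/-- Let `ρ, κ > 0` and define `θ_{ρ,κ}(p) = f_ρ*(A*p) + g*(−p) + (κ/2)‖p‖²`.
Then `θ_{ρ,κ}` is κ-strongly convex, has a unique minimizer over `ℝ^m`, is differentiable with
gradient `∇θ_{ρ,κ}(p) = A x_{f,p} − x_{g,p} + κ p` (where `x_{f,p}` is the unique maximizer of
`x ↦ ⟨A*p,x⟩ − f(x) − (ρ/2)‖x‖²` and `x_{g,p}` is the unique minimizer of `x ↦ ⟨p,x⟩ + g(x)`),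
and `∇θ_{ρ,κ}` is Lipschitz continuous with Lipschitz constant `‖A‖²/ρ + 1/μ + κ`. -/
theorem doubly_smoothed_dual_objective_properties
    {H : Type*} [NormedAddCommGroup H] [InnerProductSpace ℝ H] [CompleteSpace H]
    {m : ℕ} (μ : ℝ) (hμ : 0 < μ)
    (f : H → EReal) (g : EuclideanSpace ℝ (Fin m) → EReal)
    (hf_proper_top : ∃ x, f x ≠ ⊤) (hf_proper_bot : ∀ x, f x ≠ ⊥)
    (hf_convex : ∀ x y : H, ∀ a b : ℝ, 0 ≤ a → 0 ≤ b → a + b = 1 →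
      f (a • x + b • y) ≤ (a : EReal) * f x + (b : EReal) * f y)
    (hf_lsc : LowerSemicontinuous f)
    (hf_bdd : Bornology.IsBounded {x : H | f x < ⊤})
    (hg_proper_top : ∃ x, g x ≠ ⊤) (hg_proper_bot : ∀ x, g x ≠ ⊥)
    (hg_lsc : LowerSemicontinuous g)
    (hg_strconv : ∀ x y : EuclideanSpace ℝ (Fin m), ∀ a b : ℝ, 0 ≤ a → 0 ≤ b → a + b = 1 →
      g (a • x + b • y) - ((μ / 2 * ‖a • x + b • y‖ ^ 2 : ℝ) : EReal) ≤
        (a : EReal) * (g x - ((μ / 2 * ‖x‖ ^ 2 : ℝ) : EReal)) +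
        (b : EReal) * (g y - ((μ / 2 * ‖y‖ ^ 2 : ℝ) : EReal)))
    (A : H →L[ℝ] EuclideanSpace ℝ (Fin m))
    (ρ κ : ℝ) (hρ : 0 < ρ) (hκ : 0 < κ)
    (Θ : EuclideanSpace ℝ (Fin m) → ℝ)
    (hΘ : ∀ p : EuclideanSpace ℝ (Fin m),
      (Θ p : EReal) =
        (⨆ x : H, ((⟪ContinuousLinearMap.adjoint A p, x⟫ : ℝ) : EReal) - f x -
          ((ρ / 2 * ‖x‖ ^ 2 : ℝ) : EReal)) +
        (⨆ x : EuclideanSpace ℝ (Fin m), ((⟪-p, x⟫ : ℝ) : EReal) - g x) +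
        ((κ / 2 * ‖p‖ ^ 2 : ℝ) : EReal)) :
    StrongConvexOn Set.univ κ Θ ∧
    (∃! p₀ : EuclideanSpace ℝ (Fin m), ∀ p, Θ p₀ ≤ Θ p) ∧
    (∀ (p : EuclideanSpace ℝ (Fin m)) (xf : H) (xg : EuclideanSpace ℝ (Fin m)),
      (∀ x : H, ((⟪ContinuousLinearMap.adjoint A p, x⟫ : ℝ) : EReal) - f x -
          ((ρ / 2 * ‖x‖ ^ 2 : ℝ) : EReal) ≤
        ((⟪ContinuousLinearMap.adjoint A p, xf⟫ : ℝ) : EReal) - f xf -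
          ((ρ / 2 * ‖xf‖ ^ 2 : ℝ) : EReal)) →
      (∀ x : EuclideanSpace ℝ (Fin m),
        ((⟪p, xg⟫ : ℝ) : EReal) + g xg ≤ ((⟪p, x⟫ : ℝ) : EReal) + g x) →
      HasGradientAt Θ (A xf - xg + κ • p) p) ∧
    (∀ (p q : EuclideanSpace ℝ (Fin m)) (xfp xfq : H)
        (xgp xgq : EuclideanSpace ℝ (Fin m)),
      (∀ x : H, ((⟪ContinuousLinearMap.adjoint A p, x⟫ : ℝ) : EReal) - f x -
          ((ρ / 2 * ‖x‖ ^ 2 : ℝ) : EReal) ≤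
        ((⟪ContinuousLinearMap.adjoint A p, xfp⟫ : ℝ) : EReal) - f xfp -
          ((ρ / 2 * ‖xfp‖ ^ 2 : ℝ) : EReal)) →
      (∀ x : H, ((⟪ContinuousLinearMap.adjoint A q, x⟫ : ℝ) : EReal) - f x -
          ((ρ / 2 * ‖x‖ ^ 2 : ℝ) : EReal) ≤
        ((⟪ContinuousLinearMap.adjoint A q, xfq⟫ : ℝ) : EReal) - f xfq -
          ((ρ / 2 * ‖xfq‖ ^ 2 : ℝ) : EReal)) →
      (∀ x : EuclideanSpace ℝ (Fin m),
        ((⟪p, xgp⟫ : ℝ) : EReal) + g xgp ≤ ((⟪p, x⟫ : ℝ) : EReal) + g x) →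
      (∀ x : EuclideanSpace ℝ (Fin m),
        ((⟪q, xgq⟫ : ℝ) : EReal) + g xgq ≤ ((⟪q, x⟫ : ℝ) : EReal) + g x) →
      ‖(A xfp - xgp + κ • p) - (A xfq - xgq + κ • q)‖ ≤
        (‖A‖ ^ 2 / ρ + 1 / μ + κ) * ‖p - q‖) := by
  classical
  set Bg : EuclideanSpace ℝ (Fin m) →L[ℝ] EuclideanSpace ℝ (Fin m) :=
    -(ContinuousLinearMap.id ℝ (EuclideanSpace ℝ (Fin m))) with hBg
  set gf : EuclideanSpace ℝ (Fin m) → EReal :=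
    fun x => g x - ((μ / 2 * ‖x‖ ^ 2 : ℝ) : EReal) with hgf
  have hBgapp : ∀ x : EuclideanSpace ℝ (Fin m), Bg x = -x := fun x => rfl
  have hGeq : ∀ (p x : EuclideanSpace ℝ (Fin m)),
      PhiE Bg gf μ p x = ((⟪-p, x⟫ : ℝ) : EReal) - g x := by
    intro p x
    have hinner : ⟪(ContinuousLinearMap.adjoint Bg) p, x⟫ = ⟪-p, x⟫ := by
      rw [ContinuousLinearMap.adjoint_inner_left, hBgapp, inner_neg_left, inner_neg_right]
    rw [PhiE, hinner, show gf x = g x - ((μ / 2 * ‖x‖ ^ 2 : ℝ) : EReal) from rfl]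
    rcases eq_or_ne (g x) ⊤ with ht | ht
    · rw [ht, EReal.top_sub_coe, EReal.sub_top, EReal.bot_sub]
    · obtain ⟨r, hr⟩ := er_exists_real (hg_proper_bot x) ht
      rw [hr, ← EReal.coe_sub, ← EReal.coe_sub, ← EReal.coe_sub, ← EReal.coe_sub]
      exact EReal.coe_eq_coe_iff.mpr (by ring)
  have hgfbot : ∀ x, gf x ≠ ⊥ := fun x => er_sub_ne_bot (hg_proper_bot x) _
  have hgfconv : ∀ x y : EuclideanSpace ℝ (Fin m), ∀ a b : ℝ, 0 ≤ a → 0 ≤ b → a + b = 1 →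
      gf (a • x + b • y) ≤ (a : EReal) * gf x + (b : EReal) * gf y :=
    fun x y a b ha hb hab => hg_strconv x y a b ha hb hab
  have hgflsc : LowerSemicontinuous gf :=
    lsc_sub_continuous hg_lsc hg_proper_bot
      (continuous_const.mul ((continuous_norm).pow 2))
  -- finiteness of the two suprema
  have hfin : ∀ p : EuclideanSpace ℝ (Fin m), ∃ uu vv : ℝ,
      (⨆ x, PhiE A f ρ p x) = (uu : EReal) ∧
      (⨆ x, PhiE Bg gf μ p x) = (vv : EReal) ∧
      Θ p = uu + vv + κ / 2 * ‖p‖ ^ 2 := by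
    intro p
    have hT := hΘ p
    have hgsup : (⨆ x : EuclideanSpace ℝ (Fin m), ((⟪-p, x⟫ : ℝ) : EReal) - g x)
        = ⨆ x, PhiE Bg gf μ p x := iSup_congr fun x => (hGeq p x).symm
    rw [hgsup] at hT
    have hfsup : (⨆ x : H, ((⟪ContinuousLinearMap.adjoint A p, x⟫ : ℝ) : EReal) - f x -
        ((ρ / 2 * ‖x‖ ^ 2 : ℝ) : EReal)) = ⨆ x, PhiE A f ρ p x := rfl
    rw [hfsup] at hT
    obtain ⟨x₀, hx₀⟩ := hf_proper_top
    obtain ⟨r₀, hr₀⟩ := er_exists_real (hf_proper_bot x₀) hx₀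
    have hSfbot : (⨆ x, PhiE A f ρ p x) ≠ ⊥ := by
      intro hb
      have hwit : PhiE A f ρ p x₀ ≤ ⨆ x, PhiE A f ρ p x := le_iSup _ x₀
      rw [hb, le_bot_iff, PhiE_of_real hr₀] at hwit
      exact EReal.coe_ne_bot _ hwit
    obtain ⟨y₀, hy₀⟩ := hg_proper_top
    have hgfy₀ : gf y₀ ≠ ⊤ := by
      obtain ⟨s₀, hs₀⟩ := er_exists_real (hg_proper_bot y₀) hy₀
      rw [show gf y₀ = g y₀ - ((μ / 2 * ‖y₀‖ ^ 2 : ℝ) : EReal) from rfl, hs₀, ← EReal.coe_sub]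
      exact EReal.coe_ne_top _
    obtain ⟨s₀', hs₀'⟩ := er_exists_real (hgfbot y₀) hgfy₀
    have hSgbot : (⨆ x, PhiE Bg gf μ p x) ≠ ⊥ := by
      intro hb
      have hwit : PhiE Bg gf μ p y₀ ≤ ⨆ x, PhiE Bg gf μ p x := le_iSup _ y₀
      rw [hb, le_bot_iff, PhiE_of_real hs₀'] at hwit
      exact EReal.coe_ne_bot _ hwit
    have hSftop : (⨆ x, PhiE A f ρ p x) ≠ ⊤ := by
      intro ht
      rw [ht, EReal.top_add_of_ne_bot hSgbot,
        EReal.top_add_of_ne_bot (EReal.coe_ne_bot _)] at hT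
      exact EReal.coe_ne_top _ hT
    have hSgtop : (⨆ x, PhiE Bg gf μ p x) ≠ ⊤ := by
      intro ht
      rw [ht, EReal.add_top_of_ne_bot hSfbot,
        EReal.top_add_of_ne_bot (EReal.coe_ne_bot _)] at hT
      exact EReal.coe_ne_top _ hT
    obtain ⟨uu, huu⟩ := er_exists_real hSfbot hSftop
    obtain ⟨vv, hvv⟩ := er_exists_real hSgbot hSgtop
    refine ⟨uu, vv, huu, hvv, ?_⟩
    rw [huu, hvv, ← EReal.coe_add, ← EReal.coe_add] at hT
    exact EReal.coe_eq_coe_iff.mp hT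
  choose u v h1 h2 h3 using hfin
  -- translate the raw g-minimizer hypothesis into PhiE form
  have hg_trans : ∀ (p xg : EuclideanSpace ℝ (Fin m)),
      (∀ x, ((⟪p, xg⟫ : ℝ) : EReal) + g xg ≤ ((⟪p, x⟫ : ℝ) : EReal) + g x) →
      ∀ x, PhiE Bg gf μ p x ≤ PhiE Bg gf μ p xg := by
    intro p xg hmin
    obtain ⟨y₀, hy₀⟩ := hg_proper_top
    obtain ⟨s₀, hs₀⟩ := er_exists_real (hg_proper_bot y₀) hy₀
    have hgxgtop : g xg ≠ ⊤ := by
      intro ht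
      have hw := hmin y₀
      rw [ht, hs₀, EReal.add_top_of_ne_bot (EReal.coe_ne_bot _), ← EReal.coe_add] at hw
      exact EReal.coe_ne_top _ (top_le_iff.mp hw)
    obtain ⟨rg, hrg⟩ := er_exists_real (hg_proper_bot xg) hgxgtop
    intro x
    rw [hGeq, hGeq, hrg]
    rcases eq_or_ne (g x) ⊤ with ht | ht
    · rw [ht, EReal.sub_top]
      exact bot_le
    · obtain ⟨rx, hrx⟩ := er_exists_real (hg_proper_bot x) ht
      have hw := hmin x
      rw [hrg, hrx, ← EReal.coe_add, ← EReal.coe_add, EReal.coe_le_coe_iff] at hw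
      rw [hrx, ← EReal.coe_sub, ← EReal.coe_sub, EReal.coe_le_coe_iff]
      have hip1 : ⟪-p, x⟫ = -⟪p, x⟫ := inner_neg_left p x
      have hip2 : ⟪-p, xg⟫ = -⟪p, xg⟫ := inner_neg_left p xg
      rw [hip1, hip2]
      linarith
  -- core Lipschitz bound for the gradient selections
  set L : ℝ := ‖A‖ ^ 2 / ρ + 1 / μ + κ with hLdef
  have hL : 0 < L := by positivity
  have c4core : ∀ (p q : EuclideanSpace ℝ (Fin m)) (xfp xfq : H)
      (xgp xgq : EuclideanSpace ℝ (Fin m)),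
      (∀ x, PhiE A f ρ p x ≤ PhiE A f ρ p xfp) →
      (∀ x, PhiE A f ρ q x ≤ PhiE A f ρ q xfq) →
      (∀ x, PhiE Bg gf μ p x ≤ PhiE Bg gf μ p xgp) →
      (∀ x, PhiE Bg gf μ q x ≤ PhiE Bg gf μ q xgq) →
      ‖(A xfp - xgp + κ • p) - (A xfq - xgq + κ • q)‖ ≤ L * ‖p - q‖ := by
    intro p q xfp xfq xgp xgq hf1 hf2 hgg1 hgg2
    have lf := phi_lip hρ hf_proper_bot hf_convex (h1 p) (h1 q) hf1 hf2
    have lg := phi_lip hμ hgfbot hgfconv (h2 p) (h2 q) hgg1 hgg2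
    have hBgnorm : ‖Bg‖ ≤ 1 := by
      rw [hBg, norm_neg]
      exact ContinuousLinearMap.norm_id_le
    have lg' : μ * ‖xgp - xgq‖ ≤ ‖p - q‖ := by
      refine lg.trans ?_
      nlinarith [norm_nonneg (p - q), hBgnorm]
    have hsplit : (A xfp - xgp + κ • p) - (A xfq - xgq + κ • q)
        = (A xfp - A xfq) + (xgq - xgp) + κ • (p - q) := by
      rw [smul_sub]
      abel
    rw [hsplit]
    have t1 : ‖A xfp - A xfq‖ ≤ ‖A‖ * ‖xfp - xfq‖ := by
      rw [← map_sub]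
      exact A.le_opNorm _
    have t2 : ‖xgq - xgp‖ = ‖xgp - xgq‖ := norm_sub_rev _ _
    have t3 : ‖κ • (p - q)‖ = κ * ‖p - q‖ := by
      rw [norm_smul, Real.norm_eq_abs, abs_of_pos hκ]
    have u0 : ‖xfp - xfq‖ ≤ ‖A‖ * ‖p - q‖ / ρ := by
      rw [le_div_iff₀ hρ]
      linarith [lf]
    have u1 : ‖A‖ * ‖xfp - xfq‖ ≤ ‖A‖ ^ 2 / ρ * ‖p - q‖ := by
      have hmul := mul_le_mul_of_nonneg_left u0 (norm_nonneg A)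
      calc ‖A‖ * ‖xfp - xfq‖ ≤ ‖A‖ * (‖A‖ * ‖p - q‖ / ρ) := hmul
      _ = ‖A‖ ^ 2 / ρ * ‖p - q‖ := by ring
    have u2 : ‖xgp - xgq‖ ≤ 1 / μ * ‖p - q‖ := by
      rw [div_mul_eq_mul_div, le_div_iff₀ hμ]
      linarith [lg']
    calc ‖(A xfp - A xfq) + (xgq - xgp) + κ • (p - q)‖
        ≤ ‖A xfp - A xfq‖ + ‖xgq - xgp‖ + ‖κ • (p - q)‖ := norm_add₃_le
    _ ≤ ‖A‖ * ‖xfp - xfq‖ + ‖xgp - xgq‖ + κ * ‖p - q‖ := by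
        rw [t2, t3]
        linarith [t1]
    _ ≤ L * ‖p - q‖ := by
        have hLe : L * ‖p - q‖ =
            ‖A‖ ^ 2 / ρ * ‖p - q‖ + 1 / μ * ‖p - q‖ + κ * ‖p - q‖ := by
          rw [hLdef]; ring
        rw [hLe]
        linarith [u1, u2]
  -- subgradient inequality for Θ
  have hsub : ∀ (p q : EuclideanSpace ℝ (Fin m)) (xf : H) (xg : EuclideanSpace ℝ (Fin m)),
      (∀ x, PhiE A f ρ p x ≤ PhiE A f ρ p xf) →
      (∀ x, PhiE Bg gf μ p x ≤ PhiE Bg gf μ p xg) →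
      Θ p + ⟪q - p, A xf - xg + κ • p⟫ + κ / 2 * ‖q - p‖ ^ 2 ≤ Θ q := by
    intro p q xf xg hxf hxg
    have s1 : u p + ⟪q - p, A xf⟫ ≤ u q :=
      phi_subgrad hf_proper_bot (h1 p) (h1 q) hxf
    have s2 : v p + ⟪q - p, Bg xg⟫ ≤ v q :=
      phi_subgrad hgfbot (h2 p) (h2 q) hxg
    rw [hBgapp] at s2
    have hnorm : ‖q - p‖ ^ 2 = ‖q‖ ^ 2 - 2 * ⟪q, p⟫ + ‖p‖ ^ 2 := norm_sub_sq_real q p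
    have hqp : ⟪q - p, κ • p⟫ = κ * (⟪q, p⟫ - ⟪p, p⟫) := by
      rw [real_inner_smul_right, inner_sub_left]
    have hpp : ⟪p, p⟫ = ‖p‖ ^ 2 := real_inner_self_eq_norm_sq p
    have s3 : κ / 2 * ‖q‖ ^ 2 = κ / 2 * ‖p‖ ^ 2 + ⟪q - p, κ • p⟫ + κ / 2 * ‖q - p‖ ^ 2 := by
      rw [hqp, hpp, hnorm]
      ring
    have hip : ⟪q - p, A xf - xg + κ • p⟫ =
        ⟪q - p, A xf⟫ + ⟪q - p, -xg⟫ + ⟪q - p, κ • p⟫ := by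
      rw [inner_add_right, inner_sub_right, inner_neg_right]
      ring
    rw [h3 p, h3 q, hip]
    linarith [s1, s2, s3]
  -- gradient
  have grad_main : ∀ (p : EuclideanSpace ℝ (Fin m)) (xf : H) (xg : EuclideanSpace ℝ (Fin m)),
      (∀ x, PhiE A f ρ p x ≤ PhiE A f ρ p xf) →
      (∀ x, PhiE Bg gf μ p x ≤ PhiE Bg gf μ p xg) →
      HasGradientAt Θ (A xf - xg + κ • p) p := by
    intro p xf xg hxf hxg
    rw [hasGradientAt_iff_isLittleO, Asymptotics.isLittleO_iff]
    intro ε hε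
    have hmem := Metric.ball_mem_nhds p (div_pos hε hL)
    filter_upwards [hmem] with q hq
    obtain ⟨xfq, hxfq⟩ := phi_exists_max hρ hf_proper_bot hf_convex hf_lsc (h1 q)
    obtain ⟨xgq, hxgq⟩ := phi_exists_max hμ hgfbot hgfconv hgflsc (h2 q)
    have low := hsub p q xf xg hxf hxg
    have high := hsub q p xfq xgq hxfq hxgq
    have hsq : ‖(A xfq - xgq + κ • q) - (A xf - xg + κ • p)‖ ≤ L * ‖q - p‖ :=
      c4core q p xfq xf xgq xg hxfq hxf hxgq hxg
    have hcomm : ⟪A xf - xg + κ • p, q - p⟫ = ⟪q - p, A xf - xg + κ • p⟫ :=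
      real_inner_comm _ _
    have hi : ⟪q - p, (A xfq - xgq + κ • q) - (A xf - xg + κ • p)⟫ ≤
        ‖q - p‖ * (L * ‖q - p‖) :=
      (real_inner_le_norm _ _).trans (mul_le_mul_of_nonneg_left hsq (norm_nonneg _))
    rw [inner_sub_right] at hi
    have hpq : ⟪p - q, A xfq - xgq + κ • q⟫ = -⟪q - p, A xfq - xgq + κ • q⟫ := by
      rw [← inner_neg_left, neg_sub]
    rw [hpq] at high
    have hnn : ‖p - q‖ = ‖q - p‖ := norm_sub_rev _ _
    rw [hnn] at high
    have habs : |Θ q - Θ p - ⟪A xf - xg + κ • p, q - p⟫| ≤ L * ‖q - p‖ * ‖q - p‖ := by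
      rw [hcomm, abs_le]
      constructor
      · nlinarith [low, sq_nonneg ‖q - p‖, hκ, mul_nonneg (mul_nonneg hL.le (norm_nonneg (q - p))) (norm_nonneg (q - p))]
      · nlinarith [high, hi, sq_nonneg ‖q - p‖, hκ]
    have hd : ‖q - p‖ < ε / L := by
      rw [← dist_eq_norm]
      exact hq
    rw [Real.norm_eq_abs]
    have hrhs : ‖q - p‖ * L ≤ ε := by
      rw [← le_div_iff₀ hL]
      exact hd.le
    calc |Θ q - Θ p - ⟪A xf - xg + κ • p, q - p⟫| ≤ L * ‖q - p‖ * ‖q - p‖ := habs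
    _ ≤ ε * ‖q - p‖ := by nlinarith [norm_nonneg (q - p), hrhs]
    _ = ε * ‖(fun x' => x' - p) q‖ := by norm_num
  -- conjunct 1
  have c1 : StrongConvexOn Set.univ κ Θ := by
    refine ⟨convex_univ, fun x _ y _ a b ha hb hab => ?_⟩
    have hu := phi_combo hf_proper_bot ha hb hab (h1 x) (h1 y) (h1 (a • x + b • y))
    have hv := phi_combo hgfbot ha hb hab (h2 x) (h2 y) (h2 (a • x + b • y))
    have hn : κ / 2 * ‖a • x + b • y‖ ^ 2 =
        κ / 2 * (a * ‖x‖ ^ 2 + b * ‖y‖ ^ 2 - a * b * ‖x - y‖ ^ 2) := by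
      rw [norm_combo_sq hab]
    rw [h3 (a • x + b • y), h3 x, h3 y, smul_eq_mul, smul_eq_mul]
    nlinarith [hu, hv, hn]
  -- continuity
  have hcont : Continuous Θ := by
    rw [continuous_iff_continuousAt]
    intro p
    obtain ⟨xf, hxf⟩ := phi_exists_max hρ hf_proper_bot hf_convex hf_lsc (h1 p)
    obtain ⟨xg, hxg⟩ := phi_exists_max hμ hgfbot hgfconv hgflsc (h2 p)
    exact (grad_main p xf xg hxf hxg).continuousAt
  -- conjunct 2
  have c2 : ∃! p₀ : EuclideanSpace ℝ (Fin m), ∀ p, Θ p₀ ≤ Θ p := by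
    obtain ⟨xf0, hxf0⟩ := phi_exists_max hρ hf_proper_bot hf_convex hf_lsc (h1 0)
    obtain ⟨xg0, hxg0⟩ := phi_exists_max hμ hgfbot hgfconv hgflsc (h2 0)
    set s0 : EuclideanSpace ℝ (Fin m) := A xf0 - xg0 + κ • (0 : EuclideanSpace ℝ (Fin m))
      with hs0
    set R : ℝ := 1 + 2 * ‖s0‖ / κ with hRdef
    have hR0 : 0 < R := by positivity
    have hcomp : IsCompact (Metric.closedBall (0 : EuclideanSpace ℝ (Fin m)) R) :=
      isCompact_closedBall _ _
    obtain ⟨p₀, hp₀mem, hp₀min⟩ := hcomp.exists_isMinOn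
      ⟨0, Metric.mem_closedBall_self hR0.le⟩ hcont.continuousOn
    have hglobal : ∀ p, Θ p₀ ≤ Θ p := by
      intro p
      by_cases hp : p ∈ Metric.closedBall (0 : EuclideanSpace ℝ (Fin m)) R
      · exact hp₀min hp
      · have h0le : Θ p₀ ≤ Θ 0 := hp₀min (Metric.mem_closedBall_self hR0.le)
        have hout : R < ‖p‖ := by
          rw [Metric.mem_closedBall, dist_zero_right] at hp
          linarith [not_le.mp hp]
        have hsubp := hsub 0 p xf0 xg0 hxf0 hxg0
        rw [sub_zero] at hsubp
        have hip : -(‖p‖ * ‖s0‖) ≤ ⟪p, s0⟫ := by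
          have habs := abs_real_inner_le_norm p s0
          linarith [neg_abs_le ⟪p, s0⟫]
        rw [hRdef] at hout
        have hp1 : 1 < ‖p‖ := by
          have hnn : (0:ℝ) ≤ 2 * ‖s0‖ / κ := by positivity
          linarith
        have h5 : κ / 2 + ‖s0‖ < κ / 2 * ‖p‖ := by
          have h6 := mul_lt_mul_of_pos_left hout (by positivity : (0:ℝ) < κ / 2)
          have hcanc : κ / 2 * (1 + 2 * ‖s0‖ / κ) = κ / 2 + ‖s0‖ := by
            field_simp
          linarith [h6, hcanc]
        have h8 : κ / 2 < κ / 2 * ‖p‖ ^ 2 - ‖s0‖ * ‖p‖ := by nlinarith [h5, hp1]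
        have hlt : Θ 0 < Θ p := by nlinarith [hsubp, hip, h8, hκ]
        linarith
    refine ⟨p₀, hglobal, fun y hy => ?_⟩
    by_contra hne
    have hmid := c1.2 (Set.mem_univ y) (Set.mem_univ p₀)
      (by norm_num : (0:ℝ) ≤ 1/2) (by norm_num : (0:ℝ) ≤ 1/2) (by norm_num)
    have hm1 := hglobal ((1/2 : ℝ) • y + (1/2 : ℝ) • p₀)
    have hm2 := hy p₀
    have hm3 := hglobal y
    have hyne : 0 < ‖y - p₀‖ := by
      rw [norm_pos_iff, sub_ne_zero]
      exact hne
    rw [smul_eq_mul, smul_eq_mul] at hmid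
    nlinarith [hmid, hm1, hm2, hm3, mul_pos hκ (mul_pos hyne hyne), hκ]
  -- conjunct 3
  have c3 : ∀ (p : EuclideanSpace ℝ (Fin m)) (xf : H) (xg : EuclideanSpace ℝ (Fin m)),
      (∀ x : H, ((⟪ContinuousLinearMap.adjoint A p, x⟫ : ℝ) : EReal) - f x -
          ((ρ / 2 * ‖x‖ ^ 2 : ℝ) : EReal) ≤
        ((⟪ContinuousLinearMap.adjoint A p, xf⟫ : ℝ) : EReal) - f xf -
          ((ρ / 2 * ‖xf‖ ^ 2 : ℝ) : EReal)) →
      (∀ x : EuclideanSpace ℝ (Fin m),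
        ((⟪p, xg⟫ : ℝ) : EReal) + g xg ≤ ((⟪p, x⟫ : ℝ) : EReal) + g x) →
      HasGradientAt Θ (A xf - xg + κ • p) p := by
    intro p xf xg hxf hxg
    exact grad_main p xf xg hxf (hg_trans p xg hxg)
  refine ⟨c1, c2, c3, ?_⟩
  intro p q xfp xfq xgp xgq hf1 hf2 hgg1 hgg2
  exact c4core p q xfp xfq xgp xgq hf1 hf2 (hg_trans p xgp hgg1) (hg_trans q xgq hgg2)
end

section
/- Let F: ℝ^m → ℝ be convex, κ, L > 0, set F_κ(p) = F(p) + (κ/2)‖p‖², and let p̂ be a minimizer of F_κ. Suppose (p_k)_{k ≥ 0} ⊆ ℝ^m with p_0 = 0 satisfies, for all k ≥ 0: (i) F_κ(p_k) − F_κ(p̂) ≤ ( F_κ(0) − F_κ(p̂) + (κ/2)‖p̂‖² ) e^{−k√(κ/L)} and (ii) ‖p_k − p̂‖ ≤ ‖p̂‖. Then for all k ≥ 0 one has F(p_k) − F(p̂) ≤ (25/8)( F(0) − F(p̂) ) e^{−(k/2)√(κ/L)}. -/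
open RealInnerProductSpace

set_option maxHeartbeats 1000000

/-- Let `F : ℝ^m → ℝ` be convex, `κ, L > 0`, set `F_κ(p) = F(p) + (κ/2)‖p‖²`,
and let `phat` be a minimizer of `F_κ`. Suppose `(p_k)` with `p_0 = 0` satisfies, for all `k`:
(i) `F_κ(p_k) − F_κ(phat) ≤ (F_κ(0) − F_κ(phat) + (κ/2)‖phat‖²) e^{−k√(κ/L)}` and
(ii) `‖p_k − phat‖ ≤ ‖phat‖`. Then for all `k`:
`F(p_k) − F(phat) ≤ (25/8)(F(0) − F(phat)) e^{−(k/2)√(κ/L)}`. -/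
theorem fast_gradient_unregularized_objective_decrease
    {m : ℕ} (F : EuclideanSpace ℝ (Fin m) → ℝ)
    (hF : ConvexOn ℝ Set.univ F)
    (κ L : ℝ) (hκ : 0 < κ) (hL : 0 < L)
    (phat : EuclideanSpace ℝ (Fin m))
    (hmin : ∀ q : EuclideanSpace ℝ (Fin m),
      F phat + κ / 2 * ‖phat‖ ^ 2 ≤ F q + κ / 2 * ‖q‖ ^ 2)
    (p : ℕ → EuclideanSpace ℝ (Fin m)) (hp0 : p 0 = 0)
    (hi : ∀ k : ℕ,
      (F (p k) + κ / 2 * ‖p k‖ ^ 2) - (F phat + κ / 2 * ‖phat‖ ^ 2) ≤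
        ((F 0 + κ / 2 * ‖(0 : EuclideanSpace ℝ (Fin m))‖ ^ 2) -
          (F phat + κ / 2 * ‖phat‖ ^ 2) + κ / 2 * ‖phat‖ ^ 2) *
          Real.exp (-(k : ℝ) * Real.sqrt (κ / L)))
    (hii : ∀ k : ℕ, ‖p k - phat‖ ≤ ‖phat‖) :
    ∀ k : ℕ, F (p k) - F phat ≤
      25 / 8 * (F 0 - F phat) * Real.exp (-((k : ℝ) / 2) * Real.sqrt (κ / L)) := by
  intro k
  set s : ℝ := Real.sqrt (κ / L) with hsdef
  have hs0 : (0:ℝ) ≤ s := Real.sqrt_nonneg _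
  -- quadratic growth at the minimizer
  have key : ∀ q : EuclideanSpace ℝ (Fin m),
      κ / 2 * ‖q - phat‖ ^ 2 ≤ (F q + κ / 2 * ‖q‖ ^ 2) - (F phat + κ / 2 * ‖phat‖ ^ 2) := by
    intro q
    have hX0 : (0:ℝ) ≤ ‖q - phat‖ ^ 2 := sq_nonneg _
    have h1 : ∀ t : ℝ, 0 < t → t ≤ 1 →
        κ / 2 * ((1 - t) * ‖q - phat‖ ^ 2) ≤
          (F q + κ / 2 * ‖q‖ ^ 2) - (F phat + κ / 2 * ‖phat‖ ^ 2) := by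
      intro t ht0 ht1
      have ht1' : (0:ℝ) ≤ 1 - t := by linarith
      have hconv := hF.2 (Set.mem_univ phat) (Set.mem_univ q) ht1' ht0.le (by ring)
      simp only [smul_eq_mul] at hconv
      have hnorm : ‖(1 - t) • phat + t • q‖ ^ 2
          = (1 - t) * ‖phat‖ ^ 2 + t * ‖q‖ ^ 2 - t * (1 - t) * ‖q - phat‖ ^ 2 := by
        have e1 := norm_add_sq_real ((1 - t) • phat) (t • q)
        have e2 := norm_sub_sq_real q phat
        have i1 : (inner ℝ ((1 - t) • phat) (t • q) : ℝ)
            = (1 - t) * (t * (inner ℝ phat q : ℝ)) := by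
          rw [real_inner_smul_left, real_inner_smul_right]
        have i2 : (inner ℝ q phat : ℝ) = inner ℝ phat q := real_inner_comm phat q
        have n1 : ‖(1 - t) • phat‖ = (1 - t) * ‖phat‖ := by
          rw [norm_smul, Real.norm_eq_abs, abs_of_nonneg ht1']
        have n2 : ‖t • q‖ = t * ‖q‖ := by
          rw [norm_smul, Real.norm_eq_abs, abs_of_nonneg ht0.le]
        rw [e1, i1, n1, n2, e2, i2]
        ring
      have hmin' := hmin ((1 - t) • phat + t • q)
      nlinarith [hconv, hmin', hnorm, ht0, hX0, mul_pos ht0 ht0]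
    rcases (hX0.eq_or_lt.imp Eq.symm id) with h0 | hpos
    · have h11 := h1 1 one_pos le_rfl
      rw [h0]
      simpa using h11
    · apply le_of_forall_pos_le_add
      intro ε hε
      have hκX : 0 < κ / 2 * ‖q - phat‖ ^ 2 := by positivity
      set t : ℝ := min 1 (ε / (κ / 2 * ‖q - phat‖ ^ 2)) with htdef
      have ht0 : 0 < t := lt_min one_pos (div_pos hε hκX)
      have ht1 : t ≤ 1 := min_le_left _ _
      have h2 := h1 t ht0 ht1
      have h3 : κ / 2 * (t * ‖q - phat‖ ^ 2) ≤ ε := by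
        have htle : t ≤ ε / (κ / 2 * ‖q - phat‖ ^ 2) := min_le_right _ _
        calc κ / 2 * (t * ‖q - phat‖ ^ 2) = t * (κ / 2 * ‖q - phat‖ ^ 2) := by ring
          _ ≤ (ε / (κ / 2 * ‖q - phat‖ ^ 2)) * (κ / 2 * ‖q - phat‖ ^ 2) :=
              mul_le_mul_of_nonneg_right htle hκX.le
          _ = ε := div_mul_cancel₀ _ hκX.ne'
      have hsplit : κ / 2 * ‖q - phat‖ ^ 2
          = κ / 2 * ((1 - t) * ‖q - phat‖ ^ 2) + κ / 2 * (t * ‖q - phat‖ ^ 2) := by ring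
      linarith
  have hnorm0 : ‖(0 : EuclideanSpace ℝ (Fin m))‖ = 0 := norm_zero
  set D : ℝ := F 0 - F phat with hD
  have hphat : κ * ‖phat‖ ^ 2 ≤ D := by
    have h := key 0
    have hzs : ‖(0:EuclideanSpace ℝ (Fin m)) - phat‖ = ‖phat‖ := by
      rw [zero_sub, norm_neg]
    rw [hzs, hnorm0] at h
    nlinarith [h]
  have hD0 : 0 ≤ D := le_trans (by positivity) hphat
  set E : ℝ := Real.exp (-((k:ℝ)/2) * s) with hE
  have hE0 : 0 < E := Real.exp_pos _
  have hE1 : E ≤ 1 := by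
    rw [hE]
    apply Real.exp_le_one_iff.mpr
    have : (0:ℝ) ≤ (k:ℝ)/2 := by positivity
    nlinarith
  have hexpE : Real.exp (-(k:ℝ) * s) = E * E := by
    rw [hE, ← Real.exp_add]
    congr 1
    ring
  have hik := hi k
  have hbr : (F 0 + κ / 2 * ‖(0 : EuclideanSpace ℝ (Fin m))‖ ^ 2) -
      (F phat + κ / 2 * ‖phat‖ ^ 2) + κ / 2 * ‖phat‖ ^ 2 = D := by
    rw [hnorm0, hD]; ring
  rw [hbr, hexpE] at hik
  have hr2 : κ / 2 * ‖p k - phat‖ ^ 2 ≤ D * (E * E) := (key (p k)).trans hik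
  have ha0 : (0:ℝ) ≤ ‖phat‖ := norm_nonneg _
  have hb0 : (0:ℝ) ≤ ‖p k‖ := norm_nonneg _
  have hr0 : (0:ℝ) ≤ ‖p k - phat‖ := norm_nonneg _
  have hra : ‖p k - phat‖ ≤ ‖phat‖ := hii k
  have habr : ‖phat‖ - ‖p k‖ ≤ ‖p k - phat‖ := by
    have := norm_sub_norm_le phat (p k)
    rwa [norm_sub_rev] at this
  have hble : ‖p k‖ ≤ ‖phat‖ + ‖p k - phat‖ := by
    have := norm_add_le (p k - phat) phat
    simpa [sub_add_cancel, add_comm] using this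
  -- κ a r ≤ √2 D E, in squared form
  have hsq : (κ * ‖phat‖ * ‖p k - phat‖) ^ 2 ≤ (17 / 12 * (D * E)) ^ 2 := by
    have hmul := mul_le_mul hphat hr2 (by positivity) hD0
    nlinarith [hmul, sq_nonneg (D * E)]
  have h17 : κ * ‖phat‖ * ‖p k - phat‖ ≤ 17 / 12 * (D * E) := by
    have hx0 : 0 ≤ κ * ‖phat‖ * ‖p k - phat‖ := by positivity
    have hy0 : (0:ℝ) ≤ 17 / 12 * (D * E) := by positivity
    exact (pow_le_pow_iff_left₀ hx0 hy0 two_ne_zero).mp hsq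
  -- put it together
  have hmain : F (p k) - F phat ≤ D * (E * E) + κ / 2 * (‖phat‖ ^ 2 - ‖p k‖ ^ 2) := by
    linarith
  have hstep1 : κ / 2 * (‖phat‖ ^ 2 - ‖p k‖ ^ 2) ≤ 3 / 2 * (κ * ‖phat‖ * ‖p k - phat‖) := by
    have hint1 : κ * ((‖phat‖ - ‖p k‖) * (‖phat‖ + ‖p k‖)) ≤
        κ * (‖p k - phat‖ * (‖phat‖ + ‖p k‖)) :=
      mul_le_mul_of_nonneg_left
        (mul_le_mul_of_nonneg_right habr (add_nonneg ha0 hb0)) hκ.le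
    have hint2 : κ * (‖p k - phat‖ * ‖p k‖) ≤
        κ * (‖p k - phat‖ * (‖phat‖ + ‖p k - phat‖)) :=
      mul_le_mul_of_nonneg_left (mul_le_mul_of_nonneg_left hble hr0) hκ.le
    have hint3 : κ * (‖p k - phat‖ * ‖p k - phat‖) ≤ κ * (‖p k - phat‖ * ‖phat‖) :=
      mul_le_mul_of_nonneg_left (mul_le_mul_of_nonneg_left hra hr0) hκ.le
    nlinarith [hint1, hint2, hint3]
  have hEE : D * (E * E) ≤ D * E := by
    have := mul_le_mul_of_nonneg_left hE1 (mul_nonneg hD0 hE0.le)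
    nlinarith [this]
  calc F (p k) - F phat ≤ D * (E * E) + κ / 2 * (‖phat‖ ^ 2 - ‖p k‖ ^ 2) := hmain
    _ ≤ D * E + 3 / 2 * (17 / 12 * (D * E)) := by nlinarith [hEE, hstep1, h17]
    _ = 25 / 8 * D * E := by ring
end

section
/- Let θ, θ_ρ: ℝ^m → ℝ with θ_ρ convex satisfy θ_ρ(p) ≤ θ(p) ≤ θ_ρ(p) + ρ D_f for all p ∈ ℝ^m, where ρ > 0 and D_f ≥ 0. Let κ, L > 0, set θ_{ρ,κ}(p) = θ_ρ(p) + (κ/2)‖p‖², let p̂ be a minimizer of θ_{ρ,κ}, and let p* be a minimizer of θ with ‖p*‖ ≤ R. Suppose (p_k)_{k ≥ 0} ⊆ ℝ^m with p_0 = 0 satisfies, for all k ≥ 0: (i) θ_{ρ,κ}(p_k) − θ_{ρ,κ}(p̂) ≤ ( θ_{ρ,κ}(0) − θ_{ρ,κ}(p̂) + (κ/2)‖p̂‖² ) e^{−k√(κ/L)} and (ii) ‖p_k − p̂‖ ≤ ‖p̂‖. Then for all k ≥ 0: θ(p_k) − θ(p*) ≤ ρ D_f + (κ/2) R² + (25/8)(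 θ(0) − θ(p*) + ρ D_f ) e^{−(k/2)√(κ/L)}. -/
/-- Let `θ, θ_ρ : ℝ^m → ℝ` with `θ_ρ` convex satisfy
`θ_ρ(p) ≤ θ(p) ≤ θ_ρ(p) + ρ D_f` for all `p`, where `ρ > 0` and `D_f ≥ 0`. Let `κ, L > 0`,
set `θ_{ρ,κ}(p) = θ_ρ(p) + (κ/2)‖p‖²`, let `phat` be a minimizer of `θ_{ρ,κ}`, and let
`pstar` be a minimizer of `θ` with `‖pstar‖ ≤ R`. Suppose `(p_k)` with `p_0 = 0` satisfies,
for all `k`: (i) `θ_{ρ,κ}(p_k) − θ_{ρ,κ}(phat) ≤ (θ_{ρ,κ}(0) − θ_{ρ,κ}(phat) +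
(κ/2)‖phat‖²) e^{−k√(κ/L)}` and (ii) `‖p_k − phat‖ ≤ ‖phat‖`. Then for all `k`:
`θ(p_k) − θ(pstar) ≤ ρ D_f + (κ/2) R² + (25/8)(θ(0) − θ(pstar) + ρ D_f) e^{−(k/2)√(κ/L)}`. -/
theorem dual_objective_convergence_estimate
    {m : ℕ} (θ θρ : EuclideanSpace ℝ (Fin m) → ℝ)
    (hθρ_convex : ConvexOn ℝ Set.univ θρ)
    (ρ Df : ℝ) (hρ : 0 < ρ) (hDf : 0 ≤ Df)
    (hsand : ∀ p : EuclideanSpace ℝ (Fin m), θρ p ≤ θ p ∧ θ p ≤ θρ p + ρ * Df)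
    (κ L : ℝ) (hκ : 0 < κ) (hL : 0 < L)
    (phat : EuclideanSpace ℝ (Fin m))
    (hphat : ∀ q : EuclideanSpace ℝ (Fin m),
      θρ phat + κ / 2 * ‖phat‖ ^ 2 ≤ θρ q + κ / 2 * ‖q‖ ^ 2)
    (R : ℝ) (pstar : EuclideanSpace ℝ (Fin m))
    (hpstar : ∀ p : EuclideanSpace ℝ (Fin m), θ pstar ≤ θ p)
    (hR : ‖pstar‖ ≤ R)
    (p : ℕ → EuclideanSpace ℝ (Fin m)) (hp0 : p 0 = 0)
    (hi : ∀ k : ℕ,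
      (θρ (p k) + κ / 2 * ‖p k‖ ^ 2) - (θρ phat + κ / 2 * ‖phat‖ ^ 2) ≤
        ((θρ 0 + κ / 2 * ‖(0 : EuclideanSpace ℝ (Fin m))‖ ^ 2) -
          (θρ phat + κ / 2 * ‖phat‖ ^ 2) + κ / 2 * ‖phat‖ ^ 2) *
          Real.exp (-(k : ℝ) * Real.sqrt (κ / L)))
    (hii : ∀ k : ℕ, ‖p k - phat‖ ≤ ‖phat‖) :
    ∀ k : ℕ, θ (p k) - θ pstar ≤
      ρ * Df + κ / 2 * R ^ 2 +
        25 / 8 * (θ 0 - θ pstar + ρ * Df) *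
          Real.exp (-((k : ℝ) / 2) * Real.sqrt (κ / L)) := by
  intro k
  set s := Real.sqrt (κ / L) with hs
  have hsnn : 0 ≤ s := Real.sqrt_nonneg _
  have hknn : (0 : ℝ) ≤ (k : ℝ) := Nat.cast_nonneg k
  have hE1 : Real.exp (-(k : ℝ) * s) ≤ Real.exp (-((k : ℝ) / 2) * s) := by
    apply Real.exp_le_exp.mpr
    nlinarith
  have hE0 : 0 < Real.exp (-(k : ℝ) * s) := Real.exp_pos _
  have hEpos : 0 < Real.exp (-((k : ℝ) / 2) * s) := Real.exp_pos _
  have key : θρ (p k) + κ / 2 * ‖p k‖ ^ 2 - (θρ phat + κ / 2 * ‖phat‖ ^ 2) ≤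
      (θρ 0 - θρ phat) * Real.exp (-(k : ℝ) * s) := by
    have h1 := hi k
    rw [norm_zero] at h1
    have heq : ((θρ 0 + κ / 2 * (0 : ℝ) ^ 2) - (θρ phat + κ / 2 * ‖phat‖ ^ 2) +
        κ / 2 * ‖phat‖ ^ 2) * Real.exp (-(k : ℝ) * s) =
        (θρ 0 - θρ phat) * Real.exp (-(k : ℝ) * s) := by ring
    linarith [heq ▸ h1]
  have h2 := (hsand (p k)).2
  have h3 := (hsand pstar).1
  have h4 := (hsand phat).2
  have h5 := (hsand 0).1
  have hθphat : θ pstar ≤ θ phat := hpstar phat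
  have hθ0 : θ pstar ≤ θ 0 := hpstar 0
  have hΘ : θρ phat + κ / 2 * ‖phat‖ ^ 2 ≤ θρ pstar + κ / 2 * ‖pstar‖ ^ 2 := hphat pstar
  have hRsq : κ / 2 * ‖pstar‖ ^ 2 ≤ κ / 2 * R ^ 2 := by
    have h := norm_nonneg pstar
    nlinarith [mul_le_mul hR hR h (h.trans hR)]
  have hC : θρ 0 - θρ phat ≤ θ 0 - θ pstar + ρ * Df := by linarith
  have hCnn : 0 ≤ θ 0 - θ pstar + ρ * Df := by nlinarith
  have hprod : (θρ 0 - θρ phat) * Real.exp (-(k : ℝ) * s) ≤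
      (θ 0 - θ pstar + ρ * Df) * Real.exp (-((k : ℝ) / 2) * s) :=
    calc (θρ 0 - θρ phat) * Real.exp (-(k : ℝ) * s)
        ≤ (θ 0 - θ pstar + ρ * Df) * Real.exp (-(k : ℝ) * s) :=
          mul_le_mul_of_nonneg_right hC hE0.le
      _ ≤ _ := mul_le_mul_of_nonneg_left hE1 hCnn
  have hknorm : (0 : ℝ) ≤ κ / 2 * ‖p k‖ ^ 2 := by positivity
  nlinarith [mul_le_mul_of_nonneg_right hCnn hEpos.le]
end

section
/- Let φ, θ: ℝ^m → ℝ and c ≥ 0 satisfy φ(p) ≤ θ(p) ≤ φ(p) + c for all p ∈ ℝ^m, let κ > 0, let p̂ be a minimizer of p ↦ φ(p) + (κ/2)‖p‖², and let p* be a minimizer of θ. Then ‖p̂‖² ≤ ‖p*‖² + 2c/κ. -/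
/-- Let `φ, θ : ℝ^m → ℝ` and `c ≥ 0` satisfy `φ(p) ≤ θ(p) ≤ φ(p) + c` for all
`p`, let `κ > 0`, let `phat` be a minimizer of `p ↦ φ(p) + (κ/2)‖p‖²`, and let `pstar` be a
minimizer of `θ`. Then `‖phat‖² ≤ ‖pstar‖² + 2c/κ`. -/
theorem regularized_minimizer_norm_bound
    {m : ℕ} (φ θ : EuclideanSpace ℝ (Fin m) → ℝ)
    (c : ℝ) (hc : 0 ≤ c)
    (hsand : ∀ p : EuclideanSpace ℝ (Fin m), φ p ≤ θ p ∧ θ p ≤ φ p + c)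
    (κ : ℝ) (hκ : 0 < κ)
    (phat : EuclideanSpace ℝ (Fin m))
    (hphat : ∀ p : EuclideanSpace ℝ (Fin m),
      φ phat + κ / 2 * ‖phat‖ ^ 2 ≤ φ p + κ / 2 * ‖p‖ ^ 2)
    (pstar : EuclideanSpace ℝ (Fin m))
    (hpstar : ∀ p : EuclideanSpace ℝ (Fin m), θ pstar ≤ θ p) :
    ‖phat‖ ^ 2 ≤ ‖pstar‖ ^ 2 + 2 * c / κ := by
  have h1 := hphat pstar
  have h2 : φ pstar ≤ φ phat + c :=
    le_trans (hsand pstar).1 (le_trans (hpstar phat) (hsand phat).2)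
  have h3 : κ / 2 * ‖phat‖ ^ 2 ≤ κ / 2 * ‖pstar‖ ^ 2 + c := by linarith
  rw [← sub_le_iff_le_add', le_div_iff₀ hκ]
  nlinarith
end

section
/- Let θ, θ_ρ: ℝ^m → ℝ with θ_ρ convex and differentiable satisfy θ_ρ(p) ≤ θ(p) ≤ θ_ρ(p) + ρ D_f for all p ∈ ℝ^m, let ε > 0, D_f > 0, R > 0, ρ = ε/(3 D_f), κ = 2ε/(3 R²), L > 0, set θ_{ρ,κ}(p) = θ_ρ(p) + (κ/2)‖p‖², let p̂ be a minimizer of θ_{ρ,κ}, and let p* be a minimizer of θ with ‖p*‖ ≤ R. Suppose (p_k)_{k ≥ 0} ⊆ ℝ^m with p_0 = 0 satisfies, for all k ≥ 0: (i) ‖∇θ_{ρ,κ}(p_k)‖² ≤ 4L ( θ_{ρ,κ}(0) − θ_{ρ,κ}(p̂) ) e^{−k√(κ/L)} and (ii) ‖p_k − p̂‖ ≤ ‖p̂‖. Then for all k ≥ 0: ‖∇θ_ρ(p_k)‖ ≤ 2 √( L ( θ(0) − θ(p*) + ε/3 ) ) e^{−(k/2)√(κ/L)} + 4√2 ε/(3R).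 -/
set_option maxHeartbeats 1600000 in
/-- Let `θ, θ_ρ : ℝ^m → ℝ` with `θ_ρ` convex and differentiable satisfy
`θ_ρ(p) ≤ θ(p) ≤ θ_ρ(p) + ρ D_f` for all `p`, let `ε > 0`, `D_f > 0`, `R > 0`,
`ρ = ε/(3 D_f)`, `κ = 2ε/(3 R²)`, `L > 0`, set `θ_{ρ,κ}(p) = θ_ρ(p) + (κ/2)‖p‖²`, let `phat`
be a minimizer of `θ_{ρ,κ}`, and let `pstar` be a minimizer of `θ` with `‖pstar‖ ≤ R`.
Suppose `(p_k)` with `p_0 = 0` satisfies, for all `k`: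
(i) `‖∇θ_{ρ,κ}(p_k)‖² ≤ 4L (θ_{ρ,κ}(0) − θ_{ρ,κ}(phat)) e^{−k√(κ/L)}` (with
`∇θ_{ρ,κ}(p) = ∇θ_ρ(p) + κ p`) and (ii) `‖p_k − phat‖ ≤ ‖phat‖`. Then for all `k`:
`‖∇θ_ρ(p_k)‖ ≤ 2 √(L (θ(0) − θ(pstar) + ε/3)) e^{−(k/2)√(κ/L)} + 4√2 ε/(3R)`. -/
theorem gradient_norm_convergence_estimate
    {m : ℕ} (θ θρ : EuclideanSpace ℝ (Fin m) → ℝ)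
    (hθρ_convex : ConvexOn ℝ Set.univ θρ)
    (Gρ : EuclideanSpace ℝ (Fin m) → EuclideanSpace ℝ (Fin m))
    (hθρ_diff : ∀ p : EuclideanSpace ℝ (Fin m), HasGradientAt θρ (Gρ p) p)
    (ε Df R ρ κ L : ℝ) (hε : 0 < ε) (hDf : 0 < Df) (hR : 0 < R)
    (hρ : ρ = ε / (3 * Df)) (hκ : κ = 2 * ε / (3 * R ^ 2)) (hL : 0 < L)
    (hsand : ∀ p : EuclideanSpace ℝ (Fin m), θρ p ≤ θ p ∧ θ p ≤ θρ p + ρ * Df)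
    (phat : EuclideanSpace ℝ (Fin m))
    (hphat : ∀ q : EuclideanSpace ℝ (Fin m),
      θρ phat + κ / 2 * ‖phat‖ ^ 2 ≤ θρ q + κ / 2 * ‖q‖ ^ 2)
    (pstar : EuclideanSpace ℝ (Fin m))
    (hpstar : ∀ p : EuclideanSpace ℝ (Fin m), θ pstar ≤ θ p)
    (hRstar : ‖pstar‖ ≤ R)
    (p : ℕ → EuclideanSpace ℝ (Fin m)) (hp0 : p 0 = 0)
    (hi : ∀ k : ℕ,
      ‖Gρ (p k) + κ • p k‖ ^ 2 ≤
        4 * L * ((θρ 0 + κ / 2 * ‖(0 : EuclideanSpace ℝ (Fin m))‖ ^ 2) -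
          (θρ phat + κ / 2 * ‖phat‖ ^ 2)) * Real.exp (-(k : ℝ) * Real.sqrt (κ / L)))
    (hii : ∀ k : ℕ, ‖p k - phat‖ ≤ ‖phat‖) :
    ∀ k : ℕ, ‖Gρ (p k)‖ ≤
      2 * Real.sqrt (L * (θ 0 - θ pstar + ε / 3)) *
        Real.exp (-((k : ℝ) / 2) * Real.sqrt (κ / L)) +
      4 * Real.sqrt 2 * ε / (3 * R) := by

  intro k
  have hκpos : 0 < κ := by rw [hκ]; positivity
  set s := Real.sqrt (κ / L) with hs
  set E := Real.exp (-((k : ℝ) / 2) * s) with hE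
  have hEpos : 0 < E := Real.exp_pos _
  have hEsq : E ^ 2 = Real.exp (-(k : ℝ) * s) := by
    rw [hE, sq, ← Real.exp_add]; congr 1; ring
  set Δ : ℝ := (θρ 0 + κ / 2 * ‖(0 : EuclideanSpace ℝ (Fin m))‖ ^ 2) -
      (θρ phat + κ / 2 * ‖phat‖ ^ 2) with hΔ
  have hΔ0 : 0 ≤ Δ := by
    have := hphat 0
    simp only [hΔ]; linarith
  have hρDf : ρ * Df = ε / 3 := by
    rw [hρ]; field_simp
  have hB : Δ ≤ θ 0 - θ pstar + ε / 3 := by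
    have h1 := (hsand 0).1
    have h2 := (hsand phat).2
    have h3 := hpstar phat
    have h4 : 0 ≤ κ / 2 * ‖phat‖ ^ 2 := by positivity
    have h5 : ‖(0 : EuclideanSpace ℝ (Fin m))‖ = 0 := norm_zero
    simp only [hΔ, h5]
    nlinarith
  have hLΔ : Real.sqrt (L * Δ) ≤ Real.sqrt (L * (θ 0 - θ pstar + ε / 3)) := by
    apply Real.sqrt_le_sqrt
    nlinarith
  -- bound on the perturbed gradient
  have h1 : ‖Gρ (p k) + κ • p k‖ ≤ 2 * Real.sqrt (L * Δ) * E := by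
    have hb : 0 ≤ 2 * Real.sqrt (L * Δ) * E := by positivity
    have ha : Real.sqrt (L * Δ) ^ 2 = L * Δ := Real.sq_sqrt (by positivity)
    have hsq : (2 * Real.sqrt (L * Δ) * E) ^ 2 = 4 * L * Δ * Real.exp (-(k : ℝ) * s) := by
      rw [← hEsq, mul_pow, mul_pow, ha]; ring
    have hik : ‖Gρ (p k) + κ • p k‖ ^ 2 ≤ (2 * Real.sqrt (L * Δ) * E) ^ 2 := by
      rw [hsq]; exact hi k
    calc ‖Gρ (p k) + κ • p k‖ = Real.sqrt (‖Gρ (p k) + κ • p k‖ ^ 2) :=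
          (Real.sqrt_sq (norm_nonneg _)).symm
    _ ≤ Real.sqrt ((2 * Real.sqrt (L * Δ) * E) ^ 2) := Real.sqrt_le_sqrt hik
    _ = 2 * Real.sqrt (L * Δ) * E := Real.sqrt_sq hb
  -- bound on ‖phat‖
  have hκR : κ * R ^ 2 = 2 * ε / 3 := by rw [hκ]; field_simp
  have hps : ‖pstar‖ ^ 2 ≤ R ^ 2 := by nlinarith [norm_nonneg pstar]
  have hphatsq : ‖phat‖ ^ 2 ≤ 2 * R ^ 2 := by
    have h := hphat pstar
    have ha := (hsand pstar).1
    have hb := (hsand phat).2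
    have hc := hpstar phat
    have h7 : κ * ‖pstar‖ ^ 2 ≤ κ * R ^ 2 := mul_le_mul_of_nonneg_left hps hκpos.le
    have h8 : κ * ‖phat‖ ^ 2 ≤ κ * (2 * R ^ 2) := by linarith
    exact le_of_mul_le_mul_left h8 hκpos
  have hphatR : ‖phat‖ ≤ Real.sqrt 2 * R := by
    have h2R : (Real.sqrt 2 * R) ^ 2 = 2 * R ^ 2 := by
      rw [mul_pow, Real.sq_sqrt]; norm_num
    calc ‖phat‖ = Real.sqrt (‖phat‖ ^ 2) := (Real.sqrt_sq (norm_nonneg _)).symm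
    _ ≤ Real.sqrt ((Real.sqrt 2 * R) ^ 2) := Real.sqrt_le_sqrt (by rw [h2R]; exact hphatsq)
    _ = Real.sqrt 2 * R := Real.sqrt_sq (by positivity)
  have hpk : ‖p k‖ ≤ 2 * ‖phat‖ := by
    calc ‖p k‖ = ‖(p k - phat) + phat‖ := by rw [sub_add_cancel]
    _ ≤ ‖p k - phat‖ + ‖phat‖ := norm_add_le _ _
    _ ≤ 2 * ‖phat‖ := by linarith [hii k]
  have htri : ‖Gρ (p k)‖ ≤ ‖Gρ (p k) + κ • p k‖ + κ * ‖p k‖ := by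
    have heq : ‖Gρ (p k)‖ = ‖(Gρ (p k) + κ • p k) - κ • p k‖ := by
      rw [add_sub_cancel_right]
    rw [heq]
    refine (norm_sub_le _ _).trans ?_
    rw [norm_smul, Real.norm_eq_abs, abs_of_pos hκpos]
  have hlast : κ * ‖p k‖ ≤ 4 * Real.sqrt 2 * ε / (3 * R) := by
    have h1 : κ * ‖p k‖ ≤ κ * (2 * (Real.sqrt 2 * R)) := by
      apply mul_le_mul_of_nonneg_left _ hκpos.le
      linarith
    have h2 : κ * (2 * (Real.sqrt 2 * R)) = 4 * Real.sqrt 2 * ε / (3 * R) := by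
      rw [hκ]; field_simp; ring
    linarith
  have hE2 : 2 * Real.sqrt (L * Δ) * E ≤ 2 * Real.sqrt (L * (θ 0 - θ pstar + ε / 3)) * E := by
    gcongr
  linarith
end

section
/- Let ε > 0, R > 0, D_f = sup{ ‖x‖²/2 : x ∈ dom f }, ρ = ε/(3 D_f), and let p* be a minimizer of the dual objective θ(p) = f*(A*p) + g*(−p), so that v(D) = −θ(p*). For p ∈ ℝ^m, let x_{f,p} ∈ H be the unique maximizer of x ↦ ⟨A*p,x⟩ − f(x) − (ρ/2)‖x‖², let x_{g,p} ∈ ℝ^m be the unique minimizer of x ↦ ⟨p,x⟩ + g(x), and set θ_ρ(p) = f_ρ*(A*p) + g*(−p) where f_ρ*(A*p) = ⟨A*p, x_{f,p}⟩ − f(x_{f,p}) − (ρ/2)‖x_{f,p}‖². If p ∈ ℝ^m satisfies 0 ≤ θ(p) − θ(p*) ≤ ε, ‖A x_{f,p} − x_{g,p}‖ ≤ 2ε/R and ‖p‖ ≤ 2√2 R, then | f(x_{f,p}) + g(x_{g,p}) − v(D) | ≤ 2(2√2 + 1) ε. -/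
open scoped RealInnerProductSpace

/-- Let `ε > 0`, `R > 0`, `D_f = sup{‖x‖²/2 : x ∈ dom f}`, `ρ = ε/(3 D_f)`,
and let `pstar` be a minimizer of the dual objective `θ(p) = f*(A*p) + g*(−p)`, so that
`v(D) = −θ(pstar)`. For `p ∈ ℝ^m`, let `x_{f,p} ∈ H` be the unique maximizer of
`x ↦ ⟨A*p,x⟩ − f(x) − (ρ/2)‖x‖²`, let `x_{g,p} ∈ ℝ^m` be the unique minimizer of
`x ↦ ⟨p,x⟩ + g(x)`. If `p ∈ ℝ^m` satisfies `0 ≤ θ(p) − θ(pstar) ≤ ε`,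
`‖A x_{f,p} − x_{g,p}‖ ≤ 2ε/R` and `‖p‖ ≤ 2√2 R`, then
`| f(x_{f,p}) + g(x_{g,p}) − v(D) | ≤ 2(2√2 + 1) ε`. -/
theorem approximate_primal_solution_estimate
    {H : Type*} [NormedAddCommGroup H] [InnerProductSpace ℝ H] [CompleteSpace H]
    {m : ℕ} (μ : ℝ) (hμ : 0 < μ)
    (f : H → EReal) (g : EuclideanSpace ℝ (Fin m) → EReal)
    (hf_proper_top : ∃ x, f x ≠ ⊤) (hf_proper_bot : ∀ x, f x ≠ ⊥)
    (hf_convex : ∀ x y : H, ∀ a b : ℝ, 0 ≤ a → 0 ≤ b → a + b = 1 →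
      f (a • x + b • y) ≤ (a : EReal) * f x + (b : EReal) * f y)
    (hf_lsc : LowerSemicontinuous f)
    (hf_bdd : Bornology.IsBounded {x : H | f x < ⊤})
    (hg_proper_top : ∃ x, g x ≠ ⊤) (hg_proper_bot : ∀ x, g x ≠ ⊥)
    (hg_lsc : LowerSemicontinuous g)
    (hg_strconv : ∀ x y : EuclideanSpace ℝ (Fin m), ∀ a b : ℝ, 0 ≤ a → 0 ≤ b → a + b = 1 →
      g (a • x + b • y) - ((μ / 2 * ‖a • x + b • y‖ ^ 2 : ℝ) : EReal) ≤
        (a : EReal) * (g x - ((μ / 2 * ‖x‖ ^ 2 : ℝ) : EReal)) +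
        (b : EReal) * (g y - ((μ / 2 * ‖y‖ ^ 2 : ℝ) : EReal)))
    (A : H →L[ℝ] EuclideanSpace ℝ (Fin m))
    (ε R Df ρ : ℝ) (hε : 0 < ε) (hR : 0 < R)
    (hDf : Df = sSup ((fun x : H => ‖x‖ ^ 2 / 2) '' {x : H | f x < ⊤}))
    (hρ : ρ = ε / (3 * Df))
    (θ : EuclideanSpace ℝ (Fin m) → ℝ)
    (hθ : ∀ p : EuclideanSpace ℝ (Fin m),
      (θ p : EReal) =
        (⨆ x : H, ((⟪ContinuousLinearMap.adjoint A p, x⟫ : ℝ) : EReal) - f x) +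
        (⨆ x : EuclideanSpace ℝ (Fin m), ((⟪-p, x⟫ : ℝ) : EReal) - g x))
    (pstar : EuclideanSpace ℝ (Fin m))
    (hpstar : ∀ p : EuclideanSpace ℝ (Fin m), θ pstar ≤ θ p)
    (vD : ℝ) (hvD : vD = -θ pstar)
    (p : EuclideanSpace ℝ (Fin m)) (xfp : H) (xgp : EuclideanSpace ℝ (Fin m))
    (hxfp : ∀ x : H,
      ((⟪ContinuousLinearMap.adjoint A p, x⟫ : ℝ) : EReal) - f x -
          ((ρ / 2 * ‖x‖ ^ 2 : ℝ) : EReal) ≤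
        ((⟪ContinuousLinearMap.adjoint A p, xfp⟫ : ℝ) : EReal) - f xfp -
          ((ρ / 2 * ‖xfp‖ ^ 2 : ℝ) : EReal))
    (hxgp : ∀ x : EuclideanSpace ℝ (Fin m),
      ((⟪p, xgp⟫ : ℝ) : EReal) + g xgp ≤ ((⟪p, x⟫ : ℝ) : EReal) + g x)
    (h1 : 0 ≤ θ p - θ pstar) (h2 : θ p - θ pstar ≤ ε)
    (h3 : ‖A xfp - xgp‖ ≤ 2 * ε / R)
    (h4 : ‖p‖ ≤ 2 * Real.sqrt 2 * R) :
    ∃ vf vg : ℝ, (vf : EReal) = f xfp ∧ (vg : EReal) = g xgp ∧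
      |vf + vg - vD| ≤ 2 * (2 * Real.sqrt 2 + 1) * ε := by
  classical
  obtain ⟨x0, hx0⟩ := hf_proper_top
  obtain ⟨y0, hy0⟩ := hg_proper_top
  set q := ContinuousLinearMap.adjoint A p with hq
  have hfx0 : f x0 = ((f x0).toReal : EReal) := (EReal.coe_toReal hx0 (hf_proper_bot x0)).symm
  have hgy0 : g y0 = ((g y0).toReal : EReal) := (EReal.coe_toReal hy0 (hg_proper_bot y0)).symm
  -- finiteness of f xfp
  have hfT : f xfp ≠ ⊤ := by
    intro htop
    have h := hxfp x0
    rw [hfx0, htop] at h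
    simp only [sub_eq_add_neg, EReal.neg_top, EReal.add_bot, EReal.bot_add] at h
    rw [← EReal.coe_neg, ← EReal.coe_add, ← EReal.coe_neg, ← EReal.coe_add, le_bot_iff] at h
    exact EReal.coe_ne_bot _ h
  have hgT : g xgp ≠ ⊤ := by
    intro htop
    have h := hxgp y0
    rw [hgy0, htop, ← EReal.coe_add] at h
    have hteq : ((⟪p, xgp⟫ : ℝ) : EReal) + ⊤ = ⊤ := by
      rw [EReal.add_top_iff_ne_bot]; exact EReal.coe_ne_bot _
    rw [hteq, top_le_iff] at h
    exact EReal.coe_ne_top _ h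
  obtain ⟨vf, hvf⟩ : ∃ vf : ℝ, (vf : EReal) = f xfp :=
    ⟨(f xfp).toReal, EReal.coe_toReal hfT (hf_proper_bot xfp)⟩
  obtain ⟨vg, hvg⟩ : ∃ vg : ℝ, (vg : EReal) = g xgp :=
    ⟨(g xgp).toReal, EReal.coe_toReal hgT (hg_proper_bot xgp)⟩
  refine ⟨vf, vg, hvf, hvg, ?_⟩
  -- bounded domain facts
  have hDfx : ∀ x : H, f x ≠ ⊤ → ‖x‖ ^ 2 / 2 ≤ Df := by
    intro x hx
    obtain ⟨C, hC⟩ := Bornology.IsBounded.exists_norm_le hf_bdd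
    have hbdd : BddAbove ((fun x : H => ‖x‖ ^ 2 / 2) '' {x : H | f x < ⊤}) := by
      refine ⟨(max C 0) ^ 2 / 2, ?_⟩
      rintro r ⟨y, hy, rfl⟩
      have h1 : ‖y‖ ≤ max C 0 := (hC y hy).trans (le_max_left _ _)
      have := pow_le_pow_left₀ (norm_nonneg y) h1 2
      linarith
    rw [hDf]
    exact le_csSup hbdd ⟨x, lt_top_iff_ne_top.2 hx, rfl⟩
  have hDf0 : 0 ≤ Df := le_trans (by positivity) (hDfx x0 hx0)
  have hρ0 : 0 ≤ ρ := by rw [hρ]; positivity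
  have hρDf : ρ * Df ≤ ε / 3 := by
    rcases eq_or_lt_of_le hDf0 with h | h
    · rw [← h]; simp; positivity
    · have hne : Df ≠ 0 := ne_of_gt h
      have heq : ρ * Df = ε / 3 := by rw [hρ]; field_simp
      linarith
  -- the g-supremum
  obtain ⟨Sg, hSgdef⟩ : ∃ S : EReal,
      S = ⨆ x : EuclideanSpace ℝ (Fin m), ((⟪-p, x⟫ : ℝ) : EReal) - g x := ⟨_, rfl⟩
  obtain ⟨sg, hsg⟩ : ∃ s : ℝ, s = -⟪p, xgp⟫ - vg := ⟨_, rfl⟩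
  have hSg : Sg = (sg : EReal) := by
    rw [hSgdef]
    apply le_antisymm
    · refine iSup_le fun x => ?_
      rcases eq_or_ne (g x) ⊤ with ht | ht
      · rw [ht]
        simp [sub_eq_add_neg]
      · have hgx : g x = ((g x).toReal : EReal) := (EReal.coe_toReal ht (hg_proper_bot x)).symm
        have h := hxgp x
        rw [← hvg, hgx, ← EReal.coe_add, ← EReal.coe_add, EReal.coe_le_coe_iff] at h
        rw [hgx, ← EReal.coe_sub, EReal.coe_le_coe_iff, hsg, inner_neg_left]
        linarith
    · refine le_iSup_of_le xgp ?_
      rw [← hvg, ← EReal.coe_sub, EReal.coe_le_coe_iff, hsg, inner_neg_left]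
  -- the f-supremum
  obtain ⟨Sf, hSfdef⟩ : ∃ S : EReal, S = ⨆ x : H, ((⟪q, x⟫ : ℝ) : EReal) - f x := ⟨_, rfl⟩
  obtain ⟨M, hM⟩ : ∃ M : ℝ, M = ⟪q, xfp⟫ - vf - ρ / 2 * ‖xfp‖ ^ 2 := ⟨_, rfl⟩
  have hM_le : (M : EReal) ≤ Sf := by
    rw [hSfdef]
    refine le_iSup_of_le xfp ?_
    rw [← hvf, ← EReal.coe_sub, EReal.coe_le_coe_iff, hM]
    have h0 : 0 ≤ ρ / 2 * ‖xfp‖ ^ 2 := by positivity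
    linarith
  have hSf_le : Sf ≤ ((M + ρ * Df : ℝ) : EReal) := by
    rw [hSfdef]
    refine iSup_le fun x => ?_
    rcases eq_or_ne (f x) ⊤ with ht | ht
    · rw [ht]
      simp [sub_eq_add_neg]
    · have hfx : f x = ((f x).toReal : EReal) := (EReal.coe_toReal ht (hf_proper_bot x)).symm
      have h := hxfp x
      rw [← hvf, hfx, ← EReal.coe_sub, ← EReal.coe_sub, ← EReal.coe_sub, ← EReal.coe_sub,
        EReal.coe_le_coe_iff, ← hM] at h
      rw [hfx, ← EReal.coe_sub, EReal.coe_le_coe_iff]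
      have hx2 : ‖x‖ ^ 2 / 2 ≤ Df := hDfx x ht
      have hmul : ρ * (‖x‖ ^ 2 / 2) ≤ ρ * Df := mul_le_mul_of_nonneg_left hx2 hρ0
      linarith
  have hSfT : Sf ≠ ⊤ := fun h => by
    rw [h, top_le_iff] at hSf_le; exact EReal.coe_ne_top _ hSf_le
  have hSfB : Sf ≠ ⊥ := fun h => by
    rw [h, le_bot_iff] at hM_le; exact EReal.coe_ne_bot _ hM_le
  obtain ⟨sf, hSf⟩ : ∃ s : ℝ, Sf = (s : EReal) :=
    ⟨Sf.toReal, (EReal.coe_toReal hSfT hSfB).symm⟩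
  have hMsf : M ≤ sf := by rw [hSf] at hM_le; exact EReal.coe_le_coe_iff.1 hM_le
  have hsfM : sf ≤ M + ρ * Df := by rw [hSf] at hSf_le; exact EReal.coe_le_coe_iff.1 hSf_le
  -- θ p = sf + sg
  have hθp : θ p = sf + sg := by
    have h := hθ p
    rw [← hq, ← hSfdef, ← hSgdef, hSf, hSg, ← EReal.coe_add, EReal.coe_eq_coe_iff] at h
    exact h
  -- inner product bound
  obtain ⟨c, hc⟩ : ∃ c : ℝ, c = Real.sqrt 2 := ⟨_, rfl⟩
  have hc0 : (0:ℝ) ≤ c := hc ▸ Real.sqrt_nonneg 2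
  rw [← hc]
  obtain ⟨I, hI⟩ : ∃ I : ℝ, I = ⟪p, A xfp - xgp⟫ := ⟨_, rfl⟩
  have hIb : |I| ≤ 4 * c * ε := by
    have h5 : |I| ≤ ‖p‖ * ‖A xfp - xgp‖ := hI ▸ abs_real_inner_le_norm p _
    have h6 : ‖p‖ * ‖A xfp - xgp‖ ≤ (2 * c * R) * (2 * ε / R) :=
      mul_le_mul (hc ▸ h4) h3 (norm_nonneg _) (by positivity)
    have h7 : (2 * c * R) * (2 * ε / R) = 4 * c * ε := by field_simp; ring
    linarith
  have hIb1 : -(4 * c * ε) ≤ I := (abs_le.1 hIb).1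
  have hIb2 : I ≤ 4 * c * ε := (abs_le.1 hIb).2
  -- key identity
  have hinner : (⟪q, xfp⟫ : ℝ) = ⟪p, A xfp⟫ := ContinuousLinearMap.adjoint_inner_left A xfp p
  have hIsplit : I = ⟪p, A xfp⟫ - ⟪p, xgp⟫ := by rw [hI]; exact inner_sub_right p (A xfp) xgp
  have hkey : vf + vg - vD = I - ρ / 2 * ‖xfp‖ ^ 2 + (sf - M) + (θ pstar - θ p) := by
    rw [hIsplit, ← hinner, hvD, hθp]
    rw [hM, hsg]
    ring
  -- remaining small bounds
  have ht1 : 0 ≤ ρ / 2 * ‖xfp‖ ^ 2 := by positivity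
  have ht2 : ρ / 2 * ‖xfp‖ ^ 2 ≤ ε / 3 := by
    have hx2 := hDfx xfp hfT
    have hmul : ρ * (‖xfp‖ ^ 2 / 2) ≤ ρ * Df := mul_le_mul_of_nonneg_left hx2 hρ0
    linarith
  have hd1 : θ pstar - θ p ≤ 0 := by linarith
  have hd2 : -ε ≤ θ pstar - θ p := by linarith
  have hs1 : 0 ≤ sf - M := by linarith
  have hs2 : sf - M ≤ ε / 3 := by linarith
  rw [abs_le]
  constructor
  · rw [hkey]; linarith
  · rw [hkey]; linarith
end

section
/- Let v(P) = inf_{x ∈ H} { f(x) + g(Ax) } and assume v(P) ∈ ℝ. Suppose there are sequences (x_n)_{n ≥ 0} ⊆ dom f, (y_n)_{n ≥ 0} ⊆ dom g and a sequence (ε_n)_{n ≥ 0} of positive reals with ε_n → 0 such that ‖A x_n − y_n‖ ≤ ε_n and f(x_n) + g(y_n) ≤ v(P) + ε_n for all n. Then there exists x̄ ∈ H with A x̄ ∈ dom g and f(x̄) + g(A x̄) = v(P), i.e., the problem (P) has an optimal solution. -/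
open scoped RealInnerProductSpace


/-- For a real Hilbert space, the weak topology coincides with the weak-* topology on the dual
via the Riesz isometry. -/
noncomputable def hilbertWeakHomeo (H : Type*) [NormedAddCommGroup H] [InnerProductSpace ℝ H]
    [CompleteSpace H] : WeakSpace ℝ H ≃ₜ WeakDual ℝ H where
  toFun z := InnerProductSpace.toDual ℝ H ((toWeakSpace ℝ H).symm z)
  invFun φ := toWeakSpace ℝ H ((InnerProductSpace.toDual ℝ H).symm φ)
  left_inv z := by simp
  right_inv φ := (InnerProductSpace.toDual ℝ H).apply_symm_apply φ
  continuous_toFun := by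
    apply WeakDual.continuous_of_continuous_eval
    intro y
    have h : ∀ z : WeakSpace ℝ H,
        (InnerProductSpace.toDual ℝ H ((toWeakSpace ℝ H).symm z)) y
          = (InnerProductSpace.toDual ℝ H y) ((toWeakSpace ℝ H).symm z) := by
      intro z
      rw [InnerProductSpace.toDual_apply_apply, InnerProductSpace.toDual_apply_apply, real_inner_comm]
    exact (WeakBilin.eval_continuous _ (InnerProductSpace.toDual ℝ H y)).congr (fun z => (h z).symm)
  continuous_invFun := by
    apply WeakBilin.continuous_of_continuous_eval
    intro ℓ
    have h : ∀ φ : WeakDual ℝ H,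
        ℓ ((InnerProductSpace.toDual ℝ H).symm φ)
          = φ ((InnerProductSpace.toDual ℝ H).symm ℓ) := by
      intro φ
      conv_lhs => rw [← (InnerProductSpace.toDual ℝ H).apply_symm_apply ℓ]
      rw [InnerProductSpace.toDual_apply_apply, real_inner_comm, ← InnerProductSpace.toDual_apply_apply]
      exact DFunLike.congr_fun ((InnerProductSpace.toDual ℝ H).apply_symm_apply φ) _
    have h2 : (fun φ : WeakDual ℝ H =>
        (topDualPairing ℝ H).flip (toWeakSpace ℝ H ((InnerProductSpace.toDual ℝ H).symm φ)) ℓ)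
        = fun φ : WeakDual ℝ H => φ ((InnerProductSpace.toDual ℝ H).symm ℓ) := by
      funext φ; exact h φ
    rw [h2]
    exact WeakDual.eval_continuous _

/-- Closed balls in a real Hilbert space are weakly compact. -/
theorem hilbert_isCompact_weak_closedBall (H : Type*) [NormedAddCommGroup H]
    [InnerProductSpace ℝ H] [CompleteSpace H] (r : ℝ) :
    IsCompact (toWeakSpace ℝ H '' Metric.closedBall (0 : H) r) := by
  set e := hilbertWeakHomeo H
  have hK : IsCompact (WeakDual.toStrongDual ⁻¹' Metric.closedBall 0 r : Set (WeakDual ℝ H)) :=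
    WeakDual.isCompact_closedBall (𝕜 := ℝ) (E := H) 0 r
  have himg : toWeakSpace ℝ H '' Metric.closedBall (0 : H) r
      = e ⁻¹' (WeakDual.toStrongDual ⁻¹' Metric.closedBall 0 r) := by
    ext z
    constructor
    · rintro ⟨w, hw, rfl⟩
      simp only [Set.mem_preimage, hilbertWeakHomeo, Homeomorph.homeomorph_mk_coe, Equiv.coe_fn_mk,
        e]
      change InnerProductSpace.toDual ℝ H ((toWeakSpace ℝ H).symm (toWeakSpace ℝ H w))
        ∈ Metric.closedBall 0 r
      simp only [LinearEquiv.symm_apply_apply]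
      have : ‖InnerProductSpace.toDual ℝ H w‖ = ‖w‖ := (InnerProductSpace.toDual ℝ H).norm_map w
      simp only [Metric.mem_closedBall, dist_zero_right] at hw ⊢
      simpa [this] using hw
    · intro hz
      refine ⟨(toWeakSpace ℝ H).symm z, ?_, by simp⟩
      simp only [Set.mem_preimage, hilbertWeakHomeo, Homeomorph.homeomorph_mk_coe,
        Equiv.coe_fn_mk, e] at hz
      change InnerProductSpace.toDual ℝ H ((toWeakSpace ℝ H).symm z) ∈ Metric.closedBall 0 r at hz
      have : ‖InnerProductSpace.toDual ℝ H ((toWeakSpace ℝ H).symm z)‖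
          = ‖(toWeakSpace ℝ H).symm z‖ :=
        (InnerProductSpace.toDual ℝ H).norm_map _
      simp only [Metric.mem_closedBall, dist_zero_right] at hz ⊢
      simpa [this] using hz
  rw [himg, ← Homeomorph.image_symm]
  exact hK.image e.symm.continuous

/-- A norm-closed convex set is weakly closed. -/
theorem convex_isClosed_weak {H : Type*} [NormedAddCommGroup H] [NormedSpace ℝ H]
    {s : Set H} (hconv : Convex ℝ s) (hcl : IsClosed s) :
    IsClosed (toWeakSpace ℝ H '' s) := by
  rw [← closure_eq_iff_isClosed]
  rw [← hconv.toWeakSpace_closure ℝ, hcl.closure_eq]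


/-- Let `v(P) = inf_{x ∈ H} { f(x) + g(Ax) }` and assume `v(P) ∈ ℝ`. Suppose
there are sequences `(x_n) ⊆ dom f`, `(y_n) ⊆ dom g` and positive reals `ε_n → 0` such that
`‖A x_n − y_n‖ ≤ ε_n` and `f(x_n) + g(y_n) ≤ v(P) + ε_n` for all `n`. Then there exists
`x̄ ∈ H` with `A x̄ ∈ dom g` and `f(x̄) + g(A x̄) = v(P)`, i.e., (P) has an optimal solution. -/
theorem primal_problem_has_optimal_solution
    {H : Type*} [NormedAddCommGroup H] [InnerProductSpace ℝ H] [CompleteSpace H]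
    {m : ℕ}
    (f : H → EReal) (g : EuclideanSpace ℝ (Fin m) → EReal)
    (hf_proper_top : ∃ x, f x ≠ ⊤) (hf_proper_bot : ∀ x, f x ≠ ⊥)
    (hf_convex : ∀ x y : H, ∀ a b : ℝ, 0 ≤ a → 0 ≤ b → a + b = 1 →
      f (a • x + b • y) ≤ (a : EReal) * f x + (b : EReal) * f y)
    (hf_lsc : LowerSemicontinuous f)
    (hf_bdd : Bornology.IsBounded {x : H | f x < ⊤})
    (hg_proper_top : ∃ x, g x ≠ ⊤) (hg_proper_bot : ∀ x, g x ≠ ⊥)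
    (hg_convex : ∀ x y : EuclideanSpace ℝ (Fin m), ∀ a b : ℝ, 0 ≤ a → 0 ≤ b → a + b = 1 →
      g (a • x + b • y) ≤ (a : EReal) * g x + (b : EReal) * g y)
    (hg_lsc : LowerSemicontinuous g)
    (A : H →L[ℝ] EuclideanSpace ℝ (Fin m))
    (vP : ℝ) (hvP : (⨅ x : H, f x + g (A x)) = (vP : EReal))
    (x : ℕ → H) (y : ℕ → EuclideanSpace ℝ (Fin m)) (ε : ℕ → ℝ)
    (hx : ∀ n, f (x n) ≠ ⊤) (hy : ∀ n, g (y n) ≠ ⊤)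
    (hε : ∀ n, 0 < ε n)
    (hεlim : Filter.Tendsto ε Filter.atTop (nhds 0))
    (hfeas : ∀ n, ‖A (x n) - y n‖ ≤ ε n)
    (hval : ∀ n, f (x n) + g (y n) ≤ (vP : EReal) + ((ε n : ℝ) : EReal)) :
    ∃ xbar : H, g (A xbar) ≠ ⊤ ∧ f xbar + g (A xbar) = (vP : EReal) := by
  classical
  -- the objective is lower semicontinuous
  have hΦ_lsc : LowerSemicontinuous (fun z : H => f z + g (A z)) := by
    refine LowerSemicontinuous.add' hf_lsc (LowerSemicontinuous.comp hg_lsc A.continuous) ?_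
    intro z
    exact EReal.continuousAt_add (Or.inr (hg_proper_bot _)) (Or.inl (hf_proper_bot _))
  -- sublevel sets
  set S : ℕ → Set H :=
    fun n => {z : H | f z + g (A z) ≤ ((vP + 1 / ((n : ℝ) + 1) : ℝ) : EReal)} with hSdef
  have hreal : ∀ n, ∀ z ∈ S n, f z ≠ ⊤ ∧ g (A z) ≠ ⊤ := by
    intro n z hz
    have hz' : f z + g (A z) ≤ ((vP + 1 / ((n : ℝ) + 1) : ℝ) : EReal) := hz
    constructor
    · intro h
      rw [h, EReal.top_add_of_ne_bot (hg_proper_bot _)] at hz'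
      exact (EReal.coe_ne_top _) (top_le_iff.mp hz')
    · intro h
      rw [h, EReal.add_top_of_ne_bot (hf_proper_bot _)] at hz'
      exact (EReal.coe_ne_top _) (top_le_iff.mp hz')
  have hSne : ∀ n, (S n).Nonempty := by
    intro n
    have hlt : (⨅ z : H, f z + g (A z)) < ((vP + 1 / ((n : ℝ) + 1) : ℝ) : EReal) := by
      rw [hvP]
      have : vP < vP + 1 / ((n : ℝ) + 1) := lt_add_of_pos_right vP (by positivity)
      exact_mod_cast this
    obtain ⟨z, hz⟩ := iInf_lt_iff.mp hlt
    exact ⟨z, hz.le⟩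
  have hSclosed : ∀ n, IsClosed (S n) := by
    intro n
    exact hΦ_lsc.isClosed_preimage _
  have hSconv : ∀ n, Convex ℝ (S n) := by
    intro n x1 hx1 x2 hx2 a b ha hb hab
    obtain ⟨hf1, hg1⟩ := hreal n x1 hx1
    obtain ⟨hf2, hg2⟩ := hreal n x2 hx2
    have hfp1 : f x1 = (((f x1).toReal : ℝ) : EReal) :=
      (EReal.coe_toReal hf1 (hf_proper_bot _)).symm
    have hfp2 : f x2 = (((f x2).toReal : ℝ) : EReal) :=
      (EReal.coe_toReal hf2 (hf_proper_bot _)).symm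
    have hgq1 : g (A x1) = (((g (A x1)).toReal : ℝ) : EReal) :=
      (EReal.coe_toReal hg1 (hg_proper_bot _)).symm
    have hgq2 : g (A x2) = (((g (A x2)).toReal : ℝ) : EReal) :=
      (EReal.coe_toReal hg2 (hg_proper_bot _)).symm
    set p1 := (f x1).toReal
    set p2 := (f x2).toReal
    set q1 := (g (A x1)).toReal
    set q2 := (g (A x2)).toReal
    have hb1 : p1 + q1 ≤ vP + 1 / ((n : ℝ) + 1) := by
      have h' : f x1 + g (A x1) ≤ ((vP + 1 / ((n : ℝ) + 1) : ℝ) : EReal) := hx1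
      rw [hfp1, hgq1, ← EReal.coe_add] at h'
      exact_mod_cast h'
    have hb2 : p2 + q2 ≤ vP + 1 / ((n : ℝ) + 1) := by
      have h' : f x2 + g (A x2) ≤ ((vP + 1 / ((n : ℝ) + 1) : ℝ) : EReal) := hx2
      rw [hfp2, hgq2, ← EReal.coe_add] at h'
      exact_mod_cast h'
    have hA : A (a • x1 + b • x2) = a • A x1 + b • A x2 := by
      simp [map_add, map_smul]
    have h1 : f (a • x1 + b • x2) ≤ ((a * p1 + b * p2 : ℝ) : EReal) := by
      calc f (a • x1 + b • x2) ≤ (a : EReal) * f x1 + (b : EReal) * f x2 :=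
            hf_convex _ _ a b ha hb hab
        _ = ((a * p1 + b * p2 : ℝ) : EReal) := by rw [hfp1, hfp2]; norm_cast
    have h2 : g (A (a • x1 + b • x2)) ≤ ((a * q1 + b * q2 : ℝ) : EReal) := by
      rw [hA]
      calc g (a • A x1 + b • A x2) ≤ (a : EReal) * g (A x1) + (b : EReal) * g (A x2) :=
            hg_convex _ _ a b ha hb hab
        _ = ((a * q1 + b * q2 : ℝ) : EReal) := by rw [hgq1, hgq2]; norm_cast
    show f (a • x1 + b • x2) + g (A (a • x1 + b • x2))
        ≤ ((vP + 1 / ((n : ℝ) + 1) : ℝ) : EReal)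
    calc f (a • x1 + b • x2) + g (A (a • x1 + b • x2))
        ≤ ((a * p1 + b * p2 : ℝ) : EReal) + ((a * q1 + b * q2 : ℝ) : EReal) :=
          add_le_add h1 h2
      _ = (((a * p1 + b * p2) + (a * q1 + b * q2) : ℝ) : EReal) := by norm_cast
      _ ≤ ((vP + 1 / ((n : ℝ) + 1) : ℝ) : EReal) := by
          apply EReal.coe_le_coe_iff.mpr
          have e1 : a * (p1 + q1) ≤ a * (vP + 1 / ((n : ℝ) + 1)) :=
            mul_le_mul_of_nonneg_left hb1 ha
          have e2 : b * (p2 + q2) ≤ b * (vP + 1 / ((n : ℝ) + 1)) :=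
            mul_le_mul_of_nonneg_left hb2 hb
          have e3 : a * (vP + 1 / ((n : ℝ) + 1)) + b * (vP + 1 / ((n : ℝ) + 1))
              = vP + 1 / ((n : ℝ) + 1) := by rw [← add_mul, hab, one_mul]
          linarith
  -- move to the weak topology
  set T : ℕ → Set (WeakSpace ℝ H) := fun n => toWeakSpace ℝ H '' S n with hTdef
  have hTcl : ∀ n, IsClosed (T n) := fun n => convex_isClosed_weak (hSconv n) (hSclosed n)
  have hTne : ∀ n, (T n).Nonempty := fun n => (hSne n).image _
  have hTsub : ∀ n, T (n + 1) ⊆ T n := by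
    intro n
    apply Set.image_mono
    intro z hz
    have hz' : f z + g (A z) ≤ ((vP + 1 / (((n : ℝ) + 1) + 1) : ℝ) : EReal) := by
      have h' : f z + g (A z) ≤ ((vP + 1 / (((n + 1 : ℕ) : ℝ) + 1) : ℝ) : EReal) := hz
      have h0 : ((n + 1 : ℕ) : ℝ) + 1 = ((n : ℝ) + 1) + 1 := by push_cast; ring
      rwa [h0] at h'
    refine le_trans hz' ?_
    apply EReal.coe_le_coe_iff.mpr
    have h1 : (0 : ℝ) < (n : ℝ) + 1 := by positivity
    have h2 : (n : ℝ) + 1 ≤ ((n : ℝ) + 1) + 1 := by linarith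
    exact add_le_add (le_refl vP) (one_div_le_one_div_of_le h1 h2)
  obtain ⟨R, hR⟩ := hf_bdd.subset_closedBall 0
  have hT0sub : T 0 ⊆ toWeakSpace ℝ H '' Metric.closedBall (0 : H) R := by
    apply Set.image_mono
    intro z hz
    exact hR (lt_top_iff_ne_top.mpr (hreal 0 z hz).1)
  have hT0 : IsCompact (T 0) :=
    (hilbert_isCompact_weak_closedBall H R).of_isClosed_subset (hTcl 0) hT0sub
  obtain ⟨w, hw⟩ :=
    IsCompact.nonempty_iInter_of_sequence_nonempty_isCompact_isClosed T hTsub hTne hT0 hTcl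
  set xbar := (toWeakSpace ℝ H).symm w with hxbar
  have hmem : ∀ n, xbar ∈ S n := by
    intro n
    obtain ⟨z, hz, hzw⟩ := Set.mem_iInter.mp hw n
    have : xbar = z := by rw [hxbar, ← hzw, LinearEquiv.symm_apply_apply]
    rwa [this]
  obtain ⟨hfT, hgT⟩ := hreal 0 xbar (hmem 0)
  refine ⟨xbar, hgT, ?_⟩
  have hfp : f xbar = (((f xbar).toReal : ℝ) : EReal) :=
    (EReal.coe_toReal hfT (hf_proper_bot _)).symm
  have hgq : g (A xbar) = (((g (A xbar)).toReal : ℝ) : EReal) :=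
    (EReal.coe_toReal hgT (hg_proper_bot _)).symm
  set p := (f xbar).toReal
  set q := (g (A xbar)).toReal
  have hsum : f xbar + g (A xbar) = ((p + q : ℝ) : EReal) := by
    rw [hfp, hgq]; norm_cast
  have hub : ∀ n : ℕ, p + q ≤ vP + 1 / ((n : ℝ) + 1) := by
    intro n
    have h' : f xbar + g (A xbar) ≤ ((vP + 1 / ((n : ℝ) + 1) : ℝ) : EReal) := hmem n
    rw [hsum] at h'
    exact_mod_cast h'
  have hle : p + q ≤ vP := by
    have hlim : Filter.Tendsto (fun n : ℕ => vP + 1 / ((n : ℝ) + 1)) Filter.atTop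
        (nhds (vP + 0)) :=
      tendsto_const_nhds.add tendsto_one_div_add_atTop_nhds_zero_nat
    have := ge_of_tendsto' hlim hub
    simpa using this
  have hge : (vP : EReal) ≤ f xbar + g (A xbar) := hvP ▸ iInf_le _ xbar
  rw [hsum] at hge ⊢
  have hge' : vP ≤ p + q := by exact_mod_cast hge
  norm_cast
  linarith
end
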